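/- arXiv:1909.05605 — 6 statements merged into one kernel-verified Lean document; each statement's English description precedes it below -/
import Mathlib

section
/- Let m ≥ 2 be an integer with m ≡ 2 (mod 6), let f(x) = x^m on ℤ_3, and let t = ν_3(m + 1). For each integer l ≥ 0 and each a ∈ {0, 1, …, 3^(t−1) − 1}, let x₀ = 1 + 3^(l+1) + 3^(l+2)·a (a 3-adic unit, with inverse x₀⁻¹ in ℤ_3) and set M_{l,a} = (x₀ + 3^(t+l+1)ℤ_3) ∪ (x₀⁻¹ + 3^(t+l+1)ℤ_3). Then the sets M_{l,a} are pairwise disjoint clopen subsets of ℤ_3, each M_{l,a} is a minimal component of f (f(M_{l,a}) ⊆ M_{l,a} and every forward orbit of f in M_{l,a} is dense in M_{l,a}), the union of all the M_{l,a} together with {1} equals the ball 1 + 3ℤ_3, and moreover f maps the ball 2 + 3ℤ_3 into 1 + 3ℤ_3. -/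
open Filter Topology

namespace MonoZ3
open PadicInt
local notation "R" => ℤ_[3]


lemma three_eq : (3 : R) = ((3:ℕ) : R) := by norm_cast

lemma dvd_iff_norm (z : R) (n : ℕ) : (3:R)^n ∣ z ↔ ‖z‖ ≤ (3:ℝ)^(-(n:ℤ)) := by
  have := norm_le_pow_iff_mem_span_pow z n
  rw [Ideal.mem_span_singleton] at this
  simpa using this.symm

lemma pw_pos (n : ℤ) : (0:ℝ) < (3:ℝ)^n := zpow_pos (by norm_num) n

lemma pw_le_pw {a b : ℤ} (h : a ≤ b) : (3:ℝ)^a ≤ (3:ℝ)^b :=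
  zpow_le_zpow_right₀ (by norm_num) h

lemma pw_lt_pw {a b : ℤ} (h : a < b) : (3:ℝ)^a < (3:ℝ)^b :=
  zpow_lt_zpow_right₀ (by norm_num) h

lemma pw_inj {a b : ℤ} (h : (3:ℝ)^a = (3:ℝ)^b) : a = b :=
  zpow_right_injective₀ (by norm_num) (by norm_num) h

lemma unit_of_norm {x : R} (h : ‖x - 1‖ < 1) : IsUnit x := by
  rw [PadicInt.isUnit_iff]
  have h1 : x = 1 + (x - 1) := by ring
  have h2 : ‖x‖ = ‖(1:R) + (x-1)‖ := by rw [← h1]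
  rw [h2, norm_add_eq_max_of_ne (by simp; intro hc; rw [hc] at h; norm_num at h)]
  simp [h.le, max_eq_left]

lemma norm_unit {x : R} (h : IsUnit x) : ‖x‖ = 1 := PadicInt.isUnit_iff.mp h

lemma geom_bound (u : R) (k : ℕ) : ‖u^k - 1‖ ≤ ‖u - 1‖ := by
  induction k with
  | zero => simp
  | succ k ih =>
    have h1 : u^(k+1) - 1 = u^k * (u - 1) + (u^k - 1) := by ring
    rw [h1]
    refine le_trans (PadicInt.nonarchimedean _ _) (max_le ?_ ih)
    rw [norm_mul]
    calc ‖u^k‖ * ‖u-1‖ ≤ 1 * ‖u-1‖ :=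
          mul_le_mul_of_nonneg_right (PadicInt.norm_le_one _) (norm_nonneg _)
      _ = ‖u-1‖ := one_mul _

lemma lte_pow3 {u : R} (h : ‖u - 1‖ ≤ (3:ℝ)^(-1:ℤ)) :
    ‖u^3 - 1‖ = (3:ℝ)^(-1:ℤ) * ‖u - 1‖ := by
  have hu : IsUnit u := unit_of_norm (lt_of_le_of_lt h (by norm_num))
  have key : u^3 - 1 = (u - 1) * ((u-1)^2 + 3*u) := by ring
  have h3u : ‖(3:R)*u‖ = (3:ℝ)^(-1:ℤ) := by
    rw [norm_mul, norm_unit hu, mul_one, three_eq, norm_p]; norm_num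
  have hsq : ‖(u-1)^2‖ < (3:ℝ)^(-1:ℤ) := by
    rw [norm_pow]
    calc ‖u-1‖^2 ≤ ((3:ℝ)^(-1:ℤ))^2 := pow_le_pow_left₀ (norm_nonneg _) h 2
      _ < (3:ℝ)^(-1:ℤ) := by norm_num
  have hmain : ‖(u-1)^2 + 3*u‖ = (3:ℝ)^(-1:ℤ) := by
    rw [norm_add_eq_max_of_ne (by rw [h3u]; exact hsq.ne), h3u, max_eq_right hsq.le]
  rw [key, norm_mul, hmain, mul_comm]

lemma lte_pow3r {u : R} (h : ‖u-1‖ ≤ (3:ℝ)^(-1:ℤ)) (r : ℕ) :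
    ‖u^(3^r) - 1‖ = (3:ℝ)^(-(r:ℤ)) * ‖u-1‖ := by
  induction r with
  | zero => simp
  | succ r ih =>
    have h2 : ‖u^(3^r) - 1‖ ≤ (3:ℝ)^(-1:ℤ) := by
      rw [ih]
      calc (3:ℝ)^(-(r:ℤ)) * ‖u-1‖ ≤ (3:ℝ)^(-(r:ℤ)) * (3:ℝ)^(-1:ℤ) :=
            mul_le_mul_of_nonneg_left h (pw_pos _).le
        _ ≤ 1 * (3:ℝ)^(-1:ℤ) := by
            apply mul_le_mul_of_nonneg_right _ (pw_pos _).le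
            calc (3:ℝ)^(-(r:ℤ)) ≤ (3:ℝ)^(0:ℤ) := pw_le_pw (by omega)
              _ = 1 := by norm_num
        _ = (3:ℝ)^(-1:ℤ) := one_mul _
    have h3 : u^(3^(r+1)) = (u^(3^r))^3 := by rw [pow_succ, pow_mul]
    rw [h3, lte_pow3 h2, ih, ← mul_assoc, ← zpow_add₀ (by norm_num : (3:ℝ) ≠ 0)]
    congr 1
    push_cast
    ring

lemma lte_coprime {u : R} (h : ‖u-1‖ ≤ (3:ℝ)^(-1:ℤ)) {k : ℕ} (hk : ¬ (3 ∣ k)) :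
    ‖u^k - 1‖ = ‖u-1‖ := by
  have key : u^k - 1 = (∑ i ∈ Finset.range k, u^i) * (u - 1) := (geom_sum_mul u k).symm
  have hsub : (∑ i ∈ Finset.range k, u^i) - (k:R) = ∑ i ∈ Finset.range k, (u^i - 1) := by
    rw [Finset.sum_sub_distrib]
    simp
  have hsum : ‖(∑ i ∈ Finset.range k, u^i) - (k:R)‖ ≤ (3:ℝ)^(-1:ℤ) := by
    rw [hsub]
    exact IsUltrametricDist.norm_sum_le_of_forall_le_of_nonneg (pw_pos _).le
      (fun i _ => le_trans (geom_bound u i) h)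
  have hknorm : ‖(k:R)‖ = 1 := by
    have : ¬ ((3:ℤ) ∣ (k:ℤ)) := by exact_mod_cast hk
    have h1 : ¬ (‖((k:ℤ):R)‖ < 1) := fun hc => this ((norm_int_lt_one_iff_dvd _).mp hc)
    push_neg at h1
    exact le_antisymm (PadicInt.norm_le_one _) (by exact_mod_cast h1)
  have hgeom : ‖(∑ i ∈ Finset.range k, u^i)‖ = 1 := by
    have h1 : (∑ i ∈ Finset.range k, u^i) = (k:R) + ((∑ i ∈ Finset.range k, u^i) - (k:R)) := by
      ring
    rw [h1, norm_add_eq_max_of_ne, hknorm, max_eq_left]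
    · exact le_trans hsum (by norm_num)
    · rw [hknorm]
      intro hc
      rw [← hc] at hsum
      norm_num at hsum
  rw [key, norm_mul, hgeom, one_mul]

lemma lte_full {u : R} (h : ‖u-1‖ ≤ (3:ℝ)^(-1:ℤ)) {k : ℕ} (hk : 0 < k) :
    ‖u^k - 1‖ = (3:ℝ)^(-(padicValNat 3 k : ℤ)) * ‖u-1‖ := by
  set v := padicValNat 3 k with hv
  have hfact : k = 3^v * (k / 3^v) := (Nat.ordProj_mul_ordCompl_eq_self k 3).symm
  have hcop : ¬ (3 ∣ (k / 3^v)) := Nat.not_dvd_ordCompl (by norm_num) hk.ne'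
  have h2 : ‖u^(3^v) - 1‖ ≤ (3:ℝ)^(-1:ℤ) := le_trans (by
    rw [lte_pow3r h v]
    calc (3:ℝ)^(-(v:ℤ)) * ‖u-1‖ ≤ 1 * ‖u-1‖ := by
          apply mul_le_mul_of_nonneg_right _ (norm_nonneg _)
          calc (3:ℝ)^(-(v:ℤ)) ≤ (3:ℝ)^(0:ℤ) := pw_le_pw (by omega)
            _ = 1 := by norm_num
      _ = ‖u-1‖ := one_mul _) h
  calc ‖u^k - 1‖ = ‖(u^(3^v))^(k / 3^v) - 1‖ := by rw [← pow_mul, ← hfact]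
    _ = ‖u^(3^v) - 1‖ := lte_coprime h2 hcop
    _ = (3:ℝ)^(-(v:ℤ)) * ‖u-1‖ := lte_pow3r h v


lemma pw_le_iff {a b : ℤ} : (3:ℝ)^a ≤ (3:ℝ)^b ↔ a ≤ b :=
  zpow_le_zpow_iff_right₀ (by norm_num)

lemma eq_toZModPow_iff_dvd (a b : R) (N : ℕ) :
    toZModPow N a = toZModPow N b ↔ (3:R)^N ∣ a - b := by
  rw [← sub_eq_zero, ← map_sub, ← RingHom.mem_ker, ker_toZModPow,
    Ideal.mem_span_singleton, ← three_eq]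

lemma zmod_red {N e : ℕ} (he : e ≤ N) (c : ZMod (3^N)) :
    (3:ZMod (3^N))^e * c = 3^e * ((c.val % 3^(N-e) : ℕ) : ZMod (3^N)) := by
  haveI : NeZero (3^N : ℕ) := ⟨pow_ne_zero _ (by norm_num)⟩
  have h3N : (3:ZMod (3^N))^N = 0 := by
    have : ((3^N : ℕ) : ZMod (3^N)) = 0 := ZMod.natCast_self _
    push_cast at this
    exact this
  have hval : c = ((c.val : ℕ) : ZMod (3^N)) := by rw [ZMod.natCast_val, ZMod.cast_id]
  have key : ∀ v : ℕ, (3:ZMod (3^N))^e * ((v:ℕ) : ZMod (3^N))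
      = 3^e * ((v % 3^(N-e) : ℕ) : ZMod (3^N)) := by
    intro v
    have hqr : v = 3^(N-e) * (v / 3^(N-e)) + v % 3^(N-e) := (Nat.div_add_mod _ _).symm
    calc (3:ZMod (3^N))^e * (v : ZMod (3^N))
        = 3^e * ((3^(N-e) * (v / 3^(N-e)) + v % 3^(N-e) : ℕ) : ZMod (3^N)) := by rw [← hqr]
      _ = (3:ZMod (3^N))^(e + (N-e)) * (v / 3^(N-e) : ℕ) + 3^e * (v % 3^(N-e) : ℕ) := by
          push_cast; rw [pow_add]; ring
      _ = 3^e * ((v % 3^(N-e) : ℕ) : ZMod (3^N)) := by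
          rw [show e + (N-e) = N by omega, h3N]; ring
  conv_lhs => rw [hval]
  rw [key]

lemma nat_sub_dvd {s1 s2 M : ℕ} (h : (M:ℤ) ∣ (s1:ℤ) - s2) (h1 : s1 < M) (h2 : s2 < M) :
    s1 = s2 := by
  have := Int.eq_zero_of_abs_lt_dvd h (abs_lt.mpr ⟨by omega, by omega⟩)
  omega

lemma surj (u : R) (e N : ℕ) (he : 1 ≤ e) (heN : e ≤ N)
    (hu : ‖u - 1‖ = (3:ℝ)^(-(e:ℤ))) (w : R) :
    ∃ k : ℕ, (3:R)^N ∣ u^k - (1 + 3^e * w) := by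
  haveI : NeZero (3^N : ℕ) := ⟨pow_ne_zero _ (by norm_num)⟩
  have hu1 : ‖u - 1‖ ≤ (3:ℝ)^(-1:ℤ) := by
    rw [hu]; exact pw_le_pw (by omega)
  have hunit : IsUnit u := unit_of_norm (lt_of_le_of_lt hu1 (by norm_num))
  set F : ℕ → ZMod (3^N) := fun k => toZModPow N (u^k) with hF
  set G : ℕ → ZMod (3^N) := fun s => 1 + 3^e * ((s:ℕ) : ZMod (3^N)) with hG
  set S := Finset.range (3^(N-e)) with hS
  -- G expressed via nat cast
  have hGnat : ∀ s : ℕ, G s = ((1 + 3^e * s : ℕ) : ZMod (3^N)) := by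
    intro s; rw [hG]; push_cast; ring
  have hGinj : Set.InjOn G S := by
    intro s1 h1 s2 h2 heq
    rw [hGnat, hGnat, ZMod.natCast_eq_natCast_iff] at heq
    have h0 := heq.dvd
    have hcast : ((1+3^e*s2 : ℕ) : ℤ) - ((1+3^e*s1 : ℕ) : ℤ) = (3:ℤ)^e * ((s2:ℤ) - s1) := by
      push_cast; ring
    have hdvd : ((3:ℤ)^N) ∣ (3:ℤ)^e * ((s2:ℤ) - s1) := by
      rw [← hcast]
      exact_mod_cast h0
    rw [show N = e + (N - e) by omega, pow_add] at hdvd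
    have hcancel : ((3:ℤ)^(N-e)) ∣ (s2:ℤ) - s1 :=
      (mul_dvd_mul_iff_left (a := (3:ℤ)^e) (by positivity)).mp hdvd
    simp only [hS, Finset.coe_range, Set.mem_Iio] at h1 h2
    exact (nat_sub_dvd (by exact_mod_cast hcancel) h2 h1).symm
  have hFinj' : ∀ k1 k2 : ℕ, k1 < k2 → k2 < 3^(N-e) → F k1 ≠ F k2 := by
    intro k1 k2 hlt h2 heq
    have hdvd : (3:R)^N ∣ u^k2 - u^k1 := (eq_toZModPow_iff_dvd _ _ _).mp heq.symm
    have hfact : u^k2 - u^k1 = u^k1 * (u^(k2-k1) - 1) := by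
      rw [mul_sub, mul_one, ← pow_add]
      congr 2
      omega
    set d := k2 - k1 with hd
    have hdpos : 0 < d := by omega
    have hnorm : ‖u^k2 - u^k1‖ = (3:ℝ)^(-(padicValNat 3 d : ℤ) + -(e:ℤ)) := by
      rw [hfact, norm_mul, norm_unit (hunit.pow _), one_mul, lte_full hu1 hdpos, hu,
        ← zpow_add₀ (by norm_num : (3:ℝ) ≠ 0)]
    have hvd : padicValNat 3 d < N - e := by
      have h3d : 3^(padicValNat 3 d) ≤ d := Nat.le_of_dvd hdpos pow_padicValNat_dvd
      have : d < 3^(N-e) := by omega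
      by_contra hc
      push_neg at hc
      have := le_trans (Nat.pow_le_pow_right (by norm_num) hc) h3d
      omega
    have hle := (dvd_iff_norm _ _).mp hdvd
    rw [hnorm, pw_le_iff] at hle
    omega
  have hFinj : Set.InjOn F S := by
    intro k1 h1 k2 h2 heq
    simp only [hS, Finset.coe_range, Set.mem_Iio] at h1 h2
    rcases lt_trichotomy k1 k2 with h | h | h
    · exact absurd heq (hFinj' _ _ h h2)
    · exact h
    · exact absurd heq.symm (hFinj' _ _ h h1)
  have hsub : S.image F ⊆ S.image G := by
    intro b hb
    obtain ⟨k, hk, rfl⟩ := Finset.mem_image.mp hb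
    have hdvd : (3:R)^e ∣ u^k - 1 := (dvd_iff_norm _ _).mpr (by rw [← hu]; exact geom_bound u k)
    obtain ⟨y, hy⟩ := hdvd
    have hy' : u^k = 1 + 3^e * y := by rw [← hy]; ring
    have hFk : F k = 1 + 3^e * toZModPow N y := by
      rw [hF]
      simp only [hy', map_add, map_mul, map_pow, map_one, map_ofNat]
    rw [hFk, zmod_red heN]
    exact Finset.mem_image.mpr ⟨_, Finset.mem_range.mpr (Nat.mod_lt _ (by positivity)), rfl⟩
  have hcards : S.image G ⊆ S.image F := by
    apply Finset.subset_of_eq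
    symm
    apply Finset.eq_of_subset_of_card_le hsub
    rw [Finset.card_image_of_injOn hGinj, Finset.card_image_of_injOn hFinj]
  have htarget : toZModPow N (1 + 3^e * w) ∈ S.image G := by
    have h1 : toZModPow N (1 + 3^e * w) = 1 + 3^e * toZModPow N w := by
      simp only [map_add, map_mul, map_pow, map_one, map_ofNat]
    rw [h1, zmod_red heN]
    exact Finset.mem_image.mpr ⟨_, Finset.mem_range.mpr (Nat.mod_lt _ (by positivity)), rfl⟩
  obtain ⟨k, _, hk⟩ := Finset.mem_image.mp (hcards htarget)
  exact ⟨k, (eq_toZModPow_iff_dvd _ _ _).mp hk⟩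


lemma norm_eq_of {z : R} {n : ℕ} (h1 : (3:R)^n ∣ z) (h2 : ¬ (3:R)^(n+1) ∣ z) :
    ‖z‖ = (3:ℝ)^(-(n:ℤ)) := by
  rcases eq_or_lt_of_le ((dvd_iff_norm _ _).mp h1) with h | h
  · exact h
  exfalso
  apply h2
  rw [dvd_iff_norm]
  have := (PadicInt.norm_lt_pow_iff_norm_le_pow_sub_one z (-(n:ℤ))).mp (by exact_mod_cast h)
  convert this using 2 <;> push_cast <;> ring

lemma norm_inverse {x : R} (hx : IsUnit x) : ‖Ring.inverse x‖ = 1 := by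
  have h := Ring.mul_inverse_cancel x hx
  have := congrArg (‖·‖) h
  simp only [norm_mul] at this
  simp only [norm_one] at this
  rw [norm_unit hx, one_mul] at this
  exact this

lemma inverse_sub_inverse {x y : R} (hx : IsUnit x) (hy : IsUnit y) :
    Ring.inverse x - Ring.inverse y = Ring.inverse x * Ring.inverse y * (y - x) := by
  have h1 : Ring.inverse x * Ring.inverse y * y = Ring.inverse x := by
    rw [mul_assoc, Ring.inverse_mul_cancel y hy, mul_one]
  have h2 : Ring.inverse x * Ring.inverse y * x = Ring.inverse y := by
    rw [mul_comm (Ring.inverse x), mul_assoc, Ring.inverse_mul_cancel x hx, mul_one]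
  rw [mul_sub, h1, h2]

lemma norm_inverse_sub {x y : R} (hx : IsUnit x) (hy : IsUnit y) :
    ‖Ring.inverse x - Ring.inverse y‖ = ‖x - y‖ := by
  rw [inverse_sub_inverse hx hy, norm_mul, norm_mul,
    norm_inverse hx, norm_inverse hy, one_mul, one_mul, norm_sub_rev]

lemma inverse_inverse {x : R} (hx : IsUnit x) : Ring.inverse (Ring.inverse x) = x := by
  obtain ⟨v, rfl⟩ := hx
  rw [Ring.inverse_unit v, Ring.inverse_unit v⁻¹, inv_inv]

lemma pow3_mul_bound {u : R} (h : ‖u-1‖ ≤ (3:ℝ)^(-1:ℤ)) (r d : ℕ) :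
    ‖u^(3^r * d) - 1‖ ≤ (3:ℝ)^(-(r:ℤ)) := by
  rw [pow_mul]
  refine le_trans (geom_bound _ _) ?_
  rw [lte_pow3r h r]
  calc (3:ℝ)^(-(r:ℤ)) * ‖u-1‖ ≤ (3:ℝ)^(-(r:ℤ)) * 1 :=
        mul_le_mul_of_nonneg_left (le_trans h (by norm_num)) (pw_pos _).le
    _ = _ := mul_one _

lemma exp_congr {x : R} (hx : ‖x-1‖ ≤ (3:ℝ)^(-1:ℤ)) {A B N : ℕ}
    (h : ((3:ℤ)^N) ∣ (A:ℤ) - B) : (3:R)^N ∣ x^A - x^B := by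
  have main : ∀ A B : ℕ, B ≤ A → ((3:ℤ)^N) ∣ (A:ℤ) - B → (3:R)^N ∣ x^A - x^B := by
    intro A B hBA hdvd
    have hdvd' : 3^N ∣ (A - B : ℕ) := by
      have : ((A - B : ℕ) : ℤ) = (A:ℤ) - B := by omega
      exact_mod_cast (this ▸ hdvd : ((3:ℤ)^N) ∣ ((A - B : ℕ) : ℤ))
    obtain ⟨d, hd⟩ := hdvd'
    have hA : A = B + 3^N * d := by omega
    have hfact : x^A - x^B = x^B * (x^(3^N * d) - 1) := by
      rw [hA, pow_add]
      ring
    rw [dvd_iff_norm, hfact, norm_mul]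
    calc ‖x^B‖ * ‖x^(3^N*d) - 1‖ ≤ 1 * (3:ℝ)^(-(N:ℤ)) := by
          apply mul_le_mul (PadicInt.norm_le_one _) (pow3_mul_bound hx N d)
            (norm_nonneg _) (by norm_num)
      _ = _ := one_mul _
  rcases le_total B A with hBA | hAB
  · exact main A B hBA h
  · have hswap : ((3:ℤ)^N) ∣ (B:ℤ) - A := by
      rw [show (B:ℤ) - A = -((A:ℤ) - B) by ring]
      exact dvd_neg.mpr h
    have := main B A hAB hswap
    rw [show x^A - x^B = -(x^B - x^A) by ring]
    exact dvd_neg.mpr this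

lemma den (m t l N : ℕ) (ht1 : 1 ≤ t) (hmsq : ‖((m:R))^2 - 1‖ = (3:ℝ)^(-(t:ℤ)))
    (x z : R) (hx : ‖x - 1‖ = (3:ℝ)^(-(l+1:ℤ)))
    (hz : (3:R)^(t+l+1) ∣ z - x) (hN : t+l+1 ≤ N) :
    ∃ n : ℕ, (3:R)^N ∣ x^(m^n) - z := by
  set P := t+l+1 with hP
  have hx1 : ‖x - 1‖ ≤ (3:ℝ)^(-1:ℤ) := by rw [hx]; exact pw_le_pw (by omega)
  have hxu : IsUnit x := unit_of_norm (lt_of_le_of_lt hx1 (by norm_num))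
  obtain ⟨d, hd⟩ := hz
  set w : R := Ring.inverse x * d with hw
  have hzw : z = x * (1 + 3^P * w) := by
    have h1 : x * (1 + 3^P * w) = x + 3^P * (x * Ring.inverse x * d) := by rw [hw]; ring
    rw [h1, Ring.mul_inverse_cancel x hxu, one_mul, ← hd]
    ring
  have hu : ‖x^(3^t) - 1‖ = (3:ℝ)^(-(P:ℤ)) := by
    rw [lte_pow3r hx1 t, hx, ← zpow_add₀ (by norm_num : (3:ℝ) ≠ 0)]
    congr 1
    push_cast [hP]
    ring
  obtain ⟨j, hj⟩ := surj (x^(3^t)) P N (by omega) hN hu w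
  obtain ⟨k, hk⟩ := surj ((m:R)^2) t N ht1 (by omega) hmsq (j:R)
  -- convert hk to an integer divisibility
  have hkz : ((3:ℤ)^N) ∣ ((m^(2*k) : ℕ) : ℤ) - ((1 + 3^t*j : ℕ) : ℤ) := by
    have h1 : ((m:R)^2)^k - (1 + 3^t*(j:R)) = (((m^(2*k) : ℕ) : ℤ) - ((1 + 3^t*j : ℕ) : ℤ) : ℤ) := by
      push_cast
      rw [← pow_mul]
    rw [h1] at hk
    have h2 := (PadicInt.pow_p_dvd_int_iff (p := 3) N _).mp (by rw [three_eq] at hk; exact_mod_cast hk)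
    exact_mod_cast h2
  have hcong : (3:R)^N ∣ x^(m^(2*k)) - x^(1 + 3^t*j) := exp_congr hx1 hkz
  refine ⟨2*k, ?_⟩
  have hsplit : x^(m^(2*k)) - z = (x^(m^(2*k)) - x^(1 + 3^t*j)) + x * (x^(3^t*j) - (1 + 3^P * w)) := by
    rw [hzw, pow_add, pow_mul, pow_one]
    ring
  rw [hsplit]
  exact dvd_add hcong (Dvd.dvd.mul_left (by rw [← pow_mul] at hj; exact hj) x)

lemma norm_sub_one_eq {x c : ℤ_[3]} {v : ℝ} (h1 : ‖c - 1‖ = v) (h2 : ‖x - c‖ < v) :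
    ‖x - 1‖ = v := by
  have h3 : x - 1 = (x - c) + (c - 1) := by ring
  rw [h3, norm_add_eq_max_of_ne (by rw [h1]; exact h2.ne), h1, max_eq_right (h1 ▸ h2.le)]

lemma tri {a b c : ℤ_[3]} {r : ℝ} (h1 : ‖a - b‖ ≤ r) (h2 : ‖b - c‖ ≤ r) : ‖a - c‖ ≤ r := by
  have h3 : a - c = (a - b) + (b - c) := by ring
  rw [h3]
  exact le_trans (PadicInt.nonarchimedean _ _) (max_le h1 h2)

lemma norm_three_pow (n : ℕ) : ‖(3:R)^n‖ = (3:ℝ)^(-(n:ℤ)) := by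
  rw [three_eq, norm_pow, norm_p, inv_pow, ← zpow_natCast, ← zpow_neg]
  norm_num

lemma norm_nat_unit {k : ℕ} (h : ¬ (3 ∣ k)) : ‖(k:R)‖ = 1 := by
  have h1 : ¬ ((3:ℤ) ∣ (k:ℤ)) := by exact_mod_cast h
  have h2 : ¬ (‖((k:ℤ):R)‖ < 1) := fun hc => h1 ((PadicInt.norm_int_lt_one_iff_dvd _).mp hc)
  push_neg at h2
  exact le_antisymm (PadicInt.norm_le_one _) (by exact_mod_cast h2)

lemma norm_one_add_three (a : ℤ_[3]) : ‖1 + 3*a‖ = 1 := by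
  apply norm_unit
  apply unit_of_norm
  have h1 : 1 + 3*a - 1 = 3*a := by ring
  rw [h1, norm_mul, three_eq, norm_p]
  calc ((3:ℝ))⁻¹ * ‖a‖ ≤ 3⁻¹ * 1 :=
        mul_le_mul_of_nonneg_left (PadicInt.norm_le_one _) (by norm_num)
    _ < 1 := by norm_num

lemma norm_two_add {v : ℤ_[3]} (h : ‖v‖ < 1) : ‖2 + v‖ = 1 := by
  have h2 : ‖(2:R)‖ = 1 := by
    have := norm_nat_unit (k := 2) (by norm_num)
    simpa using this
  rw [norm_add_eq_max_of_ne (by rw [h2]; exact h.ne'), h2,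
    max_eq_left (h2 ▸ h.le)]

lemma isUnit_inverse {x : ℤ_[3]} (hx : IsUnit x) : IsUnit (Ring.inverse x) := by
  obtain ⟨v, rfl⟩ := hx
  rw [Ring.inverse_unit]
  exact (v⁻¹).isUnit

end MonoZ3

open MonoZ3 PadicInt

/-- Minimal decomposition for `x ↦ x^m` on `ℤ_3` with `m ≡ 2 (mod 6)`:
with `x₀ = 1 + 3^(l+1) + 3^(l+2)a` (a 3-adic unit), the sets
`M_{l,a} = (x₀ + 3^(t+l+1)ℤ_3) ∪ (x₀⁻¹ + 3^(t+l+1)ℤ_3)` are pairwise disjoint clopen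
minimal components, together with `{1}` they cover exactly the ball `1 + 3ℤ_3`, and
`f` maps `2 + 3ℤ_3` into `1 + 3ℤ_3`. -/
theorem monomial_Z3_two_mod_six_decomposition (m : ℕ) (hm : 2 ≤ m) (hmod : m % 6 = 2)
    (t : ℕ) (ht : t = padicValNat 3 (m + 1))
    (x₀ : ℕ → ℕ → ℤ_[3])
    (hx₀ : ∀ l a, x₀ l a = 1 + 3 ^ (l + 1) + 3 ^ (l + 2) * (a : ℤ_[3]))
    (M : ℕ → ℕ → Set ℤ_[3])
    (hM : ∀ l a, M l a =
      {x : ℤ_[3] | (3 : ℤ_[3]) ^ (t + l + 1) ∣ x - x₀ l a} ∪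
      {x : ℤ_[3] | (3 : ℤ_[3]) ^ (t + l + 1) ∣ x - Ring.inverse (x₀ l a)}) :
    (∀ l a, a < 3 ^ (t - 1) → IsUnit (x₀ l a)) ∧
    (∀ l a l' a', a < 3 ^ (t - 1) → a' < 3 ^ (t - 1) →
      (l, a) ≠ (l', a') → Disjoint (M l a) (M l' a')) ∧
    (∀ l a, a < 3 ^ (t - 1) →
      IsClopen (M l a) ∧
      (∀ x ∈ M l a, x ^ m ∈ M l a) ∧
      (∀ x ∈ M l a, M l a ⊆ closure (Set.range fun n : ℕ => x ^ m ^ n))) ∧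
    ((⋃ l : ℕ, ⋃ a ∈ Finset.range (3 ^ (t - 1)), M l a)
        ∪ {1} = {x : ℤ_[3] | (3 : ℤ_[3]) ∣ x - 1}) ∧
    (∀ x : ℤ_[3], (3 : ℤ_[3]) ∣ x - 2 → (3 : ℤ_[3]) ∣ x ^ m - 1) := by
  have ht1 : 1 ≤ t := by
    rw [ht]
    exact one_le_padicValNat_of_dvd (by omega) (by omega)
  have hm1 : ‖(m:ℤ_[3]) - 1‖ = 1 := by
    have hnd : ¬ ((3:ℤ) ∣ ((m:ℤ) - 1)) := by omega
    have hcast : (m:ℤ_[3]) - 1 = (((m:ℤ) - 1 : ℤ) : ℤ_[3]) := by push_cast; ring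
    refine le_antisymm (PadicInt.norm_le_one _) (not_lt.mp fun hlt => hnd ?_)
    rw [hcast] at hlt
    exact (PadicInt.norm_int_lt_one_iff_dvd _).mp hlt
  have hcast2 : (m:ℤ_[3]) + 1 = ((m+1 : ℕ) : ℤ_[3]) := by push_cast; ring
  have hdvd1 : (3:ℤ_[3])^t ∣ ((m:ℤ_[3]) + 1) := by
    have h1 : (3:ℕ)^t ∣ (m+1) := ht ▸ pow_padicValNat_dvd
    have h2 := Nat.cast_dvd_cast (α := ℤ_[3]) h1
    push_cast at h2
    exact h2
  have hdvd2 : ¬ (3:ℤ_[3])^(t+1) ∣ ((m:ℤ_[3]) + 1) := by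
    intro hc
    have h2 : ¬ (3:ℕ)^(t+1) ∣ (m+1) := ht ▸ pow_succ_padicValNat_not_dvd (by omega)
    apply h2
    rw [hcast2, three_eq] at hc
    have h3 := (PadicInt.pow_p_dvd_int_iff (p := 3) (t+1) ((m+1 : ℕ) : ℤ)).mp
      (by exact_mod_cast hc)
    exact_mod_cast h3
  have hmt : ‖(m:ℤ_[3]) + 1‖ = (3:ℝ)^(-(t:ℤ)) := norm_eq_of hdvd1 hdvd2
  have hmsq : ‖((m:ℤ_[3]))^2 - 1‖ = (3:ℝ)^(-(t:ℤ)) := by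
    have hfact : (m:ℤ_[3])^2 - 1 = ((m:ℤ_[3]) - 1) * ((m:ℤ_[3]) + 1) := by ring
    rw [hfact, norm_mul, hm1, one_mul, hmt]
  have hx0sub : ∀ l a : ℕ, x₀ l a - 1 = 3^(l+1) * (1 + 3*(a:ℤ_[3])) := by
    intro l a
    rw [hx₀]
    ring
  have hx0n : ∀ l a : ℕ, ‖x₀ l a - 1‖ = (3:ℝ)^(-(l+1:ℤ)) := by
    intro l a
    rw [hx0sub l a, norm_mul, norm_three_pow, norm_one_add_three, mul_one]
    congr 1 <;> omega
  have hx0u : ∀ l a : ℕ, IsUnit (x₀ l a) := by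
    intro l a
    apply unit_of_norm
    rw [hx0n]
    calc (3:ℝ)^(-(l+1:ℤ)) < (3:ℝ)^(0:ℤ) := pw_lt_pw (by omega)
      _ = 1 := by norm_num
  have hinvn : ∀ l a : ℕ, ‖Ring.inverse (x₀ l a) - 1‖ = (3:ℝ)^(-(l+1:ℤ)) := by
    intro l a
    have h1 : Ring.inverse (x₀ l a) - 1 = Ring.inverse (x₀ l a) - Ring.inverse 1 := by
      rw [Ring.inverse_one]
    rw [h1, norm_inverse_sub (hx0u l a) isUnit_one, hx0n]
  have hmem : ∀ l a (x : ℤ_[3]), x ∈ M l a ↔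
      (3:ℤ_[3])^(t+l+1) ∣ x - x₀ l a ∨ (3:ℤ_[3])^(t+l+1) ∣ x - Ring.inverse (x₀ l a) := by
    intro l a x
    rw [hM]
    exact Iff.rfl
  have hnorm1 : ∀ l a (x : ℤ_[3]), x ∈ M l a → ‖x - 1‖ = (3:ℝ)^(-(l+1:ℤ)) := by
    intro l a x hx
    rcases (hmem l a x).mp hx with h | h
    · exact norm_sub_one_eq (hx0n l a)
        (lt_of_le_of_lt ((dvd_iff_norm _ _).mp h) (pw_lt_pw (by push_cast; omega)))
    · exact norm_sub_one_eq (hinvn l a)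
        (lt_of_le_of_lt ((dvd_iff_norm _ _).mp h) (pw_lt_pw (by push_cast; omega)))
  refine ⟨fun l a _ => hx0u l a, ?_, ?_, ?_, ?_⟩
  · -- disjointness
    have hka : ∀ l a a' : ℕ, a < 3^(t-1) → a' < 3^(t-1) → a ≠ a' →
        ¬ (3:ℤ_[3])^(t+l+1) ∣ (x₀ l a - x₀ l a') := by
      intro l a a' ha ha' hne hdvd
      have h1 : x₀ l a - x₀ l a' = 3^(l+2) * (((a:ℤ) - a' : ℤ) : ℤ_[3]) := by
        rw [hx₀, hx₀]
        push_cast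
        ring
      rw [h1, show t+l+1 = (l+2) + (t-1) by omega, pow_add] at hdvd
      have h2 : (3:ℤ_[3])^(t-1) ∣ (((a:ℤ) - a' : ℤ) : ℤ_[3]) :=
        (mul_dvd_mul_iff_left (a := (3:ℤ_[3])^(l+2)) (pow_ne_zero _ (by norm_num))).mp hdvd
      rw [three_eq] at h2
      have h3 := (PadicInt.pow_p_dvd_int_iff (p := 3) (t-1) ((a:ℤ) - a')).mp h2
      have haz : (a:ℤ) < (3:ℤ)^(t-1) := by exact_mod_cast ha
      have haz' : (a':ℤ) < (3:ℤ)^(t-1) := by exact_mod_cast ha'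
      have h4 := Int.eq_zero_of_abs_lt_dvd h3 (abs_lt.mpr ⟨by omega, by omega⟩)
      exact hne (by omega)
    have hkb : ∀ l a a' : ℕ, ¬ (3:ℤ_[3])^(t+l+1) ∣ (x₀ l a * x₀ l a' - 1) := by
      intro l a a' hdvd
      have h1 : x₀ l a * x₀ l a' - 1 =
          3^(l+1) * (2 + 3 * (((a:ℤ_[3]) + a') + 3^l * ((1+3*a)*(1+3*(a':ℤ_[3]))))) := by
        rw [hx₀, hx₀]
        ring
      have h2 : ‖x₀ l a * x₀ l a' - 1‖ = (3:ℝ)^(-(l+1:ℤ)) := by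
        rw [h1, norm_mul, norm_three_pow, norm_two_add, mul_one]
        · congr 1 <;> omega
        · rw [norm_mul, three_eq, norm_p]
          calc ((3:ℝ))⁻¹ * ‖_‖ ≤ 3⁻¹ * 1 :=
                mul_le_mul_of_nonneg_left (PadicInt.norm_le_one _) (by norm_num)
            _ < 1 := by norm_num
      have h3 := (dvd_iff_norm _ _).mp hdvd
      rw [h2] at h3
      rw [pw_le_iff] at h3
      omega
    intro l a l' a' ha ha' hne
    rw [Set.disjoint_left]
    intro y hy hy'
    have hl : l = l' := by
      have e1 := hnorm1 l a y hy
      have e2 := hnorm1 l' a' y hy'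
      have e3 := pw_inj (e1.symm.trans e2)
      omega
    subst hl
    have hane : a ≠ a' := by
      intro rfl'
      exact hne (by rw [rfl'])
    rcases (hmem l a y).mp hy with h1 | h1 <;> rcases (hmem l a' y).mp hy' with h2 | h2
    · apply hka l a a' ha ha' hane
      have h3 : x₀ l a - x₀ l a' = (y - x₀ l a') - (y - x₀ l a) := by ring
      rw [h3]
      exact dvd_sub h2 h1
    · apply hkb l a a'
      have hd : (3:ℤ_[3])^(t+l+1) ∣ x₀ l a - Ring.inverse (x₀ l a') := by
        have h3 : x₀ l a - Ring.inverse (x₀ l a') =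
            (y - Ring.inverse (x₀ l a')) - (y - x₀ l a) := by ring
        rw [h3]
        exact dvd_sub h2 h1
      have heq : x₀ l a * x₀ l a' - 1 = x₀ l a' * (x₀ l a - Ring.inverse (x₀ l a')) := by
        rw [mul_sub, Ring.mul_inverse_cancel _ (hx0u l a')]
        ring
      rw [heq]
      exact hd.mul_left _
    · apply hkb l a' a
      have hd : (3:ℤ_[3])^(t+l+1) ∣ x₀ l a' - Ring.inverse (x₀ l a) := by
        have h3 : x₀ l a' - Ring.inverse (x₀ l a) =
            (y - Ring.inverse (x₀ l a)) - (y - x₀ l a') := by ring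
        rw [h3]
        exact dvd_sub h1 h2
      have heq : x₀ l a' * x₀ l a - 1 = x₀ l a * (x₀ l a' - Ring.inverse (x₀ l a)) := by
        rw [mul_sub, Ring.mul_inverse_cancel _ (hx0u l a)]
        ring
      rw [heq]
      exact hd.mul_left _
    · apply hka l a a' ha ha' hane
      have hd : (3:ℤ_[3])^(t+l+1) ∣ Ring.inverse (x₀ l a) - Ring.inverse (x₀ l a') := by
        have h3 : Ring.inverse (x₀ l a) - Ring.inverse (x₀ l a') =
            (y - Ring.inverse (x₀ l a')) - (y - Ring.inverse (x₀ l a)) := by ring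
        rw [h3]
        exact dvd_sub h2 h1
      have heq : x₀ l a - x₀ l a' =
          (x₀ l a' * x₀ l a) * (Ring.inverse (x₀ l a') - Ring.inverse (x₀ l a)) := by
        rw [mul_sub]
        rw [show x₀ l a' * x₀ l a * Ring.inverse (x₀ l a') =
          (x₀ l a' * Ring.inverse (x₀ l a')) * x₀ l a by ring,
          show x₀ l a' * x₀ l a * Ring.inverse (x₀ l a) =
          (x₀ l a * Ring.inverse (x₀ l a)) * x₀ l a' by ring,
          Ring.mul_inverse_cancel _ (hx0u l a'), Ring.mul_inverse_cancel _ (hx0u l a),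
          one_mul, one_mul]
      rw [heq]
      exact Dvd.dvd.mul_left (by rw [show Ring.inverse (x₀ l a') - Ring.inverse (x₀ l a) =
        -(Ring.inverse (x₀ l a) - Ring.inverse (x₀ l a')) by ring]; exact dvd_neg.mpr hd) _
  · -- clopen, invariance, minimality
    have hclopen : ∀ (c : ℤ_[3]) (n : ℕ), IsClopen {x : ℤ_[3] | (3:ℤ_[3])^n ∣ x - c} := by
      intro c n
      have hset : {x : ℤ_[3] | (3:ℤ_[3])^n ∣ x - c} =
          {x : ℤ_[3] | ‖x - c‖ ≤ (3:ℝ)^(-(n:ℤ))} := by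
        ext x
        exact dvd_iff_norm _ _
      have hcont : Continuous fun x : ℤ_[3] => ‖x - c‖ :=
        (continuous_id.sub continuous_const).norm
      constructor
      · rw [hset]
        exact isClosed_le hcont continuous_const
      · have hset2 : {x : ℤ_[3] | ‖x - c‖ ≤ (3:ℝ)^(-(n:ℤ))} =
            {x : ℤ_[3] | ‖x - c‖ < (3:ℝ)^(-(n:ℤ)+1)} := by
          ext x
          have h := PadicInt.norm_le_pow_iff_norm_lt_pow_add_one (x - c) (-(n:ℤ))
          push_cast at h
          simp only [Set.mem_setOf_eq]
          exact h
        rw [hset, hset2]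
        exact isOpen_lt hcont continuous_const
    -- the key step lemma
    have hstep : ∀ (l : ℕ) (x c : ℤ_[3]), ‖x - 1‖ = (3:ℝ)^(-(l+1:ℤ)) → IsUnit c →
        (3:ℤ_[3])^(t+l+1) ∣ x - c → (3:ℤ_[3])^(t+l+1) ∣ x^m - Ring.inverse c := by
      intro l x c hxn hcu hxc
      have hx1 : ‖x - 1‖ ≤ (3:ℝ)^(-1:ℤ) := by
        rw [hxn]
        exact pw_le_pw (by omega)
      have hxu : IsUnit x := unit_of_norm (lt_of_le_of_lt hx1 (by norm_num))
      have hpow : ‖x^m - Ring.inverse x‖ ≤ (3:ℝ)^(-(t+l+1:ℕ):ℤ) := by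
        have hfact : x^m - Ring.inverse x = Ring.inverse x * (x^(m+1) - 1) := by
          rw [mul_sub, mul_one, pow_succ,
            show Ring.inverse x * (x^m * x) = (Ring.inverse x * x) * x^m by ring,
            Ring.inverse_mul_cancel x hxu, one_mul]
        rw [hfact, norm_mul, norm_inverse hxu, one_mul,
          lte_full hx1 (by omega : 0 < m+1), ← ht, hxn,
          ← zpow_add₀ (by norm_num : (3:ℝ) ≠ 0)]
        apply le_of_eq
        congr 1
        push_cast
        ring
      have h2 : ‖Ring.inverse x - Ring.inverse c‖ ≤ (3:ℝ)^(-(t+l+1:ℕ):ℤ) := by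
        rw [norm_inverse_sub hxu hcu]
        exact (dvd_iff_norm _ _).mp hxc
      rw [dvd_iff_norm]
      exact tri hpow h2
    intro l a ha
    refine ⟨?_, ?_, ?_⟩
    · rw [hM]
      exact (hclopen _ _).union (hclopen _ _)
    · -- invariance
      intro x hx
      have hxn := hnorm1 l a x hx
      rcases (hmem l a x).mp hx with h | h
      · exact (hmem l a _).mpr (Or.inr (hstep l x _ hxn (hx0u l a) h))
      · refine (hmem l a _).mpr (Or.inl ?_)
        have h3 := hstep l x _ hxn (isUnit_inverse (hx0u l a)) h
        rwa [inverse_inverse (hx0u l a)] at h3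
    · -- minimality
      intro x hx z hz
      have key : ∀ N0 : ℕ, ∃ n : ℕ, ‖x^(m^n) - z‖ ≤ (3:ℝ)^(-(N0:ℤ)) := by
        intro N0
        set N := max N0 (t+l+1) with hN
        suffices h : ∃ n, (3:ℤ_[3])^N ∣ x^(m^n) - z by
          obtain ⟨n, hn⟩ := h
          exact ⟨n, le_trans ((dvd_iff_norm _ _).mp hn) (pw_le_pw (by
            have : N0 ≤ N := le_max_left _ _
            omega))⟩
        have hNP : t+l+1 ≤ N := le_max_right _ _
        have hxn := hnorm1 l a x hx
        have hzn := hnorm1 l a z hz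
        rcases (hmem l a x).mp hx with h1 | h1 <;> rcases (hmem l a z).mp hz with h2 | h2
        · apply den m t l N ht1 hmsq x z hxn ?_ hNP
          have h3 : z - x = (z - x₀ l a) - (x - x₀ l a) := by ring
          rw [h3]
          exact dvd_sub h2 h1
        · have hstep1 : (3:ℤ_[3])^(t+l+1) ∣ x^m - Ring.inverse (x₀ l a) :=
            hstep l x _ hxn (hx0u l a) h1
          have hxmn : ‖x^m - 1‖ = (3:ℝ)^(-(l+1:ℤ)) :=
            norm_sub_one_eq (hinvn l a)
              (lt_of_le_of_lt ((dvd_iff_norm _ _).mp hstep1) (pw_lt_pw (by push_cast; omega)))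
          obtain ⟨n, hn⟩ := den m t l N ht1 hmsq (x^m) z hxmn (by
            have h3 : z - x^m = (z - Ring.inverse (x₀ l a)) - (x^m - Ring.inverse (x₀ l a)) := by
              ring
            rw [h3]
            exact dvd_sub h2 hstep1) hNP
          refine ⟨n+1, ?_⟩
          rwa [← pow_mul, ← pow_succ'] at hn
        · have hstep1 : (3:ℤ_[3])^(t+l+1) ∣ x^m - x₀ l a := by
            have h3 := hstep l x _ hxn (isUnit_inverse (hx0u l a)) h1
            rwa [inverse_inverse (hx0u l a)] at h3
          have hxmn : ‖x^m - 1‖ = (3:ℝ)^(-(l+1:ℤ)) :=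
            norm_sub_one_eq (hx0n l a)
              (lt_of_le_of_lt ((dvd_iff_norm _ _).mp hstep1) (pw_lt_pw (by push_cast; omega)))
          obtain ⟨n, hn⟩ := den m t l N ht1 hmsq (x^m) z hxmn (by
            have h3 : z - x^m = (z - x₀ l a) - (x^m - x₀ l a) := by ring
            rw [h3]
            exact dvd_sub h2 hstep1) hNP
          refine ⟨n+1, ?_⟩
          rwa [← pow_mul, ← pow_succ'] at hn
        · apply den m t l N ht1 hmsq x z hxn ?_ hNP
          have h3 : z - x = (z - Ring.inverse (x₀ l a)) - (x - Ring.inverse (x₀ l a)) := by ring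
          rw [h3]
          exact dvd_sub h2 h1
      apply Metric.mem_closure_iff.mpr
      intro ε hε
      obtain ⟨K, hK⟩ := PadicInt.exists_pow_neg_lt 3 hε
      obtain ⟨n, hn⟩ := key K
      refine ⟨x^(m^n), Set.mem_range_self n, ?_⟩
      rw [dist_eq_norm, norm_sub_rev]
      refine lt_of_le_of_lt hn (lt_of_le_of_lt (le_of_eq ?_) hK)
      norm_num
  · -- coverage
    ext x
    simp only [Set.mem_union, Set.mem_iUnion, Set.mem_singleton_iff, Set.mem_setOf_eq,
      Finset.mem_range]
    constructor
    · rintro (⟨l, a, ha, hx⟩ | rfl)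
      · have h := (dvd_iff_norm (x-1) 1).mpr (by
          rw [hnorm1 l a x hx]
          exact pw_le_pw (by omega))
        rwa [pow_one] at h
      · simp
    · intro hx
      by_cases hx1 : x = 1
      · exact Or.inr hx1
      refine Or.inl ?_
      have hne : x - 1 ≠ 0 := sub_ne_zero.mpr hx1
      have hnle : ‖x - 1‖ ≤ (3:ℝ)^(-(1:ℤ)) := by
        have h := (dvd_iff_norm (x-1) 1).mp (by rwa [pow_one])
        exact_mod_cast h
      have hv1 : 1 ≤ (x-1).valuation := by
        rw [PadicInt.norm_eq_zpow_neg_valuation hne] at hnle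
        push_cast at hnle
        have := pw_le_iff.mp hnle
        omega
      set l := (x-1).valuation - 1 with hldef
      have hlv : (x-1).valuation = l + 1 := by omega
      set u : ℤ_[3] := (PadicInt.unitCoeff hne : ℤ_[3]) with hudef
      have hu : IsUnit u := (PadicInt.unitCoeff hne).isUnit
      have hxu : x - 1 = 3^(l+1) * u := by
        have hspec := PadicInt.unitCoeff_spec hne
        rw [hlv] at hspec
        rw [hspec, ← three_eq]
        ring
      have hxisu : IsUnit x := by
        apply unit_of_norm
        rw [hxu, norm_mul, norm_three_pow, norm_unit hu, mul_one]
        calc (3:ℝ)^(-(l+1:ℕ):ℤ) < (3:ℝ)^(0:ℤ) := pw_lt_pw (by push_cast; omega)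
          _ = 1 := by norm_num
      have key : ∀ (y w : ℤ_[3]), y - 1 = 3^(l+1) * w → (3:ℤ_[3]) ∣ w - 1 →
          ∃ a, a < 3^(t-1) ∧ (3:ℤ_[3])^(t+l+1) ∣ y - x₀ l a := by
        intro y w hyw hw3
        obtain ⟨b, hb⟩ := hw3
        refine ⟨b.appr (t-1), PadicInt.appr_lt _ _, ?_⟩
        have hba : (3:ℤ_[3])^(t-1) ∣ b - (b.appr (t-1) : ℤ_[3]) := by
          have h := PadicInt.appr_spec (t-1) b
          rw [Ideal.mem_span_singleton] at h
          rwa [three_eq]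
        have heq : y - x₀ l (b.appr (t-1)) = 3^(l+2) * (b - (b.appr (t-1) : ℤ_[3])) := by
          have hy : y = 1 + 3^(l+1) * w := by
            rw [← hyw]
            ring
          have hw : w = 1 + 3*b := by
            rw [← hb]
            ring
          rw [hy, hw, hx₀]
          ring
        rw [heq, show t+l+1 = (l+2) + (t-1) by omega, pow_add]
        exact mul_dvd_mul_left _ hba
      set r := u.appr 1 with hrdef
      have hr3 : r < 3 := by
        have := PadicInt.appr_lt u 1
        simpa using this
      have hur : (3:ℤ_[3]) ∣ u - (r:ℤ_[3]) := by
        have h := PadicInt.appr_spec 1 u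
        rw [Ideal.mem_span_singleton, pow_one] at h
        rwa [three_eq]
      interval_cases r
      · exfalso
        have hdd : (3:ℤ_[3]) ∣ u := by simpa using hur
        have := (PadicInt.norm_lt_one_iff_dvd u).mpr (by rwa [← three_eq])
        rw [norm_unit hu] at this
        exact lt_irrefl _ this
      · obtain ⟨a, ha, hdvd⟩ := key x u hxu (by simpa using hur)
        exact ⟨l, a, ha, (hmem l a x).mpr (Or.inl hdvd)⟩
      · -- u ≡ 2 mod 3 : use the inverse
        have hur2 : (3:ℤ_[3]) ∣ u - 2 := by
          have : ((2:ℕ):ℤ_[3]) = 2 := by push_cast; rfl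
          rwa [this] at hur
        set y := Ring.inverse x with hydef
        have hyu : y - 1 = 3^(l+1) * (-u * Ring.inverse x) := by
          have h1 : y - 1 = Ring.inverse x - Ring.inverse 1 := by
            rw [Ring.inverse_one]
          rw [h1, inverse_sub_inverse hxisu isUnit_one, Ring.inverse_one, mul_one,
            show (1:ℤ_[3]) - x = -(3^(l+1) * u) by rw [← hxu]; ring]
          ring
        have h3 : (3:ℤ_[3]) ∣ (-u * Ring.inverse x) - 1 := by
          have hfact : (-u * Ring.inverse x) - 1 = -(Ring.inverse x) * (u + x) := by
            linear_combination (Ring.inverse_mul_cancel x hxisu)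
          rw [hfact]
          apply Dvd.dvd.mul_left
          have h4 : u + x = (u - 2) + (x - 1) + 3 := by ring
          rw [h4]
          exact dvd_add (dvd_add hur2 hx) dvd_rfl
        obtain ⟨a, ha, hya⟩ := key y _ hyu h3
        refine ⟨l, a, ha, (hmem l a x).mpr (Or.inr ?_)⟩
        rw [dvd_iff_norm]
        have h5 : x - Ring.inverse (x₀ l a) = Ring.inverse y - Ring.inverse (x₀ l a) := by
          rw [hydef, inverse_inverse hxisu]
        rw [h5, norm_inverse_sub (isUnit_inverse hxisu) (hx0u l a)]
        exact (dvd_iff_norm _ _).mp hya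
  · -- last part
    intro x hx
    have hdvd3 : ∀ y : ℤ_[3], (3:ℤ_[3]) ∣ y ↔ PadicInt.toZMod y = 0 := by
      intro y
      constructor
      · intro h
        rw [← RingHom.mem_ker, PadicInt.ker_toZMod, PadicInt.maximalIdeal_eq_span_p,
          Ideal.mem_span_singleton]
        rwa [three_eq] at h
      · intro h
        rw [← RingHom.mem_ker, PadicInt.ker_toZMod, PadicInt.maximalIdeal_eq_span_p,
          Ideal.mem_span_singleton] at h
        rwa [three_eq]
    have h2 : PadicInt.toZMod x = 2 := by
      have h := (hdvd3 _).mp hx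
      rw [map_sub] at h
      have h3 := sub_eq_zero.mp h
      rwa [map_ofNat] at h3
    apply (hdvd3 _).mpr
    rw [map_sub, map_pow, map_one, h2,
      show m = 2*(m/2) by omega, pow_mul,
      show ((2:ZMod 3))^2 = 1 by decide, one_pow, sub_self]
end

section
/- Let m ≥ 2 be an integer with m ≡ 5 (mod 20), let f(x) = x^m on ℤ_5, and let 𝕚 be the unique element of ℤ_5 with 𝕚² = −1 and 𝕚 − 2 ∈ 5ℤ_5. Then the set of fixed points of f is exactly {0, 1, −1, 𝕚, −𝕚}; for every x ∈ 5ℤ_5 the iterates f^n(x) = x^(m^n) converge to 0, and for each b ∈ {1, −1, 𝕚, −𝕚} and every x ∈ b + 5ℤ_5 the iterates f^n(x) converge to b as n → ∞. -/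
open Filter Topology Finset

instance : Fact (Nat.Prime 5) := ⟨by norm_num⟩

private lemma five_not_dvd_one : ¬ (5 : ℤ_[5]) ∣ 1 := by
  intro h
  have hu : IsUnit (5 : ℤ_[5]) := isUnit_of_dvd_one h
  rw [PadicInt.isUnit_iff] at hu
  have := PadicInt.norm_p (p := 5)
  push_cast at this
  rw [this] at hu
  norm_num at hu

private lemma dvd_from_toZMod (y : ℤ_[5]) (h : PadicInt.toZMod y = 0) : (5 : ℤ_[5]) ∣ y := by
  have : y ∈ RingHom.ker (PadicInt.toZMod : ℤ_[5] →+* ZMod 5) := h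
  rw [PadicInt.ker_toZMod, PadicInt.maximalIdeal_eq_span_p, Ideal.mem_span_singleton] at this
  exact_mod_cast this

private lemma toZMod_from_dvd (y : ℤ_[5]) (h : (5 : ℤ_[5]) ∣ y) : PadicInt.toZMod y = 0 := by
  have : y ∈ RingHom.ker (PadicInt.toZMod : ℤ_[5] →+* ZMod 5) := by
    rw [PadicInt.ker_toZMod, PadicInt.maximalIdeal_eq_span_p, Ideal.mem_span_singleton]
    exact_mod_cast h
  exact this

/-- If `u ≡ 1 mod 5`, the geometric sum `∑_{i<k} u^i` is ≡ k mod 5. -/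
private lemma geom_sum_sub_card (u : ℤ_[5]) (hu : (5 : ℤ_[5]) ∣ u - 1) (k : ℕ) :
    (5 : ℤ_[5]) ∣ (∑ i ∈ range k, u ^ i) - (k : ℤ_[5]) := by
  have : (∑ i ∈ range k, u ^ i) - (k : ℤ_[5]) = ∑ i ∈ range k, (u ^ i - 1) := by
    rw [Finset.sum_sub_distrib]
    simp
  rw [this]
  refine Finset.dvd_sum fun i _ => dvd_trans hu ?_
  simpa using sub_dvd_pow_sub_pow u 1 i

/-- Key contraction: if `5 ∣ u - 1` and `5 ∣ m` then `5 * (u-1) ∣ u^m - 1`. -/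
private lemma contraction (u : ℤ_[5]) (hu : (5 : ℤ_[5]) ∣ u - 1) {m : ℕ} (hm : 5 ∣ m) :
    (5 : ℤ_[5]) * (u - 1) ∣ u ^ m - 1 := by
  have hgeom : (∑ i ∈ range m, u ^ i) * (u - 1) = u ^ m - 1 := geom_sum_mul u m
  have h5S : (5 : ℤ_[5]) ∣ ∑ i ∈ range m, u ^ i := by
    have h1 := geom_sum_sub_card u hu m
    have h2 : (5 : ℤ_[5]) ∣ (m : ℤ_[5]) := by
      obtain ⟨c, rfl⟩ := hm
      push_cast
      exact Dvd.intro _ rfl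
    have := dvd_add h1 h2
    simpa using this
  obtain ⟨S, hS⟩ := h5S
  rw [← hgeom, hS]
  ring_nf
  exact Dvd.intro S (by ring)

/-- If `5 ∣ u - 1` then `5^n ∣ u^(m^n) - 1` for `5 ∣ m`. -/
private lemma pow_iter_dvd (u : ℤ_[5]) (hu : (5 : ℤ_[5]) ∣ u - 1) {m : ℕ} (hm : 5 ∣ m) :
    ∀ n : ℕ, (5 : ℤ_[5]) ^ n ∣ u ^ m ^ n - 1 ∧ (5 : ℤ_[5]) ∣ u ^ m ^ n - 1 := by
  intro n
  induction n with
  | zero => simp only [pow_zero, pow_one]; exact ⟨one_dvd _, hu⟩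
  | succ n ih =>
    obtain ⟨ihn, ih1⟩ := ih
    set v := u ^ m ^ n with hv
    have hvm : u ^ m ^ (n + 1) = v ^ m := by rw [hv, ← pow_mul, pow_succ]
    have hc := contraction v ih1 hm
    constructor
    · rw [hvm, pow_succ]
      calc (5:ℤ_[5]) ^ n * 5 ∣ (v - 1) * 5 := mul_dvd_mul ihn dvd_rfl
        _ = 5 * (v - 1) := by ring
        _ ∣ v ^ m - 1 := hc
    · rw [hvm]
      exact dvd_trans (Dvd.intro _ rfl) hc

private lemma tendsto_of_dvd (f : ℕ → ℤ_[5]) (L : ℤ_[5])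
    (h : ∀ n, (5 : ℤ_[5]) ^ n ∣ f n - L) : Tendsto f atTop (𝓝 L) := by
  rw [tendsto_iff_norm_sub_tendsto_zero]
  have hb : ∀ n, ‖f n - L‖ ≤ (5 : ℝ)⁻¹ ^ n := by
    intro n
    obtain ⟨c, hc⟩ := h n
    rw [hc, norm_mul]
    calc ‖(5:ℤ_[5])^n‖ * ‖c‖ ≤ ‖(5:ℤ_[5])^n‖ * 1 := by
          exact mul_le_mul_of_nonneg_left (PadicInt.norm_le_one c) (norm_nonneg _)
      _ = ‖(5:ℤ_[5])‖ ^ n := by rw [mul_one, norm_pow]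
      _ = (5 : ℝ)⁻¹ ^ n := by
          have := PadicInt.norm_p (p := 5); push_cast at this; rw [this]
  refine squeeze_zero (fun n => norm_nonneg _) hb ?_
  exact tendsto_pow_atTop_nhds_zero_of_lt_one (by norm_num) (by norm_num)

/-- For `m ≡ 5 (mod 20)` and `f(x) = x^m` on `ℤ_5`, with `𝕚` the square root of `-1`
congruent to `2` mod `5`: the fixed points are exactly `{0, 1, -1, 𝕚, -𝕚}`, iterates
of points of `5ℤ_5` converge to `0`, and for each `b ∈ {1, -1, 𝕚, -𝕚}` the iterates of
points of `b + 5ℤ_5` converge to `b`. -/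
theorem monomial_Z5_five_mod_twenty (m : ℕ) (hm : 2 ≤ m) (hmod : m % 20 = 5)
    (I : ℤ_[5]) (hI2 : I ^ 2 = -1) (hI5 : (5 : ℤ_[5]) ∣ I - 2) :
    {x : ℤ_[5] | x ^ m = x} = {0, 1, -1, I, -I} ∧
    (∀ x : ℤ_[5], (5 : ℤ_[5]) ∣ x → Tendsto (fun n : ℕ => x ^ m ^ n) atTop (𝓝 0)) ∧
    (∀ b ∈ ({1, -1, I, -I} : Set ℤ_[5]), ∀ x : ℤ_[5], (5 : ℤ_[5]) ∣ (x - b) →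
      Tendsto (fun n : ℕ => x ^ m ^ n) atTop (𝓝 b)) := by
  have hm5 : 5 ∣ m := by omega
  have hm4 : m % 4 = 1 := by omega
  have hmodd : Odd m := ⟨(m - 1)/2, by omega⟩
  have hI4 : I ^ 4 = 1 := by
    have : I ^ 4 = (I ^ 2) ^ 2 := by ring
    rw [this, hI2]; ring
  have hIm : I ^ m = I := by
    have : m = 4 * (m / 4) + 1 := by omega
    rw [this, pow_succ, pow_mul, hI4, one_pow, one_mul]
  -- fixed point facts for each b
  have hb_pow : ∀ b ∈ ({1, -1, I, -I} : Set ℤ_[5]), b ^ m = b ∧ b ^ 4 = 1 := by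
    intro b hb
    rcases hb with rfl | rfl | rfl | rfl
    · simp
    · constructor
      · exact hmodd.neg_one_pow
      · norm_num
    · exact ⟨hIm, hI4⟩
    · constructor
      · rw [hmodd.neg_pow, hIm]
      · rw [show (4 : ℕ) = 2 * 2 by rfl, pow_mul, neg_pow_two, ← pow_mul, hI4]
  refine ⟨?_, ?_, ?_⟩
  · -- fixed point set
    ext x
    simp only [Set.mem_setOf_eq, Set.mem_insert_iff, Set.mem_singleton_iff]
    constructor
    · intro hx
      by_cases hx0 : x = 0
      · exact Or.inl hx0
      right
      -- x^(m-1) = 1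
      have hxm1 : x ^ (m - 1) = 1 := by
        have : x * x ^ (m - 1) = x * 1 := by
          rw [mul_one, ← pow_succ']
          rw [show m - 1 + 1 = m by omega]
          exact hx
        exact mul_left_cancel₀ hx0 this
      -- x is not divisible by 5
      have hx5 : ¬ (5 : ℤ_[5]) ∣ x := by
        intro h5
        apply five_not_dvd_one
        rw [← hxm1]
        exact dvd_trans h5 (dvd_pow_self x (by omega))
      -- Fermat: 5 ∣ x^4 - 1
      have hfermat : (5 : ℤ_[5]) ∣ x ^ 4 - 1 := by
        apply dvd_from_toZMod
        have hz : PadicInt.toZMod x ≠ 0 := fun h => hx5 (dvd_from_toZMod x h)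
        have : PadicInt.toZMod (x ^ 4 - 1) = (PadicInt.toZMod x) ^ 4 - 1 := by
          simp
        rw [this]
        revert hz
        generalize PadicInt.toZMod x = z
        revert z
        decide
      -- u = x^4 satisfies u^j = 1 with j = (m-1)/4, 5 ∤ j
      set j := (m - 1) / 4 with hj
      have hjm : m - 1 = 4 * j := by omega
      have huj : (x ^ 4) ^ j = 1 := by rw [← pow_mul, ← hjm, hxm1]
      have hx4 : x ^ 4 = 1 := by
        by_contra hne
        -- geometric sum S with S * (x^4 - 1) = 0, S a unit mod 5
        have hgeom : (∑ i ∈ range j, (x^4) ^ i) * (x ^ 4 - 1) = 0 := by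
          rw [geom_sum_mul, huj, sub_self]
        have hSne : (∑ i ∈ range j, (x^4) ^ i) ≠ 0 := by
          intro hS0
          have h1 := geom_sum_sub_card (x^4) hfermat j
          rw [hS0, zero_sub, dvd_neg] at h1
          have hj5 : j % 5 = 1 := by omega
          have : (5 : ℤ_[5]) ∣ (1 : ℤ_[5]) := by
            have h2 : (5 : ℤ_[5]) ∣ ((j - 1 : ℕ) : ℤ_[5]) := by
              have : 5 ∣ (j - 1) := by omega
              obtain ⟨c, hc⟩ := this
              rw [hc]; push_cast; exact Dvd.intro _ rfl
            have h3 : ((j : ℤ_[5]) - ((j - 1 : ℕ) : ℤ_[5])) = 1 := by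
              have : ((j - 1 : ℕ) : ℤ_[5]) = (j : ℤ_[5]) - 1 := by
                have hj1 : 1 ≤ j := by omega
                push_cast [hj1]
                ring
              rw [this]; ring
            calc (5:ℤ_[5]) ∣ (j : ℤ_[5]) - ((j-1:ℕ) : ℤ_[5]) := dvd_sub h1 h2
              _ = 1 := h3
          exact five_not_dvd_one this
        rcases mul_eq_zero.mp hgeom with h | h
        · exact hSne h
        · exact hne (by linear_combination h)
      -- factor x^4 - 1
      have hfac : (x - 1) * (x + 1) * ((x - I) * (x + I)) = 0 := by
        have : (x - 1) * (x + 1) * ((x - I) * (x + I)) = x ^ 4 - 1 := by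
          linear_combination (1 - x^2) * hI2
        rw [this, hx4, sub_self]
      rcases mul_eq_zero.mp hfac with h | h
      · rcases mul_eq_zero.mp h with h' | h'
        · exact Or.inl (by linear_combination h')
        · exact Or.inr (Or.inl (by linear_combination h'))
      · rcases mul_eq_zero.mp h with h' | h'
        · exact Or.inr (Or.inr (Or.inl (by linear_combination h')))
        · exact Or.inr (Or.inr (Or.inr (by linear_combination h')))
    · intro hx
      rcases hx with rfl | hx
      · exact zero_pow (by omega)
      · exact (hb_pow _ hx).1
  · -- convergence to 0
    intro x hx
    apply tendsto_of_dvd _ 0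
    intro n
    rw [sub_zero]
    have hmn : n ≤ m ^ n := Nat.le_of_lt (Nat.lt_pow_self (n := n) (by omega))
    exact dvd_trans (pow_dvd_pow (5:ℤ_[5]) hmn) (pow_dvd_pow_of_dvd hx (m ^ n))
  · -- convergence to b
    intro b hb x hx
    obtain ⟨hbm, hb4⟩ := hb_pow b hb
    have hbu : b * b ^ 3 = 1 := by rw [← pow_succ', hb4]
    set u := x * b ^ 3 with hu
    have hu1 : (5 : ℤ_[5]) ∣ u - 1 := by
      have : u - 1 = b ^ 3 * (x - b) := by
        rw [hu]; linear_combination hb4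
      rw [this]
      exact Dvd.dvd.mul_left hx _
    have hbmn : ∀ n, b ^ m ^ n = b := by
      intro n
      induction n with
      | zero => simp
      | succ n ih => rw [pow_succ, pow_mul, ih, hbm]
    have hxu : ∀ n, x ^ m ^ n = u ^ m ^ n * b := by
      intro n
      have hxub : x = u * b := by
        rw [hu]; linear_combination (-x) * hb4
      rw [hxub, mul_pow, hbmn]
    apply tendsto_of_dvd
    intro n
    rw [hxu n]
    have := (pow_iter_dvd u hu1 hm5 n).1
    calc (5:ℤ_[5])^n ∣ (u ^ m ^ n - 1) * b := Dvd.dvd.mul_right this b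
      _ = u ^ m ^ n * b - b := by ring
end

section
/- Let m ≥ 2 be an integer with m ≡ 15 (mod 20), let f(x) = x^m on ℤ_5, and let 𝕚 be the unique element of ℤ_5 with 𝕚² = −1 and 𝕚 − 2 ∈ 5ℤ_5. Then 0, 1, −1 are fixed points of f and {𝕚, −𝕚} is a 2-periodic orbit (f(𝕚) = −𝕚 and f(−𝕚) = 𝕚); for every x ∈ 5ℤ_5 the iterates f^n(x) = x^(m^n) converge to 0, for every x ∈ 1 + 5ℤ_5 they converge to 1, for every x ∈ −1 + 5ℤ_5 they converge to −1, and for every x ∈ 𝕚 + 5ℤ_5 the even iterates f^(2n)(x) = x^(m^(2n)) converge to 𝕚 while for every x ∈ −𝕚 + 5ℤ_5 the even iterates converge to −𝕚 as n → ∞. -/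
open Filter Topology

private lemma geom_dvd5 (y : ℤ_[5]) (hy : (5:ℤ_[5]) ∣ y - 1) {m : ℕ} (hm : 5 ∣ m) :
    (5:ℤ_[5]) ∣ ∑ i ∈ Finset.range m, y ^ i := by
  have h1 : ∑ i ∈ Finset.range m, y ^ i
      = (∑ i ∈ Finset.range m, (y ^ i - 1)) + (m : ℤ_[5]) := by
    rw [Finset.sum_sub_distrib]; simp
  rw [h1]
  refine dvd_add (Finset.dvd_sum fun i _ => hy.trans ?_) ?_
  · simpa using sub_dvd_pow_sub_pow y 1 i
  · exact_mod_cast (Nat.cast_dvd_cast hm : ((5:ℕ):ℤ_[5]) ∣ (m:ℤ_[5]))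

private lemma key_dvd (m : ℕ) (hm5 : 5 ∣ m) (x : ℤ_[5]) (hx : (5:ℤ_[5]) ∣ x - 1) :
    ∀ n : ℕ, (5:ℤ_[5]) ^ (n+1) ∣ x ^ m ^ n - 1
  | 0 => by simpa using hx
  | (n+1) => by
    have ih := key_dvd m hm5 x hx n
    have hy : (5:ℤ_[5]) ∣ x ^ m ^ n - 1 :=
      (dvd_pow_self (5:ℤ_[5]) (Nat.succ_ne_zero n)).trans ih
    have hgeo := geom_dvd5 _ hy hm5
    have heq : x ^ m ^ (n+1) - 1
        = (∑ i ∈ Finset.range m, (x ^ m ^ n) ^ i) * (x ^ m ^ n - 1) := by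
      rw [geom_sum_mul, ← pow_mul, ← pow_succ]
    rw [heq, pow_succ]
    exact mul_comm (5:ℤ_[5]) ((5:ℤ_[5])^(n+1)) ▸ mul_dvd_mul hgeo ih

private lemma tendsto_of_dvd5 {f : ℕ → ℤ_[5]} {a : ℤ_[5]}
    (h : ∀ n, (5:ℤ_[5]) ^ (n+1) ∣ f n - a) : Tendsto f atTop (𝓝 a) := by
  rw [tendsto_iff_norm_sub_tendsto_zero]
  refine squeeze_zero (fun n => norm_nonneg _) (fun n => ?_)
    ((tendsto_pow_atTop_nhds_zero_of_lt_one (by norm_num : (0:ℝ) ≤ 1/5)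
      (by norm_num : (1/5:ℝ) < 1)).comp (tendsto_add_atTop_nat 1))
  have hb : ‖f n - a‖ ≤ ((5:ℕ):ℝ) ^ (-(n+1:ℕ):ℤ) :=
    (PadicInt.norm_le_pow_iff_mem_span_pow _ _).2 (Ideal.mem_span_singleton.2 (h n))
  show ‖f n - a‖ ≤ (1/5:ℝ) ^ (n+1)
  calc ‖f n - a‖ ≤ ((5:ℕ):ℝ) ^ (-(n+1:ℕ):ℤ) := hb
    _ = (1/5:ℝ) ^ (n+1) := by
        rw [zpow_neg, zpow_natCast, one_div, inv_pow]; norm_num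

private lemma keyI_dvd (m : ℕ) (hm5 : 5 ∣ m) (hm4 : m % 4 = 3) (I x : ℤ_[5])
    (hI2 : I ^ 2 = -1) (hx : (5:ℤ_[5]) ∣ x - I) (n : ℕ) :
    (5:ℤ_[5]) ^ (n+1) ∣ x ^ m ^ (2*n) - I := by
  have hI4 : I ^ 4 = 1 := by
    rw [show (4:ℕ) = 2*2 from rfl, pow_mul, hI2]; ring
  have hII : I * -I = 1 := by rw [mul_neg, ← sq, hI2, neg_neg]
  have hu : (5:ℤ_[5]) ∣ (-I * x) - 1 := by
    have : (-I * x) - 1 = -I * (x - I) := by linear_combination -hI2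
    rw [this]
    exact hx.mul_left _
  have hx' : x = I * (-I * x) := by rw [← mul_assoc, hII, one_mul]
  have hk := key_dvd (m^2) (hm5.trans (dvd_pow_self m two_ne_zero)) (-I * x) hu n
  obtain ⟨q, hq⟩ : ∃ q, (m^2)^n = 4*q + 1 := by
    have h2 : m^2 % 4 = 1 := by rw [Nat.pow_mod, hm4]
    have h1 : (m^2)^n % 4 = 1 := by rw [Nat.pow_mod, h2]; simp
    exact ⟨(m^2)^n / 4, by omega⟩
  have hIN : I ^ (m^2)^n = I := by
    rw [hq, pow_add, pow_mul, hI4, one_pow, pow_one, one_mul]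
  have hrw : x ^ m ^ (2*n) - I = I * ((-I * x) ^ (m^2)^n - 1) := by
    rw [pow_mul m 2 n]
    conv_lhs => rw [hx']
    rw [mul_pow, hIN, mul_sub, mul_one]
  rw [hrw]
  exact hk.mul_left I

/-- For `m ≡ 15 (mod 20)` and `f(x) = x^m` on `ℤ_5`, with `𝕚` the square root of `-1`
congruent to `2` mod `5`: `0, 1, -1` are fixed points, `{𝕚, -𝕚}` is a 2-periodic orbit,
iterates of points of `5ℤ_5`, `1 + 5ℤ_5`, `-1 + 5ℤ_5` converge to `0`, `1`, `-1`
respectively, and the even iterates of points of `𝕚 + 5ℤ_5` (resp. `-𝕚 + 5ℤ_5`)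
converge to `𝕚` (resp. `-𝕚`). -/
theorem monomial_Z5_fifteen_mod_twenty (m : ℕ) (hm : 2 ≤ m) (hmod : m % 20 = 15)
    (I : ℤ_[5]) (hI2 : I ^ 2 = -1) (hI5 : (5 : ℤ_[5]) ∣ I - 2) :
    (0 : ℤ_[5]) ^ m = 0 ∧ (1 : ℤ_[5]) ^ m = 1 ∧ (-1 : ℤ_[5]) ^ m = -1 ∧
    I ^ m = -I ∧ (-I) ^ m = I ∧
    (∀ x : ℤ_[5], (5 : ℤ_[5]) ∣ x → Tendsto (fun n : ℕ => x ^ m ^ n) atTop (𝓝 0)) ∧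
    (∀ x : ℤ_[5], (5 : ℤ_[5]) ∣ (x - 1) →
      Tendsto (fun n : ℕ => x ^ m ^ n) atTop (𝓝 1)) ∧
    (∀ x : ℤ_[5], (5 : ℤ_[5]) ∣ (x + 1) →
      Tendsto (fun n : ℕ => x ^ m ^ n) atTop (𝓝 (-1))) ∧
    (∀ x : ℤ_[5], (5 : ℤ_[5]) ∣ (x - I) →
      Tendsto (fun n : ℕ => x ^ m ^ (2 * n)) atTop (𝓝 I)) ∧
    (∀ x : ℤ_[5], (5 : ℤ_[5]) ∣ (x + I) →
      Tendsto (fun n : ℕ => x ^ m ^ (2 * n)) atTop (𝓝 (-I))) := by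
  have hm5 : 5 ∣ m := by omega
  have hm4 : m % 4 = 3 := by omega
  have hmodd : Odd m := by refine ⟨m / 2, by omega⟩
  have hI4 : I ^ 4 = 1 := by
    rw [show (4:ℕ) = 2*2 from rfl, pow_mul, hI2]; ring
  have hIm : I ^ m = -I := by
    obtain ⟨q, hq⟩ : ∃ q, m = 4*q + 3 := ⟨m / 4, by omega⟩
    rw [hq, pow_add, pow_mul, hI4, one_pow, one_mul, pow_succ, hI2, neg_one_mul]
  refine ⟨by simp [pow_eq_zero_iff (by omega : m ≠ 0)], one_pow m, hmodd.neg_one_pow,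
    hIm, by rw [hmodd.neg_pow, hIm, neg_neg], ?_, ?_, ?_, ?_, ?_⟩
  · intro x hx
    refine tendsto_of_dvd5 fun n => ?_
    rw [sub_zero]
    exact (pow_dvd_pow (5:ℤ_[5]) (by
      calc n + 1 ≤ 2 ^ n := Nat.succ_le_of_lt (Nat.lt_two_pow_self (n := n))
        _ ≤ m ^ n := Nat.pow_le_pow_left hm n)).trans (pow_dvd_pow_of_dvd hx _)
  · intro x hx
    exact tendsto_of_dvd5 (key_dvd m hm5 x hx)
  · intro x hx
    refine tendsto_of_dvd5 fun n => ?_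
    have h := key_dvd m hm5 (-x) (by rw [show (-x) - 1 = -(x+1) by ring]; exact hx.neg_right) n
    rw [(hmodd.pow).neg_pow] at h
    rw [sub_neg_eq_add]
    have := h.neg_right
    rw [show -(-x ^ m ^ n - 1) = x ^ m ^ n + 1 by ring] at this
    exact this
  · intro x hx
    exact tendsto_of_dvd5 (keyI_dvd m hm5 hm4 I x hI2 hx)
  · intro x hx
    refine tendsto_of_dvd5 (keyI_dvd m hm5 hm4 (-I) x (by rw [neg_sq]; exact hI2)
      (by rwa [sub_neg_eq_add]))
end

section
/- Let m ≥ 2 be an integer with m ≡ 1 (mod 20), let f(x) = x^m on ℤ_5, let t = ν_5(m − 1), and let 𝕚 be the unique element of ℤ_5 with 𝕚² = −1 and 𝕚 − 2 ∈ 5ℤ_5. For each b ∈ {1, −1, 𝕚, −𝕚}, each integer l ≥ 0, each i ∈ {1, 2, 3, 4}, and each a ∈ {0, 1, …, 5^(t−1) − 1}, set M_{l,a,i,b} = b + 5^(l+1)·i + 5^(l+2)·a + 5^(t+l+1)ℤ_5. Then the sets M_{l,a,i,b} are pairwise disjoint clopen subsets of ℤ_5, each M_{l,a,i,b} is a minimal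 component of f (f(M_{l,a,i,b}) ⊆ M_{l,a,i,b} and every forward orbit of f in M_{l,a,i,b} is dense in M_{l,a,i,b}), and the union of all the M_{l,a,i,b} together with the fixed-point set {1, −1, 𝕚, −𝕚} equals the set of 5-adic units ℤ_5 \ 5ℤ_5. -/
open Filter Topology

namespace MZ5

lemma five_ne : (5:ℤ_[5]) ≠ 0 := by
  have : ((5:ℕ):ℤ_[5]) ≠ 0 := Nat.cast_ne_zero.mpr (by norm_num)
  simpa using this

lemma c5 : ((5:ℕ):ℤ_[5]) = (5:ℤ_[5]) := by norm_num

lemma unit_iff {x : ℤ_[5]} : IsUnit x ↔ ¬ (5:ℤ_[5]) ∣ x := by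
  rw [PadicInt.isUnit_iff, ← c5, ← PadicInt.norm_lt_one_iff_dvd]
  constructor
  · intro h h'; rw [h] at h'; exact lt_irrefl _ h'
  · intro h; exact le_antisymm (PadicInt.norm_le_one x) (not_lt.mp h)

lemma natCast_dvd_iff {k : ℕ} : (5:ℤ_[5]) ∣ (k : ℤ_[5]) ↔ 5 ∣ k := by
  have h1 : ((k:ℤ):ℤ_[5]) = (k:ℤ_[5]) := by push_cast; ring
  rw [← h1, ← c5, ← PadicInt.norm_lt_one_iff_dvd, PadicInt.norm_int_lt_one_iff_dvd]
  exact_mod_cast Int.natCast_dvd_natCast (m := 5) (n := k)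

lemma pow_dvd_iff_norm {n : ℕ} {x : ℤ_[5]} :
    (5:ℤ_[5])^n ∣ x ↔ ‖x‖ ≤ (5:ℝ)^(-(n:ℤ)) := by
  rw [show ((5:ℝ)) = ((5:ℕ):ℝ) by norm_num,
    PadicInt.norm_le_pow_iff_mem_span_pow, Ideal.mem_span_singleton]
  norm_num

lemma intCast_pow_dvd_iff {n : ℕ} {k : ℤ} :
    (5:ℤ_[5])^n ∣ ((k:ℤ_[5])) ↔ (5^n : ℤ) ∣ k := by
  rw [pow_dvd_iff_norm, show ((5:ℝ)) = ((5:ℕ):ℝ) by norm_num,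
    PadicInt.norm_int_le_pow_iff_dvd]
  norm_num

lemma pow_unit_lt {a b : ℕ} {u v : ℤ_[5]} (hu : IsUnit u)
    (hab : a < b) (h : (5:ℤ_[5])^a * u = 5^b * v) : False := by
  have hb : (5:ℤ_[5])^b = 5^a * 5^(b-a) := by
    rw [← pow_add]; congr 1; omega
  rw [hb, mul_assoc] at h
  have := mul_left_cancel₀ (pow_ne_zero a five_ne) h
  have h5u : (5:ℤ_[5]) ∣ u := this ▸ Dvd.dvd.mul_right (dvd_pow_self _ (by omega)) v
  exact (unit_iff.mp hu) h5u

lemma pow_unit_inj {a b : ℕ} {u v : ℤ_[5]} (hu : IsUnit u) (hv : IsUnit v)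
    (h : (5:ℤ_[5])^a * u = 5^b * v) : a = b := by
  rcases lt_trichotomy a b with h' | h' | h'
  · exact absurd (pow_unit_lt hu h' h) id
  · exact h'
  · exact absurd (pow_unit_lt hv h' h.symm) id


lemma pow_one_add (ε : ℤ_[5]) (k : ℕ) : ∃ s, (1+ε)^k = 1 + k*ε + ε^2 * s := by
  induction k with
  | zero => exact ⟨0, by norm_num⟩
  | succ n ih =>
    rcases ih with ⟨s, hs⟩
    refine ⟨s + n + ε*s, ?_⟩
    rw [pow_succ, hs]; push_cast; ring

lemma exact_not5 {ε u : ℤ_[5]} {r : ℕ} (hε : ε = 5^r * u) (hu : IsUnit u) (hr : 1 ≤ r)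
    {k : ℕ} (hk : ¬ 5 ∣ k) : ∃ v, IsUnit v ∧ (1+ε)^k - 1 = 5^r * v := by
  obtain ⟨s, hs⟩ := pow_one_add ε k
  refine ⟨u * k + u * ε * s, ?_, ?_⟩
  · rw [unit_iff]
    intro hd
    have h5ε : (5:ℤ_[5]) ∣ ε := by
      rw [hε]; exact Dvd.dvd.mul_right (dvd_pow_self _ (by omega)) u
    have h1 : (5:ℤ_[5]) ∣ u * ε * s := ((h5ε.mul_left u).mul_right s)
    have h2 : (5:ℤ_[5]) ∣ u * k := by
      have := dvd_sub hd h1; simpa using this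
    have h3 : (5:ℤ_[5]) ∣ (k:ℤ_[5]) := (hu.dvd_mul_left).mp h2
    exact hk (natCast_dvd_iff.mp h3)
  · rw [hs, hε]; ring

lemma step5 {ε u : ℤ_[5]} {r : ℕ} (hε : ε = 5^r * u) (hu : IsUnit u) (hr : 1 ≤ r) :
    ∃ u', IsUnit u' ∧ (1+ε)^5 = 1 + 5^(r+1) * u' := by
  obtain ⟨r', rfl⟩ : ∃ r', r = r' + 1 := ⟨r-1, by omega⟩
  refine ⟨u + 5*(2*5^r'*u^2 + 2*5^(2*r'+1)*u^3 + 5^(3*r'+2)*u^4 + 5^(4*r'+2)*u^5), ?_, ?_⟩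
  · rw [unit_iff]
    intro hd
    have : (5:ℤ_[5]) ∣ u := by
      have h5 : (5:ℤ_[5]) ∣ 5*(2*5^r'*u^2 + 2*5^(2*r'+1)*u^3 + 5^(3*r'+2)*u^4 + 5^(4*r'+2)*u^5) :=
        Dvd.intro _ rfl
      have := dvd_sub hd h5
      simpa using this
    exact (unit_iff.mp hu) this
  · rw [hε]; ring

lemma exact_pow (s : ℕ) : ∀ {ε u : ℤ_[5]} {r : ℕ}, ε = 5^r*u → IsUnit u → 1 ≤ r →
    ∀ {k : ℕ}, ¬ 5 ∣ k → ∃ v, IsUnit v ∧ (1+ε)^(5^s*k) - 1 = 5^(r+s)*v := by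
  induction s with
  | zero =>
    intro ε u r hε hu hr k hk
    simpa using exact_not5 hε hu hr hk
  | succ s ih =>
    intro ε u r hε hu hr k hk
    obtain ⟨u', hu', h5⟩ := step5 hε hu hr
    obtain ⟨v, hv, hveq⟩ := ih (rfl : (5:ℤ_[5])^(r+1)*u' = 5^(r+1)*u') hu' (by omega) hk
    refine ⟨v, hv, ?_⟩
    have hexp : 5^(s+1)*k = 5*(5^s*k) := by ring
    have hexp2 : r + (s+1) = (r+1) + s := by omega
    rw [hexp, pow_mul, h5, hexp2]
    exact hveq

lemma exact_pow' {ε u : ℤ_[5]} {r : ℕ} (hε : ε = 5^r*u) (hu : IsUnit u) (hr : 1 ≤ r)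
    {k : ℕ} (hk : k ≠ 0) :
    ∃ v, IsUnit v ∧ (1+ε)^k - 1 = 5^(r + padicValNat 5 k)*v := by
  have hfac : 5^(padicValNat 5 k) * (k / 5^(padicValNat 5 k)) = k := by
    have := Nat.ordProj_mul_ordCompl_eq_self k 5
    rwa [Nat.factorization_def k (by norm_num)] at this
  have hnd : ¬ 5 ∣ (k / 5^(padicValNat 5 k)) := by
    have := Nat.not_dvd_ordCompl (by norm_num : Nat.Prime 5) hk
    rwa [Nat.factorization_def k (by norm_num)] at this
  obtain ⟨v, hv, hveq⟩ := exact_pow (padicValNat 5 k) hε hu hr hnd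
  refine ⟨v, hv, ?_⟩
  rw [hfac] at hveq
  exact hveq


noncomputable def cen (l a i : ℕ) (b : ℤ_[5]) : ℤ_[5] :=
  b + 5^(l+1)*(i:ℤ_[5]) + 5^(l+2)*(a:ℤ_[5])

lemma unit_one' : ¬ (5:ℤ_[5]) ∣ 1 := unit_iff.mp isUnit_one

lemma not_dvd_two : ¬ (5:ℤ_[5]) ∣ 2 := by
  rw [show (2:ℤ_[5]) = ((2:ℕ):ℤ_[5]) by norm_num, natCast_dvd_iff]; omega

lemma b_pow4 {J : ℤ_[5]} (hJ2 : J^2 = -1) {b : ℤ_[5]}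
    (hb : b ∈ ({1,-1,J,-J} : Set ℤ_[5])) : b^4 = 1 := by
  simp only [Set.mem_insert_iff, Set.mem_singleton_iff] at hb
  rcases hb with h | h | h | h <;> rw [h]
  · norm_num
  · norm_num
  · have e : J^4 = (J^2)^2 := by ring
    rw [e, hJ2]; norm_num
  · have e : (-J)^4 = (J^2)^2 := by ring
    rw [e, hJ2]; norm_num

lemma b_unit {b : ℤ_[5]} (hb4 : b^4 = 1) : IsUnit b :=
  IsUnit.of_mul_eq_one (a := b) (b^3) (by rw [show b*b^3 = b^4 by ring, hb4])

lemma b_not_dvd {b : ℤ_[5]} (hb4 : b^4 = 1) : ¬ (5:ℤ_[5]) ∣ b := by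
  intro h
  have h4 : (5:ℤ_[5]) ∣ b^4 := dvd_pow h (by norm_num)
  rw [hb4] at h4
  exact unit_one' h4

lemma b_diff_unit {J : ℤ_[5]} (hJ2 : J^2 = -1) {b b' : ℤ_[5]}
    (hb : b ∈ ({1,-1,J,-J} : Set ℤ_[5])) (hb' : b' ∈ ({1,-1,J,-J} : Set ℤ_[5]))
    (hne : b ≠ b') : ¬ (5:ℤ_[5]) ∣ (b - b') := by
  have hA : ¬ (5:ℤ_[5]) ∣ (1 - J) := by
    intro h
    apply not_dvd_two
    have h2 : (5:ℤ_[5]) ∣ (1-J)*(1+J) := h.mul_right _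
    rwa [show ((1:ℤ_[5])-J)*(1+J) = 1 - J^2 by ring, hJ2, show (1:ℤ_[5]) - -1 = 2 by ring] at h2
  have hB : ¬ (5:ℤ_[5]) ∣ (1 + J) := by
    intro h
    apply not_dvd_two
    have h2 : (5:ℤ_[5]) ∣ (1+J)*(1-J) := h.mul_right _
    rwa [show ((1:ℤ_[5])+J)*(1-J) = 1 - J^2 by ring, hJ2, show (1:ℤ_[5]) - -1 = 2 by ring] at h2
  have hC : ¬ (5:ℤ_[5]) ∣ (2*J) := by
    intro h
    apply not_dvd_two
    have h2 : (5:ℤ_[5]) ∣ (2*J)*(-J) := h.mul_right _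
    rwa [show ((2:ℤ_[5])*J)*(-J) = -2*J^2 by ring, hJ2, show (-2:ℤ_[5])*(-1) = 2 by ring] at h2
  simp only [Set.mem_insert_iff, Set.mem_singleton_iff] at hb hb'
  have negcase : ∀ z : ℤ_[5], ¬ (5:ℤ_[5]) ∣ z → ¬ (5:ℤ_[5]) ∣ (-z) := by
    intro z h hd; exact h (dvd_neg.mp hd)
  rcases hb with h | h | h | h <;> rcases hb' with h' | h' | h' | h' <;> rw [h, h']
  · exact absurd (h.trans h'.symm) hne
  · rw [show (1:ℤ_[5]) - -1 = 2 by ring]; exact not_dvd_two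
  · exact hA
  · rw [show (1:ℤ_[5]) - -J = 1 + J by ring]; exact hB
  · rw [show (-1:ℤ_[5]) - 1 = -2 by ring]; exact negcase _ not_dvd_two
  · exact absurd (h.trans h'.symm) hne
  · rw [show (-1:ℤ_[5]) - J = -(1+J) by ring]; exact negcase _ hB
  · rw [show (-1:ℤ_[5]) - -J = -(1-J) by ring]; exact negcase _ hA
  · rw [show J - (1:ℤ_[5]) = -(1-J) by ring]; exact negcase _ hA
  · rw [show J - (-1:ℤ_[5]) = 1+J by ring]; exact hB
  · exact absurd (h.trans h'.symm) hne
  · rw [show J - -J = 2*J by ring]; exact hC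
  · rw [show -J - (1:ℤ_[5]) = -(1+J) by ring]; exact negcase _ hB
  · rw [show -J - (-1:ℤ_[5]) = 1-J by ring]; exact hA
  · rw [show -J - J = -(2*J) by ring]; exact negcase _ hC
  · exact absurd (h.trans h'.symm) hne

lemma xsubb {t l a i : ℕ} {b x : ℤ_[5]} (ht1 : 1 ≤ t) (hi1 : 1 ≤ i) (hi4 : i ≤ 4)
    (hx : (5:ℤ_[5])^(t+l+1) ∣ x - cen l a i b) :
    ∃ U, IsUnit U ∧ x - b = 5^(l+1) * U := by
  obtain ⟨w, hw⟩ := hx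
  refine ⟨(i:ℤ_[5]) + 5*(a:ℤ_[5]) + 5^t * w, ?_, ?_⟩
  · rw [unit_iff]
    intro hd
    have h1 : (5:ℤ_[5]) ∣ 5*(a:ℤ_[5]) + 5^t*w :=
      dvd_add (Dvd.intro _ rfl) ((dvd_pow_self 5 (by omega)).mul_right w)
    have h5i : (5:ℤ_[5]) ∣ (i:ℤ_[5]) := by
      have h2 : ((i:ℤ_[5])) = ((i:ℤ_[5]) + 5*(a:ℤ_[5]) + 5^t*w) - (5*(a:ℤ_[5])+5^t*w) := by ring
      rw [h2]; exact dvd_sub hd h1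
    rw [natCast_dvd_iff] at h5i; omega
  · have h3 : x - b = (x - cen l a i b) + (cen l a i b - b) := by ring
    rw [h3, hw]
    unfold cen
    ring

lemma x_not_dvd {t l a i : ℕ} {b x : ℤ_[5]} (ht1 : 1 ≤ t) (hi1 : 1 ≤ i) (hi4 : i ≤ 4)
    (hb4 : b^4 = 1) (hx : (5:ℤ_[5])^(t+l+1) ∣ x - cen l a i b) :
    ¬ (5:ℤ_[5]) ∣ x := by
  obtain ⟨U, hU, hUeq⟩ := xsubb ht1 hi1 hi4 hx
  intro hd
  apply b_not_dvd hb4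
  have h1 : (5:ℤ_[5]) ∣ 5^(l+1)*U := ((dvd_pow_self 5 (by omega)).mul_right U)
  have h2 : b = x - 5^(l+1)*U := by rw [← hUeq]; ring
  rw [h2]; exact dvd_sub hd h1


lemma t_pos {m t : ℕ} (hm : 2 ≤ m) (hmod : m % 20 = 1) (ht : t = padicValNat 5 (m-1)) :
    1 ≤ t := by
  have h5 : 5 ∣ m - 1 := by omega
  have hne : m - 1 ≠ 0 := by omega
  subst ht
  have := (Nat.Prime.pow_dvd_iff_le_factorization (k := 1) (by norm_num : Nat.Prime 5) hne).mp
    (by rw [pow_one]; exact h5)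
  rwa [Nat.factorization_def _ (by norm_num : Nat.Prime 5)] at this

lemma md_mod4 {m : ℕ} (hmod : m % 20 = 1) (d : ℕ) : m^d % 4 = 1 := by
  have h4 : m % 4 = 1 := by omega
  rw [Nat.pow_mod, h4, one_pow]; norm_num

lemma b_pow_md {m : ℕ} (hmod : m % 20 = 1) {b : ℤ_[5]} (hb4 : b^4 = 1) (d : ℕ) :
    b^(m^d) = b := by
  have h := md_mod4 hmod d
  have h2 : m^d = 4*(m^d/4) + 1 := by omega
  rw [h2, pow_add, pow_mul, hb4, one_pow, pow_one, one_mul]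

lemma orbit_exact {m t : ℕ} (hm : 2 ≤ m) (hmod : m % 20 = 1)
    (ht : t = padicValNat 5 (m-1)) {l a i : ℕ} {b x : ℤ_[5]}
    (hi1 : 1 ≤ i) (hi4 : i ≤ 4) (hb4 : b^4 = 1)
    (hx : (5:ℤ_[5])^(t+l+1) ∣ x - cen l a i b) {d : ℕ} (hd : 1 ≤ d) :
    ∃ v, IsUnit v ∧ x^(m^d) - x = 5^(t+l+1+padicValNat 5 d) * v := by
  have ht1 : 1 ≤ t := t_pos hm hmod ht
  obtain ⟨U, hUu, hUeq⟩ := xsubb ht1 hi1 hi4 hx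
  have hxu : ¬ (5:ℤ_[5]) ∣ x := x_not_dvd ht1 hi1 hi4 hb4 hx
  have hbu : IsUnit b := b_unit hb4
  have hx' : x = b + 5^(l+1)*U := by
    have := hUeq; linear_combination this
  set ε : ℤ_[5] := 5^(l+1) * (U * b^3) with hεdef
  have hxe : x = b * (1+ε) := by
    rw [hx', hεdef]
    have e : b*(1+5^(l+1)*(U*b^3)) = b + 5^(l+1)*U*b^4 := by ring
    rw [e, hb4, mul_one]
  have hmd2 : 2 ≤ m^d := le_trans hm (Nat.le_self_pow (by omega) m)
  set K : ℕ := m^d - 1 with hKdef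
  have hK0 : K ≠ 0 := by omega
  have hKe : K + 1 = m^d := by omega
  have hν : padicValNat 5 K = t + padicValNat 5 d := by
    have hlte := padicValNat.pow_sub_pow (p := 5) (by decide)
      (by omega : (1:ℕ) < m) (by omega : 5 ∣ m - 1)
      (by omega : ¬ 5 ∣ m) (by omega : d ≠ 0)
    rw [one_pow] at hlte
    rw [hKdef, hlte, ht]
  obtain ⟨v, hv, heq⟩ := exact_pow' (rfl : ε = 5^(l+1)*(U*b^3))
    (hUu.mul (hbu.pow 3)) (by omega) hK0
  refine ⟨v * x, hv.mul (unit_iff.mpr hxu), ?_⟩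
  have hstep : x^(m^d) - x = x * ((1+ε)^K - 1) := by
    rw [hxe, mul_pow, b_pow_md hmod hb4 d, ← hKe, pow_succ]
    ring
  rw [hstep, heq, hν]
  have hexp : (l+1) + (t + padicValNat 5 d) = t+l+1+padicValNat 5 d := by omega
  rw [hexp]
  ring

lemma invariant {m t : ℕ} (hm : 2 ≤ m) (hmod : m % 20 = 1)
    (ht : t = padicValNat 5 (m-1)) {l a i : ℕ} {b x : ℤ_[5]}
    (hi1 : 1 ≤ i) (hi4 : i ≤ 4) (hb4 : b^4 = 1)
    (hx : (5:ℤ_[5])^(t+l+1) ∣ x - cen l a i b) :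
    (5:ℤ_[5])^(t+l+1) ∣ x^m - cen l a i b := by
  obtain ⟨v, hv, he⟩ := orbit_exact hm hmod ht hi1 hi4 hb4 hx (le_refl 1)
  rw [pow_one, padicValNat.one, add_zero] at he
  have h1 : x^m - cen l a i b = (x^m - x) + (x - cen l a i b) := by ring
  rw [h1]
  exact dvd_add ⟨v, he⟩ hx

lemma iterate_mem {m t : ℕ} (hm : 2 ≤ m) (hmod : m % 20 = 1)
    (ht : t = padicValNat 5 (m-1)) {l a i : ℕ} {b x : ℤ_[5]}
    (hi1 : 1 ≤ i) (hi4 : i ≤ 4) (hb4 : b^4 = 1)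
    (hx : (5:ℤ_[5])^(t+l+1) ∣ x - cen l a i b) (n : ℕ) :
    (5:ℤ_[5])^(t+l+1) ∣ x^(m^n) - cen l a i b := by
  induction n with
  | zero => simpa using hx
  | succ n ih =>
    have h := invariant hm hmod ht hi1 hi4 hb4 ih
    rwa [← pow_mul, ← pow_succ] at h


lemma disj_aux {t : ℕ} {J : ℤ_[5]} (hJ2 : J^2 = -1) (ht1 : 1 ≤ t)
    {l a i l' a' i' : ℕ} {b b' x : ℤ_[5]}
    (ha : a < 5^(t-1)) (ha' : a' < 5^(t-1))
    (hi1 : 1 ≤ i) (hi4 : i ≤ 4) (hi1' : 1 ≤ i') (hi4' : i' ≤ 4)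
    (hb : b ∈ ({1,-1,J,-J} : Set ℤ_[5])) (hb' : b' ∈ ({1,-1,J,-J} : Set ℤ_[5]))
    (hll : l ≤ l')
    (h1 : (5:ℤ_[5])^(t+l+1) ∣ x - cen l a i b)
    (h2 : (5:ℤ_[5])^(t+l'+1) ∣ x - cen l' a' i' b') :
    l = l' ∧ a = a' ∧ i = i' ∧ b = b' := by
  have h2' : (5:ℤ_[5])^(t+l+1) ∣ x - cen l' a' i' b' :=
    dvd_trans (pow_dvd_pow 5 (by omega)) h2
  have hcc : (5:ℤ_[5])^(t+l+1) ∣ cen l' a' i' b' - cen l a i b := by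
    have e : cen l' a' i' b' - cen l a i b = (x - cen l a i b) - (x - cen l' a' i' b') := by
      ring
    rw [e]; exact dvd_sub h1 h2'
  have h5cc : (5:ℤ_[5]) ∣ cen l' a' i' b' - cen l a i b :=
    dvd_trans (dvd_pow_self 5 (by omega)) hcc
  have hbb : b = b' := by
    by_contra hne
    apply b_diff_unit hJ2 hb' hb (Ne.symm hne)
    have e : b' - b = (cen l' a' i' b' - cen l a i b)
        - 5^(l'+1)*(i':ℤ_[5]) - 5^(l'+2)*(a':ℤ_[5])
        + 5^(l+1)*(i:ℤ_[5]) + 5^(l+2)*(a:ℤ_[5]) := by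
      unfold cen; ring
    rw [e]
    have hp : ∀ k : ℕ, 1 ≤ k → ∀ z : ℤ_[5], (5:ℤ_[5]) ∣ 5^k * z := by
      intro k hk z; exact (dvd_pow_self 5 (by omega)).mul_right z
    exact dvd_add (dvd_add (dvd_sub (dvd_sub h5cc (hp _ (by omega) _)) (hp _ (by omega) _))
      (hp _ (by omega) _)) (hp _ (by omega) _)
  subst hbb
  obtain ⟨e, rfl⟩ : ∃ e, l' = l + e := ⟨l'-l, by omega⟩
  set D : ℤ_[5] := (5:ℤ_[5])^e*((i':ℤ_[5])+5*(a':ℤ_[5])) - ((i:ℤ_[5])+5*(a:ℤ_[5])) with hDdef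
  have hD : cen (l+e) a' i' b - cen l a i b = 5^(l+1) * D := by
    rw [hDdef]; unfold cen; ring
  have hsplit : (5:ℤ_[5])^(t+l+1) = 5^(l+1) * 5^t := by
    rw [← pow_add]; congr 1; omega
  rw [hD, hsplit] at hcc
  have hDt : (5:ℤ_[5])^t ∣ D := (mul_dvd_mul_iff_left (pow_ne_zero _ five_ne)).mp hcc
  have h5D : (5:ℤ_[5]) ∣ D := dvd_trans (dvd_pow_self 5 (by omega)) hDt
  have he0 : e = 0 := by
    by_contra he
    have h5i : (5:ℤ_[5]) ∣ (i:ℤ_[5]) := by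
      have eq2 : (i:ℤ_[5]) = 5^e*((i':ℤ_[5])+5*(a':ℤ_[5])) - D - 5*(a:ℤ_[5]) := by
        rw [hDdef]; ring
      rw [eq2]
      exact dvd_sub (dvd_sub ((dvd_pow_self 5 (by omega)).mul_right _) h5D)
        (Dvd.intro _ rfl)
    rw [natCast_dvd_iff] at h5i; omega
  subst he0
  have hcast : D = (((i':ℤ) + 5*(a':ℤ) - (i:ℤ) - 5*(a:ℤ) : ℤ) : ℤ_[5]) := by
    rw [hDdef]; push_cast; ring
  rw [hcast] at hDt
  have hZ : (5:ℤ)^t ∣ ((i':ℤ) + 5*(a':ℤ) - (i:ℤ) - 5*(a:ℤ)) := intCast_pow_dvd_iff.mp hDt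
  obtain ⟨t₁, rfl⟩ : ∃ t₁, t = t₁ + 1 := ⟨t-1, by omega⟩
  have h5Z : (5:ℤ) ∣ ((i':ℤ) + 5*(a':ℤ) - (i:ℤ) - 5*(a:ℤ)) :=
    dvd_trans (dvd_pow_self 5 (by omega)) hZ
  obtain ⟨q, hq⟩ := h5Z
  have hii : i = i' := by omega
  subst hii
  have hZ' : (5:ℤ)^t₁ ∣ ((a':ℤ) - (a:ℤ)) := by
    have e2 : (i:ℤ) + 5*(a':ℤ) - (i:ℤ) - 5*(a:ℤ) = 5*((a':ℤ) - a) := by ring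
    rw [e2, pow_succ'] at hZ
    exact (mul_dvd_mul_iff_left (by norm_num : (5:ℤ) ≠ 0)).mp hZ
  have haa : a = a' := by
    by_contra hne
    have h0 : (a':ℤ) - a ≠ 0 := by
      intro h; apply hne; omega
    have hle := Int.le_of_dvd (abs_pos.mpr h0) ((dvd_abs _ _).mpr hZ')
    have hb1 : (a:ℤ) < 5^t₁ := by exact_mod_cast (by simpa using ha : a < 5^t₁)
    have hb2 : (a':ℤ) < 5^t₁ := by exact_mod_cast (by simpa using ha' : a' < 5^t₁)
    rcases abs_cases ((a':ℤ) - a) with ⟨heq, _⟩ | ⟨heq, _⟩ <;> omega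
  exact ⟨by omega, haa, rfl, rfl⟩

lemma clopen_ball (c : ℤ_[5]) (N : ℕ) :
    IsClopen {x : ℤ_[5] | (5:ℤ_[5])^N ∣ x - c} := by
  have hcont : Continuous (fun x : ℤ_[5] => x - c) := continuous_id.sub continuous_const
  constructor
  · have hrepr : {x : ℤ_[5] | (5:ℤ_[5])^N ∣ x - c}
        = (fun x => x - c) ⁻¹' {y : ℤ_[5] | ‖y‖ ≤ (5:ℝ)^(-(N:ℤ))} := by
      ext x
      simp only [Set.mem_setOf_eq, Set.mem_preimage]
      exact pow_dvd_iff_norm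
    rw [hrepr]
    exact (isClosed_le continuous_norm continuous_const).preimage hcont
  · have hrepr : {x : ℤ_[5] | (5:ℤ_[5])^N ∣ x - c}
        = (fun x => x - c) ⁻¹' {y : ℤ_[5] | ‖y‖ < (5:ℝ)^(-(N:ℤ)+1)} := by
      ext x
      simp only [Set.mem_setOf_eq, Set.mem_preimage]
      rw [pow_dvd_iff_norm, show ((5:ℝ)) = ((5:ℕ):ℝ) by norm_num,
        PadicInt.norm_le_pow_iff_norm_lt_pow_add_one]
    rw [hrepr]
    exact (isOpen_lt continuous_norm continuous_const).preimage hcont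


lemma pow5_dvd_of_mem_span {n : ℕ} {z : ℤ_[5]} (h : z ∈ Ideal.span {((5:ℕ):ℤ_[5])^n}) :
    (5:ℤ_[5])^n ∣ z := by
  rw [Ideal.mem_span_singleton, c5] at h
  exact h

lemma cover_aux {t : ℕ} {J : ℤ_[5]} (ht1 : 1 ≤ t) (hJ2 : J^2 = -1)
    (hJ5 : (5:ℤ_[5]) ∣ J - 2) {x : ℤ_[5]} (hx : ¬ (5:ℤ_[5]) ∣ x) :
    x ∈ ({1,-1,J,-J} : Set ℤ_[5]) ∨
    (∃ l a i, a < 5^(t-1) ∧ 1 ≤ i ∧ i ≤ 4 ∧ ∃ b ∈ ({1,-1,J,-J} : Set ℤ_[5]),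
      (5:ℤ_[5])^(t+l+1) ∣ x - cen l a i b) := by
  -- Step 1: find the fixed point b with x ≡ b mod 5
  have hspec := PadicInt.appr_spec 1 x
  set j := x.appr 1 with hjdef
  have hj : (5:ℤ_[5]) ∣ x - (j:ℤ_[5]) := by
    have := pow5_dvd_of_mem_span hspec
    rwa [pow_one] at this
  have hjlt : j < 5 := by
    have := PadicInt.appr_lt x 1
    simpa using this
  have hjnd : ¬ 5 ∣ j := by
    intro h5j
    apply hx
    have h1 : (5:ℤ_[5]) ∣ (j:ℤ_[5]) := natCast_dvd_iff.mpr h5j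
    have e : x = (x - (j:ℤ_[5])) + (j:ℤ_[5]) := by ring
    rw [e]; exact dvd_add hj h1
  have hb : ∃ b ∈ ({1,-1,J,-J} : Set ℤ_[5]), (5:ℤ_[5]) ∣ x - b := by
    interval_cases j
    · omega
    · exact ⟨1, by simp, by simpa using hj⟩
    · refine ⟨J, by simp, ?_⟩
      have e : x - J = (x - ((2:ℕ):ℤ_[5])) + (2 - J) := by push_cast; ring
      rw [e]
      refine dvd_add hj ?_
      rw [show (2:ℤ_[5]) - J = -(J-2) by ring]
      exact dvd_neg.mpr hJ5
    · refine ⟨-J, by simp, ?_⟩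
      have e : x - -J = (x - ((3:ℕ):ℤ_[5])) + ((J - 2) + 5) := by push_cast; ring
      rw [e]
      exact dvd_add hj (dvd_add hJ5 dvd_rfl)
    · refine ⟨-1, by simp, ?_⟩
      have e : x - -1 = (x - ((4:ℕ):ℤ_[5])) + 5 := by push_cast; ring
      rw [e]
      exact dvd_add hj dvd_rfl
  obtain ⟨b, hbS, hxb⟩ := hb
  rcases eq_or_ne x b with rfl | hne
  · exact Or.inl hbS
  · right
    have hd : x - b ≠ 0 := sub_ne_zero.mpr hne
    have hspec2 := PadicInt.unitCoeff_spec hd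
    set U : ℤ_[5] := (PadicInt.unitCoeff hd : ℤ_[5]) with hUdef
    have hUu : IsUnit U := (PadicInt.unitCoeff hd).isUnit
    have hxbU0 : x - b = U * 5^((x - b).valuation) := by
      rw [c5] at hspec2; exact hspec2
    have hn1 : 1 ≤ (x - b).valuation := by
      by_contra hn0
      have h0 : (x - b).valuation = 0 := by omega
      rw [h0, pow_zero, mul_one] at hxbU0
      rw [hxbU0] at hxb
      exact (unit_iff.mp hUu) hxb
    obtain ⟨l, hl⟩ : ∃ l, (x - b).valuation = l + 1 :=
      ⟨(x - b).valuation - 1, by omega⟩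
    have hxbU : x - b = U * 5^(l+1) := by rw [hxbU0, hl]
    set A := U.appr t with hAdef
    have hA5 : (5:ℤ_[5])^t ∣ U - (A:ℤ_[5]) := pow5_dvd_of_mem_span (PadicInt.appr_spec t U)
    have hAlt : A < 5^t := PadicInt.appr_lt U t
    have hAnd : ¬ 5 ∣ A := by
      intro h5A
      apply unit_iff.mp hUu
      have e : U = (U - (A:ℤ_[5])) + (A:ℤ_[5]) := by ring
      rw [e]
      exact dvd_add (dvd_trans (dvd_pow_self 5 (by omega)) hA5) (natCast_dvd_iff.mpr h5A)
    refine ⟨l, A / 5, A % 5, ?_, by omega, by omega, b, hbS, ?_⟩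
    · have hsp : (5:ℕ)^t = 5 * 5^(t-1) := by
        rw [← pow_succ']; congr 1; omega
      omega
    · have hiA : (A % 5) + 5 * (A / 5) = A := by omega
      have hc : x - cen l (A/5) (A%5) b = 5^(l+1) * (U - (A:ℤ_[5])) := by
        unfold cen
        have e1 : x - (b + 5^(l+1)*((A%5:ℕ):ℤ_[5]) + 5^(l+2)*((A/5:ℕ):ℤ_[5]))
            = (x - b) - 5^(l+1)*(((A%5:ℕ):ℤ_[5]) + 5*((A/5:ℕ):ℤ_[5])) := by ring
        have e2 : (((A%5:ℕ):ℤ_[5]) + 5*((A/5:ℕ):ℤ_[5])) = (A:ℤ_[5]) := by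
          conv_rhs => rw [← hiA]
          push_cast; ring
        rw [e1, e2, hxbU]; ring
      rw [hc, show (5:ℤ_[5])^(t+l+1) = 5^(l+1)*5^t by rw [← pow_add]; congr 1; omega]
      exact mul_dvd_mul_left _ hA5


lemma pow_real_le {k k' : ℕ} (h : k ≤ k') : ((1:ℝ)/5)^k' ≤ ((1:ℝ)/5)^k :=
  pow_le_pow_of_le_one (by norm_num) (by norm_num) h

lemma norm_le_of_dvd {N : ℕ} {z : ℤ_[5]} (h : (5:ℤ_[5])^N ∣ z) : ‖z‖ ≤ ((1:ℝ)/5)^N := by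
  have := pow_dvd_iff_norm.mp h
  rwa [show ((5:ℝ))^(-(N:ℤ)) = ((1:ℝ)/5)^N by
    rw [zpow_neg, zpow_natCast, one_div, inv_pow]] at this

lemma density {m t : ℕ} (hm : 2 ≤ m) (hmod : m % 20 = 1)
    (ht : t = padicValNat 5 (m-1)) {l a i : ℕ} {b x y : ℤ_[5]}
    (hi1 : 1 ≤ i) (hi4 : i ≤ 4) (hb4 : b^4 = 1)
    (hx : (5:ℤ_[5])^(t+l+1) ∣ x - cen l a i b)
    (hy : (5:ℤ_[5])^(t+l+1) ∣ y - cen l a i b) :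
    y ∈ closure (Set.range fun n : ℕ => x ^ m ^ n) := by
  rw [Metric.mem_closure_iff]
  intro ε hε
  obtain ⟨s, hs⟩ : ∃ s:ℕ, ((1:ℝ)/5)^s < ε := exists_pow_lt_of_lt_one hε (by norm_num)
  set N := t + l + 1 with hN
  -- the orbit points and their quotients
  have hmem : ∀ n : ℕ, (5:ℤ_[5])^N ∣ x^(m^n) - cen l a i b :=
    fun n => iterate_mem hm hmod ht hi1 hi4 hb4 hx n
  set q : ℕ → ℤ_[5] := fun n => Classical.choose (hmem n) with hqdef
  have hq : ∀ n, x^(m^n) - cen l a i b = 5^N * q n :=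
    fun n => Classical.choose_spec (hmem n)
  obtain ⟨qy, hqy⟩ := hy
  haveI : NeZero ((5:ℕ)^s) := ⟨by positivity⟩
  set F : Fin (5^s) → ZMod (5^s) := fun n => PadicInt.toZModPow s (q n) with hFdef
  have kerlem : ∀ z w : ℤ_[5], PadicInt.toZModPow s z = PadicInt.toZModPow s w →
      (5:ℤ_[5])^s ∣ z - w := by
    intro z w hzw
    have hker : z - w ∈ RingHom.ker (PadicInt.toZModPow (p := 5) s) := by
      rw [RingHom.mem_ker, map_sub, hzw, sub_self]
    rw [PadicInt.ker_toZModPow] at hker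
    exact pow5_dvd_of_mem_span hker
  have horb : ∀ n n' : ℕ, n < n' → n' < 5^s →
      ¬ (5:ℤ_[5])^(N+s) ∣ x^(m^n') - x^(m^n) := by
    intro n n' hlt hup hdvd
    set d := n' - n with hddef
    have hd1 : 1 ≤ d := by omega
    obtain ⟨v, hv, hveq⟩ := orbit_exact hm hmod ht hi1 hi4 hb4 (hmem n) hd1
    have hzz : (x^(m^n))^(m^d) = x^(m^n') := by
      rw [← pow_mul, ← pow_add]
      congr 1
      congr 1
      omega
    rw [hzz] at hveq
    have hνd : padicValNat 5 d < s := by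
      by_contra hge
      have h1 : (5:ℕ)^s ∣ d :=
        dvd_trans (pow_dvd_pow 5 (by omega)) pow_padicValNat_dvd
      have := Nat.le_of_dvd (by omega) h1
      omega
    rw [hveq] at hdvd
    have hsplit : (5:ℤ_[5])^(N+s) = 5^(N+padicValNat 5 d) * 5^(s - padicValNat 5 d) := by
      rw [← pow_add]; congr 1; omega
    rw [hsplit] at hdvd
    have hvd : (5:ℤ_[5])^(s - padicValNat 5 d) ∣ v :=
      (mul_dvd_mul_iff_left (pow_ne_zero _ five_ne)).mp hdvd
    have h5v : (5:ℤ_[5]) ∣ v := dvd_trans (dvd_pow_self 5 (by omega)) hvd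
    exact (unit_iff.mp hv) h5v
  have hinj : Function.Injective F := by
    intro n n' hEq
    by_contra hne
    have hne' : (n:ℕ) ≠ (n':ℕ) := fun h => hne (Fin.ext h)
    rcases lt_or_gt_of_ne hne' with hlt | hlt
    · apply horb n n' hlt n'.isLt
      have h5q : (5:ℤ_[5])^s ∣ q n' - q n := kerlem _ _ hEq.symm
      have e : x^(m^(n':ℕ)) - x^(m^(n:ℕ)) = 5^N * (q n' - q n) := by
        have e2 : x^(m^(n':ℕ)) - x^(m^(n:ℕ))
            = (x^(m^(n':ℕ)) - cen l a i b) - (x^(m^(n:ℕ)) - cen l a i b) := by ring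
        rw [e2, hq, hq]; ring
      rw [e, pow_add]
      exact mul_dvd_mul_left _ h5q
    · apply horb n' n hlt n.isLt
      have h5q : (5:ℤ_[5])^s ∣ q n - q n' := kerlem _ _ hEq
      have e : x^(m^(n:ℕ)) - x^(m^(n':ℕ)) = 5^N * (q n - q n') := by
        have e2 : x^(m^(n:ℕ)) - x^(m^(n':ℕ))
            = (x^(m^(n:ℕ)) - cen l a i b) - (x^(m^(n':ℕ)) - cen l a i b) := by ring
        rw [e2, hq, hq]; ring
      rw [e, pow_add]
      exact mul_dvd_mul_left _ h5q
  have hbij : Function.Bijective F := by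
    rw [Fintype.bijective_iff_injective_and_card]
    exact ⟨hinj, by simp [ZMod.card]⟩
  obtain ⟨n, hn⟩ := hbij.surjective (PadicInt.toZModPow s qy)
  refine ⟨x^(m^(n:ℕ)), ⟨(n:ℕ), rfl⟩, ?_⟩
  have h5q : (5:ℤ_[5])^s ∣ q n - qy := kerlem _ _ hn
  have hdvd : (5:ℤ_[5])^(N+s) ∣ y - x^(m^(n:ℕ)) := by
    have e : y - x^(m^(n:ℕ)) = -(5^N * (q n - qy)) := by
      have e2 : y - x^(m^(n:ℕ))
          = (y - cen l a i b) - (x^(m^(n:ℕ)) - cen l a i b) := by ring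
      rw [e2, hq, hqy]; ring
    rw [e, pow_add]
    exact dvd_neg.mpr (mul_dvd_mul_left _ h5q)
  rw [dist_eq_norm]
  calc ‖y - x^(m^(n:ℕ))‖ ≤ ((1:ℝ)/5)^(N+s) := norm_le_of_dvd hdvd
  _ ≤ ((1:ℝ)/5)^s := pow_real_le (by omega)
  _ < ε := hs


theorem main_aux (m : ℕ) (hm : 2 ≤ m) (hmod : m % 20 = 1)
    (t : ℕ) (ht : t = padicValNat 5 (m - 1))
    (J : ℤ_[5]) (hJ2 : J ^ 2 = -1) (hJ5 : (5 : ℤ_[5]) ∣ J - 2)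
    (M : ℕ → ℕ → ℕ → ℤ_[5] → Set ℤ_[5])
    (hM : ∀ l a i b, M l a i b =
      {x : ℤ_[5] | (5 : ℤ_[5]) ^ (t + l + 1) ∣
        x - (b + 5 ^ (l + 1) * (i : ℤ_[5]) + 5 ^ (l + 2) * (a : ℤ_[5]))}) :
    (∀ l a i (b : ℤ_[5]) l' a' i' (b' : ℤ_[5]),
      a < 5 ^ (t - 1) → a' < 5 ^ (t - 1) → 1 ≤ i → i ≤ 4 → 1 ≤ i' → i' ≤ 4 →
      b ∈ ({1, -1, J, -J} : Set ℤ_[5]) → b' ∈ ({1, -1, J, -J} : Set ℤ_[5]) →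
      (l, a, i, b) ≠ (l', a', i', b') → Disjoint (M l a i b) (M l' a' i' b')) ∧
    (∀ l a i (b : ℤ_[5]), a < 5 ^ (t - 1) → 1 ≤ i → i ≤ 4 →
      b ∈ ({1, -1, J, -J} : Set ℤ_[5]) →
      IsClopen (M l a i b) ∧
      (∀ x ∈ M l a i b, x ^ m ∈ M l a i b) ∧
      (∀ x ∈ M l a i b, M l a i b ⊆ closure (Set.range fun n : ℕ => x ^ m ^ n))) ∧
    ((⋃ l : ℕ, ⋃ a ∈ Finset.range (5 ^ (t - 1)), ⋃ i ∈ Finset.Icc 1 4,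
        ⋃ b ∈ ({1, -1, J, -J} : Set ℤ_[5]), M l a i b)
        ∪ {1, -1, J, -J} = {x : ℤ_[5] | ¬ (5 : ℤ_[5]) ∣ x}) := by
  have ht1 : 1 ≤ t := t_pos hm hmod ht
  have hM' : ∀ l a i (b : ℤ_[5]), M l a i b
      = {x : ℤ_[5] | (5:ℤ_[5])^(t+l+1) ∣ x - cen l a i b} := by
    intro l a i b; rw [hM]; rfl
  refine ⟨?_, ?_, ?_⟩
  · -- disjointness
    intro l a i b l' a' i' b' ha ha' hi1 hi4 hi1' hi4' hb hb' hne
    rw [Set.disjoint_left]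
    intro x hx1 hx2
    simp only [hM', Set.mem_setOf_eq] at hx1 hx2
    rcases le_total l l' with hll | hll
    · obtain ⟨h1, h2, h3, h4⟩ :=
        disj_aux hJ2 ht1 ha ha' hi1 hi4 hi1' hi4' hb hb' hll hx1 hx2
      exact hne (by rw [h1, h2, h3, h4])
    · obtain ⟨h1, h2, h3, h4⟩ :=
        disj_aux hJ2 ht1 ha' ha hi1' hi4' hi1 hi4 hb' hb hll hx2 hx1
      exact hne (by rw [h1, h2, h3, h4])
  · -- clopen, invariance, minimality
    intro l a i b ha hi1 hi4 hb
    have hb4 := b_pow4 hJ2 hb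
    refine ⟨?_, ?_, ?_⟩
    · rw [hM']; exact clopen_ball _ _
    · intro x hx
      simp only [hM', Set.mem_setOf_eq] at hx ⊢
      exact invariant hm hmod ht hi1 hi4 hb4 hx
    · intro x hx y hy
      simp only [hM', Set.mem_setOf_eq] at hx hy
      exact density hm hmod ht hi1 hi4 hb4 hx hy
  · -- covering
    ext x
    simp only [Set.mem_union, Set.mem_iUnion, Set.mem_setOf_eq, exists_prop,
      Finset.mem_range, Finset.mem_Icc]
    constructor
    · rintro (⟨l, a, ha, i, ⟨hi1, hi4⟩, b, hbS, hxM⟩ | hxS)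
      · simp only [hM', Set.mem_setOf_eq] at hxM
        exact x_not_dvd ht1 hi1 hi4 (b_pow4 hJ2 hbS) hxM
      · exact b_not_dvd (b_pow4 hJ2 hxS)
    · intro hx
      rcases cover_aux ht1 hJ2 hJ5 hx with hxS | ⟨l, a, i, ha, hi1, hi4, b, hbS, hdvd⟩
      · exact Or.inr hxS
      · refine Or.inl ⟨l, a, ha, i, ⟨hi1, hi4⟩, b, hbS, ?_⟩
        simp only [hM', Set.mem_setOf_eq]
        exact hdvd

end MZ5


/-- Minimal decomposition for `x ↦ x^m` on `ℤ_5` with `m ≡ 1 (mod 20)`: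
the sets `M_{l,a,i,b} = b + 5^(l+1)i + 5^(l+2)a + 5^(t+l+1)ℤ_5`, for
`b ∈ {1, -1, 𝕚, -𝕚}`, are pairwise disjoint clopen minimal components, and together
with `{1, -1, 𝕚, -𝕚}` they cover exactly the 5-adic units. -/
theorem monomial_Z5_one_mod_twenty_decomposition (m : ℕ) (hm : 2 ≤ m) (hmod : m % 20 = 1)
    (t : ℕ) (ht : t = padicValNat 5 (m - 1))
    (I : ℤ_[5]) (hI2 : I ^ 2 = -1) (hI5 : (5 : ℤ_[5]) ∣ I - 2)
    (M : ℕ → ℕ → ℕ → ℤ_[5] → Set ℤ_[5])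
    (hM : ∀ l a i b, M l a i b =
      {x : ℤ_[5] | (5 : ℤ_[5]) ^ (t + l + 1) ∣
        x - (b + 5 ^ (l + 1) * (i : ℤ_[5]) + 5 ^ (l + 2) * (a : ℤ_[5]))}) :
    (∀ l a i (b : ℤ_[5]) l' a' i' (b' : ℤ_[5]),
      a < 5 ^ (t - 1) → a' < 5 ^ (t - 1) → 1 ≤ i → i ≤ 4 → 1 ≤ i' → i' ≤ 4 →
      b ∈ ({1, -1, I, -I} : Set ℤ_[5]) → b' ∈ ({1, -1, I, -I} : Set ℤ_[5]) →
      (l, a, i, b) ≠ (l', a', i', b') → Disjoint (M l a i b) (M l' a' i' b')) ∧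
    (∀ l a i (b : ℤ_[5]), a < 5 ^ (t - 1) → 1 ≤ i → i ≤ 4 →
      b ∈ ({1, -1, I, -I} : Set ℤ_[5]) →
      IsClopen (M l a i b) ∧
      (∀ x ∈ M l a i b, x ^ m ∈ M l a i b) ∧
      (∀ x ∈ M l a i b, M l a i b ⊆ closure (Set.range fun n : ℕ => x ^ m ^ n))) ∧
    ((⋃ l : ℕ, ⋃ a ∈ Finset.range (5 ^ (t - 1)), ⋃ i ∈ Finset.Icc 1 4,
        ⋃ b ∈ ({1, -1, I, -I} : Set ℤ_[5]), M l a i b)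
        ∪ {1, -1, I, -I} = {x : ℤ_[5] | ¬ (5 : ℤ_[5]) ∣ x}) := by
  exact MZ5.main_aux m hm hmod t ht _ hI2 hI5 M hM
end

section
/- Let m ≥ 2 be an integer with m ≡ 6 (mod 10), let f(x) = x^m on ℤ_5, and let t = ν_5(m − 1). For each integer l ≥ 0, each i ∈ {1, 2, 3, 4}, and each a ∈ {0, 1, …, 5^(t−1) − 1}, set M_{l,a,i} = 1 + 5^(l+1)·i + 5^(l+2)·a + 5^(t+l+1)ℤ_5. Then the sets M_{l,a,i} are pairwise disjoint clopen subsets of ℤ_5, each M_{l,a,i} is a minimal component of f (f(M_{l,a,i}) ⊆ M_{l,a,i} and every forward orbit of f in M_{l,a,i} is dense in M_{l,a,i}), the union of all the M_{l,a,i} together with {1} equals the ball 1 + 5ℤ_5, and moreover for every 5-adic unit x (i.e., x ∉ 5ℤ_5) the second iterate satisfies x^(m²) ∈ 1 + 5ℤ_5. -/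
open Filter Topology

lemma five_cast : ((5:ℕ):ℤ_[5]) = 5 := by norm_cast
lemma dvd_iff_norm0 (k : ℕ) (z : ℤ_[5]) :
    (5:ℤ_[5])^k ∣ z ↔ ‖z‖ ≤ ((5:ℕ):ℝ)^(-(k:ℤ)) := by
  rw [PadicInt.norm_le_pow_iff_mem_span_pow, Ideal.mem_span_singleton, five_cast]

lemma intCast_dvd (k : ℕ) (z : ℤ) : (5:ℤ_[5])^k ∣ (z:ℤ_[5]) ↔ (5^k:ℤ) ∣ z := by
  rw [dvd_iff_norm0, PadicInt.norm_int_le_pow_iff_dvd]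
  norm_cast

lemma natCast_dvd (k N : ℕ) : (5:ℤ_[5])^k ∣ (N:ℤ_[5]) ↔ 5^k ∣ N := by
  rw [show ((N:ℤ_[5])) = ((N:ℤ):ℤ_[5]) by push_cast; ring, intCast_dvd]
  constructor
  · intro h
    exact_mod_cast h
  · intro h
    exact_mod_cast h

lemma isUnit_of_not_dvd {u : ℤ_[5]} (h : ¬ (5:ℤ_[5]) ∣ u) : IsUnit u := by
  rw [PadicInt.isUnit_iff]
  have h1 : ¬ ‖u‖ < 1 := by rwa [PadicInt.norm_lt_one_iff_dvd, five_cast]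
  have h2 := PadicInt.norm_le_one u
  linarith [lt_or_eq_of_le h2 |>.resolve_left h1]

def E (e : ℕ) (z : ℤ_[5]) : Prop := (5:ℤ_[5])^e ∣ z ∧ ¬ (5:ℤ_[5])^(e+1) ∣ z

lemma not_dvd_one : ¬ (5:ℤ_[5]) ∣ 1 := by
  have := (natCast_dvd 1 1); simp at this; simpa using this

lemma five_ne_zero : (5:ℤ_[5]) ≠ 0 := by
  intro h
  have : ‖(5:ℤ_[5])‖ = ((5:ℕ):ℝ)⁻¹ := by rw [← five_cast]; exact PadicInt.norm_p
  rw [h, norm_zero] at this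
  norm_num at this

lemma E_iff_unit (e : ℕ) (z : ℤ_[5]) : E e z ↔ ∃ u, IsUnit u ∧ z = 5^e * u := by
  constructor
  · rintro ⟨⟨w, hw⟩, h2⟩
    refine ⟨w, ?_, hw⟩
    apply isUnit_of_not_dvd
    rintro ⟨v, hv⟩
    exact h2 ⟨v, by rw [hw, hv]; ring⟩
  · rintro ⟨u, hu, rfl⟩
    refine ⟨Dvd.intro u rfl, ?_⟩
    rintro ⟨v, hv⟩
    have h5 : (5:ℤ_[5])^e ≠ 0 := pow_ne_zero _ five_ne_zero
    have : u = 5 * v := by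
      apply mul_left_cancel₀ h5
      rw [hv]; ring
    exact not_dvd_one (dvd_trans ⟨v, this⟩ hu.dvd)

lemma E_mul {a b : ℕ} {u v : ℤ_[5]} (ha : E a u) (hb : E b v) : E (a+b) (u*v) := by
  rw [E_iff_unit] at *
  obtain ⟨u1, hu1, rfl⟩ := ha
  obtain ⟨v1, hv1, rfl⟩ := hb
  exact ⟨u1 * v1, hu1.mul hv1, by ring⟩

lemma E_unique {a b : ℕ} {z : ℤ_[5]} (ha : E a z) (hb : E b z) : a = b := by
  by_contra hne
  rcases Nat.lt_or_ge a b with h | h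
  · exact ha.2 (dvd_trans (pow_dvd_pow 5 h) hb.1)
  · have : a ≠ b := hne
    have hlt : b < a := lt_of_le_of_ne h (Ne.symm this)
    exact hb.2 (dvd_trans (pow_dvd_pow 5 hlt) ha.1)

lemma geom_sum_not_dvd {x : ℤ_[5]} (hx : (5:ℤ_[5]) ∣ x - 1) {q : ℕ} (hq : ¬ 5 ∣ q) :
    ¬ (5:ℤ_[5]) ∣ ∑ i ∈ Finset.range q, x^i := by
  intro h
  have key : (5:ℤ_[5]) ∣ (q : ℤ_[5]) := by
    have h2 : (5:ℤ_[5]) ∣ (∑ i ∈ Finset.range q, x^i) - q := by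
      have : (∑ i ∈ Finset.range q, x^i) - q = ∑ i ∈ Finset.range q, (x^i - 1) := by
        rw [Finset.sum_sub_distrib]; simp
      rw [this]
      apply Finset.dvd_sum
      intro i _
      exact dvd_trans hx (by simpa using sub_dvd_pow_sub_pow x 1 i)
    have := dvd_sub h h2
    simpa using this
  rw [show ((5:ℤ_[5])) = (5:ℤ_[5])^1 by ring, natCast_dvd] at key
  simpa using hq key

lemma E_unit_mul {e : ℕ} {u z : ℤ_[5]} (hu : IsUnit u) (hz : E e z) : E e (u * z) := by
  rw [E_iff_unit] at *
  obtain ⟨v, hv, rfl⟩ := hz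
  exact ⟨u * v, hu.mul hv, by ring⟩

lemma step5_dvd {x : ℤ_[5]} {e : ℕ} (he : 1 ≤ e) (h : (5:ℤ_[5])^e ∣ x - 1) :
    (5:ℤ_[5])^(e+1) ∣ x^5 - 1 := by
  have key : x^5 - 1 = (x-1) * 5 + (x-1)^2 * (x^3+2*x^2+3*x+4) := by ring
  rw [key]
  apply dvd_add
  · rw [pow_succ]
    exact mul_dvd_mul h dvd_rfl
  · calc (5:ℤ_[5])^(e+1) ∣ (5:ℤ_[5])^(2*e) := pow_dvd_pow 5 (by omega)
    _ ∣ (x-1)^2 * (x^3+2*x^2+3*x+4) := by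
        rw [show 2*e = e + e by ring, pow_add, sq]
        exact dvd_mul_of_dvd_left (mul_dvd_mul h h) _

lemma step5_E {x : ℤ_[5]} {e : ℕ} (he : 1 ≤ e) (h : E e (x - 1)) : E (e+1) (x^5 - 1) := by
  have h5 : (5:ℤ_[5]) ∣ x - 1 := dvd_trans (by simpa using pow_dvd_pow (5:ℤ_[5]) he) h.1
  have key : x^5 - 1 = (x-1) * (5 + (x-1) * (x^3+2*x^2+3*x+4)) := by ring
  have hP : (5:ℤ_[5]) ∣ (x^3+2*x^2+3*x+4) := by
    have : (x^3+2*x^2+3*x+4) = 10 + (x-1)*(x^2+3*x+6) := by ring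
    rw [this]
    exact dvd_add ⟨2, by norm_num⟩ (dvd_mul_of_dvd_left h5 _)
  have hS : E 1 (5 + (x-1) * (x^3+2*x^2+3*x+4)) := by
    constructor
    · rw [pow_one]
      exact dvd_add dvd_rfl (dvd_mul_of_dvd_left h5 _)
    · intro hc
      have h25 : (5:ℤ_[5])^2 ∣ (x-1) * (x^3+2*x^2+3*x+4) := by
        rw [sq]; exact mul_dvd_mul h5 hP
      have hd5 : (5:ℤ_[5])^2 ∣ (5:ℤ_[5]) := by
        have := dvd_sub hc h25
        simpa using this
      have h5' : (5:ℤ_[5])^2 ∣ ((5:ℕ):ℤ_[5]) := by rw [five_cast]; exact hd5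
      rw [natCast_dvd] at h5'
      norm_num at h5'
  rw [key]
  exact E_mul h hS

lemma coprime_E {x : ℤ_[5]} {e : ℕ} (he : 1 ≤ e) (h : E e (x - 1)) {q : ℕ}
    (hq0 : 0 < q) (hq : ¬ 5 ∣ q) : E e (x^q - 1) := by
  have h5 : (5:ℤ_[5]) ∣ x - 1 := dvd_trans (by simpa using pow_dvd_pow (5:ℤ_[5]) he) h.1
  have hG := geom_sum_not_dvd h5 hq
  have := E_unit_mul (isUnit_of_not_dvd hG) h
  rwa [geom_sum_mul] at this

lemma pow5_E {x : ℤ_[5]} {e : ℕ} (he : 1 ≤ e) (h : E e (x - 1)) (s : ℕ) :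
    E (e+s) (x^(5^s) - 1) := by
  induction s with
  | zero => simpa using h
  | succ n ih =>
      have : x^(5^(n+1)) = (x^(5^n))^5 := by rw [← pow_mul, pow_succ]
      rw [this, show e+(n+1) = (e+n)+1 by ring]
      exact step5_E (by omega) ih

lemma lte_E {x : ℤ_[5]} {e : ℕ} (he : 1 ≤ e) (h : E e (x - 1)) {d : ℕ} (hd : 0 < d) :
    E (e + padicValNat 5 d) (x^d - 1) := by
  have hp5 : Nat.Prime 5 := by norm_num
  set s := padicValNat 5 d with hs
  have hfac : d.factorization 5 = s := Nat.factorization_def d hp5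
  have hdd : 5^s * (d / 5^s) = d := by
    have := Nat.ordProj_mul_ordCompl_eq_self d 5
    rwa [hfac] at this
  have hq : ¬ 5 ∣ (d / 5^s) := by
    have := Nat.not_dvd_ordCompl hp5 hd.ne'
    rwa [hfac] at this
  have hq0 : 0 < d / 5^s := by
    have := Nat.ordCompl_pos 5 hd.ne'
    rwa [hfac] at this
  have : x^d = (x^(5^s))^(d / 5^s) := by rw [← pow_mul, hdd]
  rw [this]
  exact coprime_E (by omega) (pow5_E he h s) hq0 hq

lemma lte_dvd {x : ℤ_[5]} {e : ℕ} (he : 1 ≤ e) (h : (5:ℤ_[5])^e ∣ x - 1) {d s : ℕ}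
    (hd : 5^s ∣ d) : (5:ℤ_[5])^(e+s) ∣ x^d - 1 := by
  induction s generalizing e d x with
  | zero =>
      have : x^d - 1 = (∑ i ∈ Finset.range d, x^i) * (x - 1) := (geom_sum_mul x d).symm
      rw [this]
      simpa using dvd_mul_of_dvd_right h _
  | succ n ih =>
      have h5d : 5 ∣ d := dvd_trans (dvd_pow_self 5 (Nat.succ_ne_zero n)) hd
      have hd' : 5^n ∣ d / 5 := by
        rcases hd with ⟨c, rfl⟩
        refine ⟨c, ?_⟩
        have h2 : 5^(n+1)*c = 5*(5^n*c) := by ring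
        rw [h2, Nat.mul_div_cancel_left _ (by norm_num : 0 < 5)]
      have hx5 : x^d = (x^5)^(d/5) := by
        rw [← pow_mul, Nat.mul_div_cancel' h5d]
      rw [hx5, show e+(n+1) = (e+1)+n by ring]
      exact ih (by omega) (step5_dvd he h) hd'

lemma nat_E {N : ℕ} (hN : N ≠ 0) : E (padicValNat 5 N) ((N:ℕ):ℤ_[5]) := by
  constructor
  · rw [natCast_dvd]
    exact pow_padicValNat_dvd
  · rw [natCast_dvd]
    exact pow_succ_padicValNat_not_dvd hN

lemma nat_E_unique {N v : ℕ} (hN : N ≠ 0) (h : E v ((N:ℕ):ℤ_[5])) : padicValNat 5 N = v :=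
  E_unique (nat_E hN) h

lemma dvd_iff_norm' (k : ℕ) (z : ℤ_[5]) :
    (5:ℤ_[5])^k ∣ z ↔ ‖z‖ ≤ ((5:ℕ):ℝ)^(-(k:ℤ)) := by
  rw [PadicInt.norm_le_pow_iff_mem_span_pow, Ideal.mem_span_singleton, five_cast]

lemma isClopen_ball (c : ℤ_[5]) (K : ℕ) :
    IsClopen {x : ℤ_[5] | (5:ℤ_[5])^K ∣ x - c} := by
  constructor
  · have : {x : ℤ_[5] | (5:ℤ_[5])^K ∣ x - c} = Metric.closedBall c (((5:ℕ):ℝ)^(-(K:ℤ))) := by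
      ext x
      rw [Metric.mem_closedBall, dist_eq_norm, Set.mem_setOf_eq, dvd_iff_norm']
    rw [this]
    exact Metric.isClosed_closedBall
  · have : {x : ℤ_[5] | (5:ℤ_[5])^K ∣ x - c} = Metric.ball c (((5:ℕ):ℝ)^(-(K:ℤ)+1)) := by
      ext x
      rw [Metric.mem_ball, dist_eq_norm, Set.mem_setOf_eq, dvd_iff_norm',
        PadicInt.norm_le_pow_iff_norm_lt_pow_add_one]
    rw [this]
    exact Metric.isOpen_ball

lemma piKer (k : ℕ) (u v : ℤ_[5]) :
    PadicInt.toZModPow k u = PadicInt.toZModPow k v ↔ (5:ℤ_[5])^k ∣ u - v := by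
  rw [← sub_eq_zero, ← map_sub, ← RingHom.mem_ker, PadicInt.ker_toZModPow,
    Ideal.mem_span_singleton, five_cast]

lemma memE {x : ℤ_[5]} {t l a i : ℕ} (ht1 : 1 ≤ t) (hi1 : 1 ≤ i) (hi4 : i ≤ 4)
    (hxc : (5:ℤ_[5])^(t+l+1) ∣ x - (1 + 5^(l+1)*(i:ℤ_[5]) + 5^(l+2)*(a:ℤ_[5]))) :
    E (l+1) (x - 1) := by
  set c : ℤ_[5] := 1 + 5^(l+1)*(i:ℤ_[5]) + 5^(l+2)*(a:ℤ_[5]) with hc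
  have hc1 : c - 1 = 5^(l+1) * ((i:ℤ_[5]) + 5*(a:ℤ_[5])) := by rw [hc]; ring
  have hxc' : (5:ℤ_[5])^(l+2) ∣ x - c := dvd_trans (pow_dvd_pow 5 (by omega)) hxc
  have h5i : ¬ (5:ℤ_[5]) ∣ ((i:ℤ_[5]) + 5*(a:ℤ_[5])) := by
    intro h
    have : (5:ℤ_[5]) ∣ (i:ℤ_[5]) := by
      have := dvd_sub h (Dvd.intro (a:ℤ_[5]) rfl)
      simpa using this
    rw [show ((5:ℤ_[5])) = (5:ℤ_[5])^1 by ring, natCast_dvd] at this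
    omega
  constructor
  · have : x - 1 = (x - c) + (c - 1) := by ring
    rw [this, hc1]
    exact dvd_add (dvd_trans (pow_dvd_pow 5 (by omega)) hxc) (Dvd.intro _ rfl)
  · intro hcon
    have hdc : (5:ℤ_[5])^(l+2) ∣ c - 1 := by
      have : c - 1 = (x - 1) - (x - c) := by ring
      rw [this]
      exact dvd_sub hcon hxc'
    rw [hc1, show l+2 = (l+1)+1 by ring, pow_succ] at hdc
    exact h5i ((mul_dvd_mul_iff_left (pow_ne_zero (l+1) five_ne_zero)).mp hdc)

lemma hmE {m t : ℕ} (hm : 2 ≤ m) (hmod : m % 10 = 6) (ht : t = padicValNat 5 (m-1)) :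
    E t ((m:ℤ_[5]) - 1) := by
  have h := nat_E (N := m - 1) (by omega)
  rwa [Nat.cast_sub (by omega), Nat.cast_one, ← ht] at h

lemma ht1 {m t : ℕ} (hm : 2 ≤ m) (hmod : m % 10 = 6) (ht : t = padicValNat 5 (m-1)) :
    1 ≤ t := by
  by_contra h
  have h0 : t = 0 := by omega
  have := hmE hm hmod ht
  rw [h0] at this
  have h5 : (5:ℤ_[5]) ∣ (m:ℤ_[5]) - 1 := by
    have : ((m - 1 : ℕ) : ℤ_[5]) = (m:ℤ_[5]) - 1 := by
      rw [Nat.cast_sub (by omega), Nat.cast_one]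
    rw [← this, show ((5:ℤ_[5])) = (5:ℤ_[5])^1 by ring, natCast_dvd]
    omega
  exact this.2 (by simpa using h5)

lemma val_pow_sub_one {m t : ℕ} (hm : 2 ≤ m) (hmod : m % 10 = 6)
    (ht : t = padicValNat 5 (m-1)) {Δ : ℕ} (hΔ : 0 < Δ) :
    padicValNat 5 (m^Δ - 1) = t + padicValNat 5 Δ := by
  have hE := lte_E (ht1 hm hmod ht) (hmE hm hmod ht) hΔ
  have hcast : ((m^Δ - 1 : ℕ) : ℤ_[5]) = (m:ℤ_[5])^Δ - 1 := by
    have h1 : 1 ≤ m^Δ := Nat.one_le_pow _ _ (by omega)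
    push_cast [Nat.cast_sub h1]
    ring
  apply nat_E_unique
  · have : 2 ≤ m^Δ := by
      calc 2 = 2^1 := by norm_num
      _ ≤ m^Δ := Nat.pow_le_pow_left (by omega) 1 |>.trans (Nat.pow_le_pow_right (by omega) hΔ)
    omega
  · rwa [hcast]

lemma val_d {m t : ℕ} (hm : 2 ≤ m) (hmod : m % 10 = 6) (ht : t = padicValNat 5 (m-1))
    {n n' : ℕ} (h : n' < n) :
    padicValNat 5 (m^n - m^n') = t + padicValNat 5 (n - n') := by
  have hp5 : Nat.Prime 5 := by norm_num
  have hm5 : ¬ 5 ∣ m := by omega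
  have hd : m^n - m^n' = m^n' * (m^(n-n') - 1) := by
    have h1 : m^n = m^n' * m^(n-n') := by rw [← pow_add]; congr 1; omega
    have h2 : m^n' * (m^(n-n') - 1) = m^n' * m^(n-n') - m^n' * 1 := Nat.mul_sub _ _ _
    omega
  rw [hd, padicValNat.mul (pow_ne_zero _ (by omega)) ?hne]
  case hne =>
    have : 2 ≤ m^(n-n') := by
      calc 2 = 2^1 := by norm_num
      _ ≤ m^(n-n') := Nat.pow_le_pow_left (by omega) 1 |>.trans
          (Nat.pow_le_pow_right (by omega) (by omega))
    omega
  rw [padicValNat.eq_zero_of_not_dvd (fun hc => hm5 (hp5.dvd_of_dvd_pow hc)),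
    val_pow_sub_one hm hmod ht (by omega), zero_add]

lemma orbit_key {m t l : ℕ} (hm : 2 ≤ m) (hmod : m % 10 = 6) (ht : t = padicValNat 5 (m-1))
    {x y : ℤ_[5]} (hEx : E (l+1) (x-1)) (hxy : (5:ℤ_[5])^(t+l+1) ∣ y - x)
    {k : ℕ} (hk : t+l+1 ≤ k) :
    ∃ n : ℕ, (5:ℤ_[5])^k ∣ x^(m^n) - y := by
  haveI : NeZero (5^k) := ⟨pow_ne_zero _ (by norm_num)⟩
  set K0 := t+l+1 with hK0
  set r := k - K0 with hr
  have hkr : K0 + r = k := by omega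
  set π : ℤ_[5] →+* ZMod (5^k) := PadicInt.toZModPow k with hπ
  have hπ5 : π 5 = 5 := by
    rw [← five_cast, map_natCast]
    norm_num
  -- representation lemma
  have hrep : ∀ z : ℤ_[5], (5:ℤ_[5])^K0 ∣ z - x →
      ∃ w : Fin (5^r), π z = π x + 5^K0 * ((w:ℕ) : ZMod (5^k)) := by
    intro z hz
    obtain ⟨d, hd⟩ := hz
    have hw0 : (((π d).val : ℕ) : ZMod (5^k)) = π d := ZMod.natCast_rightInverse _
    refine ⟨⟨(π d).val % 5^r, Nat.mod_lt _ (by positivity)⟩, ?_⟩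
    have h1 : π z = π x + π (z - x) := by rw [map_sub]; ring
    rw [h1, hd, map_mul, map_pow, hπ5]
    congr 1
    set w0 := (π d).val with hw0def
    have hzero : ((5:ZMod (5^k)))^K0 * (5:ZMod (5^k))^r = 0 := by
      rw [← pow_add, hkr]
      have : ((5^k : ℕ) : ZMod (5^k)) = 0 := ZMod.natCast_self _
      push_cast at this
      exact this
    have hsplit : 5^r * (w0 / 5^r) + w0 % 5^r = w0 := Nat.div_add_mod w0 (5^r)
    have hπd : π d = ((5^r * (w0 / 5^r) + w0 % 5^r : ℕ) : ZMod (5^k)) := by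
      rw [hsplit, hw0]
    rw [hπd]
    push_cast
    linear_combination ((w0 / 5^r : ℕ) : ZMod (5^k)) * hzero
  -- injectivity
  have hxu : IsUnit x := by
    apply isUnit_of_not_dvd
    intro h
    have h1 : (5:ℤ_[5]) ∣ x - 1 := dvd_trans (by simpa using pow_dvd_pow (5:ℤ_[5]) (Nat.one_le_iff_ne_zero.mpr (Nat.succ_ne_zero l))) hEx.1
    have : (5:ℤ_[5]) ∣ 1 := by
      have := dvd_sub h h1
      simpa using this
    exact not_dvd_one this
  have hinj0 : ∀ n n' : ℕ, n' < n → n < 5^r →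
      π (x^(m^n)) = π (x^(m^n')) → False := by
    intro n n' hlt hn hπeq
    have hdvd : (5:ℤ_[5])^k ∣ x^(m^n) - x^(m^n') := (piKer k _ _).mp hπeq
    have hmle : m^n' ≤ m^n := Nat.pow_le_pow_right (by omega) (by omega)
    set d := m^n - m^n' with hdd
    have hd0 : 0 < d := by
      have : m^n' < m^n := Nat.pow_lt_pow_right (by omega) hlt
      omega
    have hsplit : x^(m^n) - x^(m^n') = x^(m^n') * (x^d - 1) := by
      rw [show m^n = m^n' + d by omega, pow_add]
      ring
    rw [hsplit] at hdvd
    have hdvd2 : (5:ℤ_[5])^k ∣ x^d - 1 := by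
      obtain ⟨u, hu⟩ := hxu.pow (m^n')
      obtain ⟨v, hv⟩ := hdvd
      refine ⟨(u⁻¹ : ℤ_[5]ˣ) * v, ?_⟩
      calc x^d - 1 = (u⁻¹ : ℤ_[5]ˣ) * (x^(m^n') * (x^d - 1)) := by
            rw [← hu, ← mul_assoc, Units.inv_mul, one_mul]
      _ = 5^k * ((u⁻¹ : ℤ_[5]ˣ) * v) := by rw [hv]; ring
    have hval : padicValNat 5 d = t + padicValNat 5 (n - n') := val_d hm hmod ht hlt
    have hE2 := lte_E (Nat.le_add_left 1 l) hEx hd0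
    rw [hval] at hE2
    have hvlt : padicValNat 5 (n - n') < r := by
      have h1 : 5^(padicValNat 5 (n-n')) ∣ (n - n') := pow_padicValNat_dvd
      have h2 : 5^(padicValNat 5 (n-n')) ≤ n - n' := Nat.le_of_dvd (by omega) h1
      have h3 : n - n' < 5^r := by
        calc n - n' ≤ n := Nat.sub_le _ _
        _ < 5^r := hn
      by_contra hc
      have : 5^r ≤ 5^(padicValNat 5 (n-n')) := Nat.pow_le_pow_right (by norm_num) (by omega)
      omega
    exact hE2.2 (dvd_trans (pow_dvd_pow 5 (by omega)) hdvd2)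
  have hinj : Function.Injective (fun n : Fin (5^r) => π (x^(m^(n:ℕ)))) := by
    intro n n' h
    rcases lt_trichotomy (n:ℕ) (n':ℕ) with hc | hc | hc
    · exact (hinj0 _ _ hc n'.isLt h.symm).elim
    · exact Fin.ext hc
    · exact (hinj0 _ _ hc n.isLt h).elim
  -- range condition
  have hrange : ∀ n : ℕ, (5:ℤ_[5])^K0 ∣ x^(m^n) - x := by
    intro n
    rcases Nat.eq_zero_or_pos n with rfl | hn
    · simp
    · have h1 : 1 ≤ m^n := Nat.one_le_pow _ _ (by omega)
      have hsplit : x^(m^n) - x = x * (x^(m^n - 1) - 1) := by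
        have hpow : x^(m^n) = x^(m^n - 1) * x := by
          rw [← pow_succ]
          congr 1
          omega
        rw [hpow]
        ring
      rw [hsplit]
      apply dvd_mul_of_dvd_right
      have h5t : 5^t ∣ m^n - 1 := by
        have hm1 : 5^t ∣ m - 1 := by
          rw [ht]
          exact pow_padicValNat_dvd
        have hdvd := Nat.sub_dvd_pow_sub_pow m 1 n
        simp only [one_pow] at hdvd
        exact hm1.trans hdvd
      have := lte_dvd (Nat.le_add_left 1 l) hEx.1 h5t
      exact dvd_trans (pow_dvd_pow 5 (by omega)) this
  -- counting
  classical
  set φ : Fin (5^r) → ZMod (5^k) := fun n => π (x^(m^(n:ℕ))) with hφ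
  set ψ : Fin (5^r) → ZMod (5^k) := fun w => π x + 5^K0 * ((w:ℕ) : ZMod (5^k)) with hψ
  set A : Finset (ZMod (5^k)) := Finset.image φ Finset.univ with hA
  set B : Finset (ZMod (5^k)) := Finset.image ψ Finset.univ with hB
  have hAB : A ⊆ B := by
    intro z hz
    rw [hA, Finset.mem_image] at hz
    obtain ⟨n, _, rfl⟩ := hz
    obtain ⟨w, hw⟩ := hrep (x^(m^(n:ℕ))) (hrange (n:ℕ))
    rw [hB, Finset.mem_image]
    exact ⟨w, Finset.mem_univ _, hw.symm⟩
  have hcardA : A.card = 5^r := by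
    rw [hA, Finset.card_image_of_injective _ hinj, Finset.card_univ, Fintype.card_fin]
  have hcardB : B.card ≤ 5^r := by
    calc B.card ≤ Finset.univ.card := Finset.card_image_le
    _ = 5^r := by rw [Finset.card_univ, Fintype.card_fin]
  have hBA : A = B := Finset.eq_of_subset_of_card_le hAB (by omega)
  obtain ⟨wy, hwy⟩ := hrep y hxy
  have hyB : π y ∈ B := by
    rw [hB, Finset.mem_image]
    exact ⟨wy, Finset.mem_univ _, hwy.symm⟩
  rw [← hBA, hA, Finset.mem_image] at hyB
  obtain ⟨n, _, hn⟩ := hyB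
  exact ⟨(n:ℕ), (piKer k _ _).mp hn⟩

lemma mem_closure_orbit {y : ℤ_[5]} {f : ℕ → ℤ_[5]}
    (h : ∀ k, ∃ n : ℕ, (5:ℤ_[5])^k ∣ f n - y) : y ∈ closure (Set.range f) := by
  rw [Metric.mem_closure_iff]
  intro ε hε
  obtain ⟨k, hk⟩ := exists_pow_lt_of_lt_one hε (by norm_num : (1/5:ℝ) < 1)
  obtain ⟨n, hn⟩ := h k
  refine ⟨f n, ⟨n, rfl⟩, ?_⟩
  have hdvd : (5:ℤ_[5])^k ∣ y - f n := by
    have := hn.neg_right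
    simpa using this
  have hnorm : ‖y - f n‖ ≤ ((5:ℕ):ℝ)^(-(k:ℤ)) := (dvd_iff_norm' k _).mp hdvd
  have heq : ((5:ℕ):ℝ)^(-(k:ℤ)) = (1/5:ℝ)^k := by
    rw [zpow_neg, zpow_natCast]
    push_cast
    rw [one_div, inv_pow]
  rw [dist_eq_norm]
  calc ‖y - f n‖ ≤ ((5:ℕ):ℝ)^(-(k:ℤ)) := hnorm
  _ = (1/5:ℝ)^k := heq
  _ < ε := hk

lemma dvd_iff_toZMod_eq_zero (z : ℤ_[5]) : PadicInt.toZMod z = 0 ↔ (5:ℤ_[5]) ∣ z := by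
  rw [← RingHom.mem_ker, PadicInt.ker_toZMod, PadicInt.maximalIdeal_eq_span_p,
    Ideal.mem_span_singleton, five_cast]

lemma part4 {m : ℕ} (hm : 2 ≤ m) (hmod : m % 10 = 6) {x : ℤ_[5]}
    (hx : ¬ (5:ℤ_[5]) ∣ x) : (5:ℤ_[5]) ∣ x^(m^2) - 1 := by
  have h4 : m^2 = 4 * ((m/2)^2) := by
    have h2 : m = 2*(m/2) := by omega
    calc m^2 = (2*(m/2))^2 := by rw [← h2]
    _ = 4 * ((m/2)^2) := by ring
  have hx4 : (5:ℤ_[5]) ∣ x^4 - 1 := by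
    rw [← dvd_iff_toZMod_eq_zero]
    have hπx : PadicInt.toZMod x ≠ 0 := by
      rw [Ne, dvd_iff_toZMod_eq_zero]
      exact hx
    have : (PadicInt.toZMod x)^4 = 1 := by
      have := ZMod.pow_card_sub_one_eq_one hπx
      norm_num at this
      exact this
    rw [map_sub, map_pow, map_one, this, sub_self]
  calc (5:ℤ_[5]) ∣ x^4 - 1 := hx4
  _ ∣ (x^4)^((m/2)^2) - 1 := by
      have := sub_dvd_pow_sub_pow (x^4) 1 ((m/2)^2)
      simpa using this
  _ = x^(m^2) - 1 := by rw [← pow_mul, ← h4]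

lemma cover_mem {t : ℕ} (ht1 : 1 ≤ t) {x : ℤ_[5]} (hx5 : (5:ℤ_[5]) ∣ x - 1) (hx1 : x ≠ 1) :
    ∃ l a i : ℕ, a < 5^(t-1) ∧ 1 ≤ i ∧ i ≤ 4 ∧
      (5:ℤ_[5])^(t+l+1) ∣ x - (1 + 5^(l+1)*(i:ℤ_[5]) + 5^(l+2)*(a:ℤ_[5])) := by
  haveI : NeZero (5^t) := ⟨pow_ne_zero _ (by norm_num)⟩
  have hz : x - 1 ≠ 0 := sub_ne_zero.mpr hx1
  set u : ℤ_[5] := (PadicInt.unitCoeff hz : ℤ_[5]) with hu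
  set v : ℕ := (PadicInt.valuation (x-1)) with hv
  have hspec : x - 1 = u * 5^v := by
    have := PadicInt.unitCoeff_spec hz
    rw [← five_cast]
    exact this
  have huu : IsUnit u := (PadicInt.unitCoeff hz).isUnit
  have hudvd : ¬ (5:ℤ_[5]) ∣ u := by
    intro h
    exact not_dvd_one (h.trans huu.dvd)
  have hv1 : 1 ≤ v := by
    by_contra h
    have hv0 : v = 0 := by omega
    rw [hv0, pow_zero, mul_one] at hspec
    exact hudvd (hspec ▸ hx5)
  set N : ℕ := (PadicInt.toZModPow t u).val with hN
  have hNlt : N < 5^t := ZMod.val_lt _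
  have hNdvd : (5:ℤ_[5])^t ∣ u - (N:ℤ_[5]) := by
    rw [← piKer]
    rw [map_natCast]
    exact (ZMod.natCast_rightInverse _).symm
  have h5N : ¬ 5 ∣ N := by
    intro h
    apply hudvd
    have h1 : (5:ℤ_[5]) ∣ (N:ℤ_[5]) := by
      rw [show ((5:ℤ_[5])) = (5:ℤ_[5])^1 by ring, natCast_dvd]
      simpa using h
    have h2 : (5:ℤ_[5]) ∣ u - N := dvd_trans (by simpa using pow_dvd_pow (5:ℤ_[5]) ht1) hNdvd
    have h3 := dvd_add h2 h1
    rwa [sub_add_cancel] at h3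
  refine ⟨v - 1, N / 5, N % 5, ?_, by omega, by omega, ?_⟩
  · have h5t : 5^t = 5^(t-1) * 5 := by
      rw [← pow_succ]
      congr 1
      omega
    rw [Nat.div_lt_iff_lt_mul (by norm_num)]
    omega
  · have hNi : ((N % 5 : ℕ):ℤ_[5]) + 5*((N / 5 : ℕ):ℤ_[5]) = (N:ℤ_[5]) := by
      have hsum : (N % 5) + 5 * (N / 5) = N := by omega
      conv_rhs => rw [← hsum]
      push_cast
      ring
    have hkey : x - (1 + 5^(v-1+1)*((N % 5 : ℕ):ℤ_[5]) + 5^(v-1+2)*((N / 5 : ℕ):ℤ_[5]))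
        = 5^v * (u - (N:ℤ_[5])) := by
      have hvv : v - 1 + 1 = v := by omega
      have hvv2 : v - 1 + 2 = v + 1 := by omega
      rw [hvv, hvv2]
      have : x - 1 = u * 5^v := hspec
      calc x - (1 + 5^v*((N % 5 : ℕ):ℤ_[5]) + 5^(v+1)*((N / 5 : ℕ):ℤ_[5]))
          = (x - 1) - 5^v * (((N % 5 : ℕ):ℤ_[5]) + 5*((N / 5 : ℕ):ℤ_[5])) := by ring
      _ = u * 5^v - 5^v * (N:ℤ_[5]) := by rw [hspec, hNi]
      _ = 5^v * (u - (N:ℤ_[5])) := by ring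
    rw [hkey, show t + (v-1) + 1 = v + t by omega, pow_add]
    exact mul_dvd_mul dvd_rfl hNdvd


/-- Minimal decomposition for `x ↦ x^m` on `ℤ_5` with `m ≡ 6 (mod 10)`:
the sets `M_{l,a,i} = 1 + 5^(l+1)i + 5^(l+2)a + 5^(t+l+1)ℤ_5` are pairwise disjoint
clopen minimal components, together with `{1}` they cover exactly the ball `1 + 5ℤ_5`,
and for every 5-adic unit `x` the second iterate `x^(m²)` lies in `1 + 5ℤ_5`. -/
theorem monomial_Z5_six_mod_ten_decomposition (m : ℕ) (hm : 2 ≤ m) (hmod : m % 10 = 6)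
    (t : ℕ) (ht : t = padicValNat 5 (m - 1))
    (M : ℕ → ℕ → ℕ → Set ℤ_[5])
    (hM : ∀ l a i, M l a i =
      {x : ℤ_[5] | (5 : ℤ_[5]) ^ (t + l + 1) ∣
        x - (1 + 5 ^ (l + 1) * (i : ℤ_[5]) + 5 ^ (l + 2) * (a : ℤ_[5]))}) :
    (∀ l a i l' a' i',
      a < 5 ^ (t - 1) → a' < 5 ^ (t - 1) → 1 ≤ i → i ≤ 4 → 1 ≤ i' → i' ≤ 4 →
      (l, a, i) ≠ (l', a', i') → Disjoint (M l a i) (M l' a' i')) ∧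
    (∀ l a i, a < 5 ^ (t - 1) → 1 ≤ i → i ≤ 4 →
      IsClopen (M l a i) ∧
      (∀ x ∈ M l a i, x ^ m ∈ M l a i) ∧
      (∀ x ∈ M l a i, M l a i ⊆ closure (Set.range fun n : ℕ => x ^ m ^ n))) ∧
    ((⋃ l : ℕ, ⋃ a ∈ Finset.range (5 ^ (t - 1)), ⋃ i ∈ Finset.Icc 1 4, M l a i)
        ∪ {1} = {x : ℤ_[5] | (5 : ℤ_[5]) ∣ x - 1}) ∧
    (∀ x : ℤ_[5], ¬ (5 : ℤ_[5]) ∣ x → (5 : ℤ_[5]) ∣ x ^ m ^ 2 - 1) := by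
  have hT1 : 1 ≤ t := ht1 hm hmod ht
  refine ⟨?_, ?_, ?_, fun x hx => part4 hm hmod hx⟩
  · -- disjointness
    intro l a i l' a' i' ha ha' hi1 hi4 hi1' hi4' hne
    rw [Set.disjoint_left]
    intro z hz hz'
    rw [hM] at hz hz'
    simp only [Set.mem_setOf_eq] at hz hz'
    have hE1 := memE hT1 hi1 hi4 hz
    have hE2 := memE hT1 hi1' hi4' hz'
    have hll : l = l' := by have := E_unique hE1 hE2; omega
    subst hll
    have hcc : (5:ℤ_[5])^(t+l+1) ∣
        ((1 + 5^(l+1)*(i':ℤ_[5]) + 5^(l+2)*(a':ℤ_[5]))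
          - (1 + 5^(l+1)*(i:ℤ_[5]) + 5^(l+2)*(a:ℤ_[5]))) := by
      have hs := dvd_sub hz hz'
      have heq : (z - (1 + 5^(l+1)*(i:ℤ_[5]) + 5^(l+2)*(a:ℤ_[5])))
          - (z - (1 + 5^(l+1)*(i':ℤ_[5]) + 5^(l+2)*(a':ℤ_[5])))
          = (1 + 5^(l+1)*(i':ℤ_[5]) + 5^(l+2)*(a':ℤ_[5]))
            - (1 + 5^(l+1)*(i:ℤ_[5]) + 5^(l+2)*(a:ℤ_[5])) := by ring
      rwa [heq] at hs
    have hfact : ((1 + 5^(l+1)*(i':ℤ_[5]) + 5^(l+2)*(a':ℤ_[5]))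
          - (1 + 5^(l+1)*(i:ℤ_[5]) + 5^(l+2)*(a:ℤ_[5])))
        = 5^(l+1) * ((((i':ℤ) - i + 5*((a':ℤ) - a)) : ℤ) : ℤ_[5]) := by
      push_cast
      ring
    rw [hfact, show t+l+1 = (l+1)+t by omega, pow_add] at hcc
    have hdvd : (5:ℤ_[5])^t ∣ ((((i':ℤ) - i + 5*((a':ℤ) - a)) : ℤ) : ℤ_[5]) :=
      (mul_dvd_mul_iff_left (pow_ne_zero (l+1) five_ne_zero)).mp hcc
    rw [intCast_dvd] at hdvd
    have h5 : (5:ℤ) ∣ ((i':ℤ) - i + 5*((a':ℤ) - a)) :=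
      dvd_trans (by exact_mod_cast dvd_pow_self (5:ℤ) (by omega : t ≠ 0)) hdvd
    have hii : i = i' := by omega
    subst hii
    have ha5 : (5^t : ℤ) ∣ 5*((a':ℤ) - a) := by
      have heq : ((i:ℤ) - i + 5*((a':ℤ) - a)) = 5*((a':ℤ) - a) := by ring
      rwa [heq] at hdvd
    have hdvd2 : (5^(t-1):ℤ) ∣ ((a':ℤ) - a) := by
      have h5t : (5^t :ℤ) = 5 * 5^(t-1) := by
        rw [← pow_succ']
        congr 1
        omega
      rw [h5t] at ha5
      exact (mul_dvd_mul_iff_left (by norm_num : (5:ℤ) ≠ 0)).mp ha5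
    have haa : a = a' := by
      have h0 : (a':ℤ) - a = 0 := by
        apply Int.eq_zero_of_abs_lt_dvd hdvd2
        have b1 : (a:ℤ) < 5^(t-1) := by exact_mod_cast ha
        have b2 : (a':ℤ) < 5^(t-1) := by exact_mod_cast ha'
        rw [abs_lt]
        constructor <;> omega
      omega
    exact hne (by simp [haa])
  · -- clopen, invariant, minimal
    intro l a i ha hi1 hi4
    refine ⟨by rw [hM]; exact isClopen_ball _ _, ?_, ?_⟩
    · intro x hx
      rw [hM] at hx ⊢
      simp only [Set.mem_setOf_eq] at hx ⊢
      have hEx := memE hT1 hi1 hi4 hx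
      have h5t : 5^t ∣ m - 1 := ht ▸ pow_padicValNat_dvd
      have hinv : (5:ℤ_[5])^(t+l+1) ∣ x^m - x := by
        have hid : x^m - x = x * (x^(m-1) - 1) := by
          have hp : x^m = x^(m-1) * x := by
            rw [← pow_succ]
            congr 1
            omega
          rw [hp]
          ring
        rw [hid]
        exact dvd_mul_of_dvd_right
          (dvd_trans (pow_dvd_pow 5 (by omega)) (lte_dvd (by omega) hEx.1 h5t)) _
      have hsum := dvd_add hinv hx
      have heq : x^m - x + (x - (1 + 5^(l+1)*(i:ℤ_[5]) + 5^(l+2)*(a:ℤ_[5])))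
          = x^m - (1 + 5^(l+1)*(i:ℤ_[5]) + 5^(l+2)*(a:ℤ_[5])) := by ring
      rwa [heq] at hsum
    · intro x hx y hy
      rw [hM] at hx hy
      simp only [Set.mem_setOf_eq] at hx hy
      have hEx := memE hT1 hi1 hi4 hx
      have hxy : (5:ℤ_[5])^(t+l+1) ∣ y - x := by
        have hs := dvd_sub hy hx
        have heq : (y - (1 + 5^(l+1)*(i:ℤ_[5]) + 5^(l+2)*(a:ℤ_[5])))
            - (x - (1 + 5^(l+1)*(i:ℤ_[5]) + 5^(l+2)*(a:ℤ_[5]))) = y - x := by ring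
        rwa [heq] at hs
      apply mem_closure_orbit
      intro k
      obtain ⟨n, hn⟩ := orbit_key hm hmod ht hEx hxy (k := max k (t+l+1)) (le_max_right _ _)
      exact ⟨n, dvd_trans (pow_dvd_pow 5 (le_max_left _ _)) hn⟩
  · -- cover
    ext x
    simp only [Set.mem_union, Set.mem_iUnion, Set.mem_setOf_eq, Set.mem_singleton_iff,
      Finset.mem_range, Finset.mem_Icc, exists_prop]
    constructor
    · rintro (⟨l, a, ha, i, hii, hx⟩ | rfl)
      · rw [hM] at hx
        have hEx := memE hT1 hii.1 hii.2 hx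
        exact dvd_trans (by simpa using pow_dvd_pow (5:ℤ_[5]) (show 1 ≤ l+1 by omega)) hEx.1
      · simp
    · intro hx5
      by_cases hx1 : x = 1
      · right
        exact hx1
      · left
        obtain ⟨l, a, i, ha, hi1, hi4, hdvd⟩ := cover_mem hT1 hx5 hx1
        exact ⟨l, a, ha, i, ⟨hi1, hi4⟩, by rw [hM]; exact hdvd⟩
end

section
/- Let m ≥ 2 be an integer with m ≡ 4 (mod 10), let f(x) = x^m on ℤ_5, and let t = ν_5(m + 1). For each integer l ≥ 0, each i ∈ {1, 2}, and each a ∈ {0, 1, …, 5^(t−1) − 1}, let x₀ = 1 + 5^(l+1)·i + 5^(l+2)·a (a 5-adic unit, with inverse x₀⁻¹ in ℤ_5) and set M_{l,a,i} = (x₀ + 5^(t+l+1)ℤ_5) ∪ (x₀⁻¹ + 5^(t+l+1)ℤ_5). Then the sets M_{l,a,i} are pairwise disjoint clopen subsets of ℤ_5, each M_{l,a,i} is a minimal component of f (f(M_{l,a,i}) ⊆ M_{l,a,i} and every forward orbit of f in M_{l,a,i} is dense in M_{l,a,i}), the union of all the M_{l,a,i} together with {1} equals the ball 1 + 5ℤ_5,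 and moreover for every 5-adic unit x (i.e., x ∉ 5ℤ_5) the second iterate satisfies x^(m²) ∈ 1 + 5ℤ_5. -/
open Filter Topology

namespace Monomial5

lemma five_ne_zero : (5:ℤ_[5]) ≠ 0 := by
  have : ((5:ℕ) : ℤ_[5]) ≠ 0 := Nat.cast_ne_zero.mpr (by norm_num)
  simpa using this

lemma unit_iff {z : ℤ_[5]} : IsUnit z ↔ ¬ (5:ℤ_[5]) ∣ z := by
  have h5 : ((5:ℕ):ℤ_[5]) = 5 := by norm_num
  have hd := PadicInt.norm_lt_one_iff_dvd z
  rw [h5] at hd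
  rw [PadicInt.isUnit_iff, ← hd]
  constructor
  · intro h h'; rw [h] at h'; exact lt_irrefl _ h'
  · intro h; exact le_antisymm (PadicInt.norm_le_one z) (not_lt.mp h)

lemma dvd_int_iff (n : ℕ) (a : ℤ) : (5:ℤ_[5])^n ∣ (a:ℤ_[5]) ↔ (5:ℤ)^n ∣ a := by
  simpa using PadicInt.pow_p_dvd_int_iff (p := 5) n a

lemma dvd_nat_iff (n : ℕ) (a : ℕ) : (5:ℤ_[5])^n ∣ (a:ℤ_[5]) ↔ 5^n ∣ a := by
  have := dvd_int_iff n (a : ℤ)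
  simp only [Int.cast_natCast] at this
  rw [this, Int.natCast_dvd_natCast (m := 5^n) (n := a) |>.symm]
  norm_cast

lemma isUnit_one_add (w : ℤ_[5]) : IsUnit (1 + 5*w) := by
  rw [unit_iff]
  intro h
  have : (5:ℤ_[5]) ∣ 1 := (dvd_add_right ⟨w, rfl⟩).mp (by rwa [add_comm] at h)
  have h1 : (5:ℤ_[5])^1 ∣ ((1:ℕ):ℤ_[5]) := by simpa using this
  rw [dvd_nat_iff] at h1; omega

lemma isUnit_add_mul {u : ℤ_[5]} (w : ℤ_[5]) (hu : IsUnit u) : IsUnit (u + 5*w) := by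
  obtain ⟨v, rfl⟩ := hu
  have : (v:ℤ_[5]) + 5*w = v * (1 + 5*((↑v⁻¹:ℤ_[5])*w)) := by
    rw [mul_add, mul_one]
    congr 1
    rw [← mul_assoc, mul_comm (v:ℤ_[5]) 5, mul_assoc, Units.mul_inv_cancel_left]
  rw [this]
  exact (Units.isUnit v).mul (isUnit_one_add _)


lemma pow_five_sub_one (z : ℤ_[5]) (hz : (5:ℤ_[5]) ∣ z - 1) :
    ∃ v, IsUnit v ∧ z^5 - 1 = (z - 1) * 5 * v := by
  obtain ⟨c, hc⟩ := hz
  have hzc : z = 1 + 5*c := by rw [← hc]; ring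
  refine ⟨1 + 5*(2*c + 10*c^2 + 25*c^3 + 25*c^4), isUnit_one_add _, ?_⟩
  subst hzc; ring

/-- Lifting the exponent, witness form. -/
lemma lte (z : ℤ_[5]) (hz : (5:ℤ_[5]) ∣ z - 1) (N : ℕ) :
    ∃ v, IsUnit v ∧ z^N - 1 = (z - 1) * N * v := by
  induction N using Nat.strong_induction_on generalizing z with
  | _ N ih =>
  rcases Nat.eq_zero_or_pos N with h0 | hpos
  · exact ⟨1, isUnit_one, by simp [h0]⟩
  by_cases h5 : 5 ∣ N
  · obtain ⟨M, rfl⟩ := h5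
    have hM : 0 < M := by omega
    obtain ⟨v₅, hv₅, h₅⟩ := pow_five_sub_one z hz
    have hz5 : (5:ℤ_[5]) ∣ z^5 - 1 := by
      rw [h₅]; exact ⟨(z-1)*v₅, by ring⟩
    obtain ⟨v', hv', h'⟩ := ih M (by omega) (z^5) hz5
    refine ⟨v₅ * v', hv₅.mul hv', ?_⟩
    have : z^(5*M) = (z^5)^M := by rw [← pow_mul]
    rw [this, h', h₅]
    push_cast
    ring
  · -- N coprime to 5
    set S : ℤ_[5] := ∑ j ∈ Finset.range N, z^j with hS
    have hgeom : z^N - 1 = S * (z - 1) := (geom_sum_mul z N).symm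
    have hSN : (5:ℤ_[5]) ∣ S - N := by
      have : S - N = ∑ j ∈ Finset.range N, (z^j - 1) := by
        rw [hS, Finset.sum_sub_distrib]
        simp
      rw [this]
      apply Finset.dvd_sum
      intro j _
      exact dvd_trans hz (by simpa using sub_dvd_pow_sub_pow z 1 j)
    have hNu : IsUnit ((N:ℕ) : ℤ_[5]) := by
      rw [unit_iff]
      intro hd
      have : (5:ℤ_[5])^1 ∣ ((N:ℕ):ℤ_[5]) := by simpa using hd
      rw [dvd_nat_iff] at this
      simp at this
      omega
    obtain ⟨c, hc⟩ := hSN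
    have hSc : S = N + 5*c := by rw [← hc]; ring
    have hSu : IsUnit S := by rw [hSc]; exact isUnit_add_mul c hNu
    refine ⟨Ring.inverse (N : ℤ_[5]) * S, (by
      exact (IsUnit.of_mul_eq_one _ (Ring.inverse_mul_cancel _ hNu)).mul hSu), ?_⟩
    rw [hgeom]
    have : (z-1) * N * (Ring.inverse (N:ℤ_[5]) * S) = (z-1) * ((N:ℤ_[5]) * Ring.inverse (N:ℤ_[5])) * S := by ring
    rw [this, Ring.mul_inverse_cancel _ hNu]
    ring


section MFacts
variable {m t : ℕ} (hmod : m % 10 = 4) (ht : t = padicValNat 5 (m + 1))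

include hmod in
lemma m_unit : IsUnit ((m:ℕ) : ℤ_[5]) := by
  rw [unit_iff]
  intro hd
  have : (5:ℤ_[5])^1 ∣ ((m:ℕ):ℤ_[5]) := by simpa using hd
  rw [dvd_nat_iff] at this
  simp at this
  omega

include hmod ht in
lemma t_pos : 1 ≤ t := by
  subst ht
  exact one_le_padicValNat_of_dvd (by omega) (by omega)

include hmod ht in
lemma m_add_one_nat : ∃ m₁ : ℕ, ¬ 5 ∣ m₁ ∧ m + 1 = 5^t * m₁ := by
  refine ⟨(m+1) / 5^t, ?_, ?_⟩
  · have h := Nat.not_dvd_ordCompl (p := 5) (n := m+1) (by norm_num) (by omega)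
    rwa [Nat.factorization_def _ (by norm_num), ← ht] at h
  · have h := Nat.ordProj_mul_ordCompl_eq_self (m+1) 5
    rw [Nat.factorization_def _ (by norm_num), ← ht] at h
    omega

include hmod ht in
lemma m_add_one : ∃ u : ℤ_[5], IsUnit u ∧ ((m:ℕ):ℤ_[5]) + 1 = 5^t * u := by
  obtain ⟨m₁, h5, he⟩ := m_add_one_nat hmod ht
  refine ⟨(m₁ : ℤ_[5]), ?_, ?_⟩
  · rw [unit_iff]
    intro hd
    have : (5:ℤ_[5])^1 ∣ ((m₁:ℕ):ℤ_[5]) := by simpa using hd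
    rw [dvd_nat_iff] at this
    simpa using h5 (by simpa using this)
  · have : ((m:ℕ):ℤ_[5]) + 1 = (((m+1 : ℕ)):ℤ_[5]) := by push_cast; ring
    rw [this, he]
    push_cast
    ring

include hmod in
lemma m_sub_one_unit : IsUnit (((m:ℕ):ℤ_[5]) - 1) := by
  rw [unit_iff]
  intro hd
  have h2 : ((m:ℕ):ℤ_[5]) - 1 = (((m:ℤ) - 1 : ℤ) : ℤ_[5]) := by push_cast; ring
  rw [h2] at hd
  have : (5:ℤ_[5])^1 ∣ (((m:ℤ) - 1 : ℤ) : ℤ_[5]) := by simpa using hd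
  rw [dvd_int_iff] at this
  simp at this
  omega

include hmod ht in
lemma m_sq_sub_one : ∃ u : ℤ_[5], IsUnit u ∧ ((m:ℕ):ℤ_[5])^2 - 1 = 5^t * u := by
  obtain ⟨u, hu, he⟩ := m_add_one hmod ht
  refine ⟨u * (((m:ℕ):ℤ_[5]) - 1), hu.mul (m_sub_one_unit hmod), ?_⟩
  have : ((m:ℕ):ℤ_[5])^2 - 1 = (((m:ℕ):ℤ_[5]) + 1) * (((m:ℕ):ℤ_[5]) - 1) := by ring
  rw [this, he]
  ring


include hmod ht in
/-- Exact form of the difference of two even iterates. -/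
lemma pow_diff {x u : ℤ_[5]} {l : ℕ} (hu : IsUnit u) (hx : x - 1 = 5^(l+1) * u)
    (n' δ : ℕ) (hδ : 1 ≤ δ) :
    ∃ W, IsUnit W ∧
      x^(m^(2*(n'+δ))) - x^(m^(2*n')) = 5^(t+l+1) * (δ:ℤ_[5]) * W := by
  obtain ⟨u₂, hu₂, hu₂e⟩ := m_sq_sub_one hmod ht
  have ht1 : 1 ≤ t := t_pos hmod ht
  have hx5 : (5:ℤ_[5]) ∣ x - 1 := by rw [hx]; exact ⟨5^l * u, by ring⟩
  have hxu : IsUnit x := by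
    have : x = 1 + 5*(5^l * u) := by
      have : x = 1 + (x - 1) := by ring
      rw [this, hx]; ring
    rw [this]; exact isUnit_one_add _
  set A := m^(2*n') with hA
  set B := m^(2*δ) with hB
  have hm1 : 1 ≤ m := by omega
  have hB1 : 1 ≤ B := Nat.one_le_pow _ _ (by omega)
  set z := x^A with hz
  obtain ⟨v₁, hv₁, he₁⟩ := lte x hx5 A
  have hz5 : (5:ℤ_[5]) ∣ z - 1 := by
    rw [hz, he₁]; exact ⟨(5^l*u) * A * v₁, by rw [hx]; ring⟩
  obtain ⟨v₂, hv₂, he₂⟩ := lte z hz5 (B-1)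
  -- the exponent cast
  have hcast : ((B - 1 : ℕ) : ℤ_[5]) = ((m:ℕ):ℤ_[5])^(2*δ) - 1 := by
    rw [Nat.cast_sub hB1, hB]; push_cast; ring
  have hmsq : ((m:ℕ):ℤ_[5])^(2*δ) = (((m:ℕ):ℤ_[5])^2)^δ := by rw [← pow_mul]
  have h5sq : (5:ℤ_[5]) ∣ ((m:ℕ):ℤ_[5])^2 - 1 := by
    rw [hu₂e]
    exact ⟨5^(t-1) * u₂, by rw [show (5:ℤ_[5])^t = 5 * 5^(t-1) from by
      rw [← pow_succ']; congr 1; omega]; ring⟩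
  obtain ⟨v₃, hv₃, he₃⟩ := lte (((m:ℕ):ℤ_[5])^2) h5sq δ
  -- main computation
  have hzB : x^(m^(2*(n'+δ))) = z^B := by
    rw [hz, ← pow_mul, hA, hB, ← pow_add]
    congr 1
    ring
  have hsplit : z^B - z = z * (z^(B-1) - 1) := by
    have hB' : B = (B-1) + 1 := by omega
    calc z^B - z = z^((B-1)+1) - z := by rw [← hB']
      _ = z * (z^(B-1) - 1) := by rw [pow_succ']; ring
  have hAu : IsUnit ((A:ℕ) : ℤ_[5]) := by
    rw [hA]; push_cast; exact (m_unit hmod).pow _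
  refine ⟨z * u * ((A:ℕ):ℤ_[5]) * v₁ * u₂ * v₃ * v₂,
    ((((((hxu.pow _).mul hu).mul hAu).mul hv₁).mul hu₂).mul hv₃).mul hv₂, ?_⟩
  rw [hzB, hsplit, he₂, hcast, hmsq, he₃, hu₂e, he₁, hx]
  rw [show (5:ℤ_[5])^(t+l+1) = 5^t * 5^(l+1) from by ring]
  ring

include hmod ht in
/-- Even iterates stay in the ball of radius `t+l+1`. -/
lemma pow_mem_ball {x u : ℤ_[5]} {l : ℕ} (hu : IsUnit u) (hx : x - 1 = 5^(l+1) * u)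
    (n : ℕ) : (5:ℤ_[5])^(t+l+1) ∣ x^(m^(2*n)) - x := by
  rcases Nat.eq_zero_or_pos n with h0 | hpos
  · subst h0; simp
  · obtain ⟨W, hW, he⟩ := pow_diff hmod ht hu hx 0 n hpos
    simp only [Nat.zero_add, mul_zero, pow_zero, pow_one] at he
    rw [he]
    exact ⟨(n:ℤ_[5]) * W, by ring⟩


end MFacts

lemma ker_dvd {k : ℕ} {a b : ℤ_[5]} :
    PadicInt.toZModPow k a = PadicInt.toZModPow k b ↔ (5:ℤ_[5])^k ∣ a - b := by
  rw [← sub_eq_zero, ← map_sub, ← RingHom.mem_ker, PadicInt.ker_toZModPow,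
    Ideal.mem_span_singleton]
  norm_num


lemma inv_sub_inv {x c : ℤ_[5]} (hx : IsUnit x) (hc : IsUnit c) {K : ℕ}
    (h : (5:ℤ_[5])^K ∣ x - c) :
    (5:ℤ_[5])^K ∣ Ring.inverse x - Ring.inverse c := by
  obtain ⟨e, he⟩ := h
  have h1 : Ring.inverse c * c = 1 := Ring.inverse_mul_cancel _ hc
  have h2 : Ring.inverse x * x = 1 := Ring.inverse_mul_cancel _ hx
  have key : Ring.inverse x - Ring.inverse c
      = Ring.inverse x * Ring.inverse c * (c - x) := by
    calc Ring.inverse x - Ring.inverse c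
        = Ring.inverse x * (Ring.inverse c * c) - (Ring.inverse x * x) * Ring.inverse c := by
          rw [h1, h2]; ring
      _ = Ring.inverse x * Ring.inverse c * (c - x) := by ring
  rw [key]
  exact ⟨Ring.inverse x * Ring.inverse c * (-e), by rw [show c - x = 5^K * (-e) from by rw [mul_neg, ← he]; ring]; ring⟩

lemma side {c x u : ℤ_[5]} {l t : ℕ} (ht1 : 1 ≤ t) (hu : IsUnit u)
    (hc : c - 1 = 5^(l+1) * u) (hxc : (5:ℤ_[5])^(t+l+1) ∣ x - c) :
    ∃ u', IsUnit u' ∧ x - 1 = 5^(l+1) * u' := by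
  obtain ⟨e, he⟩ := hxc
  refine ⟨u + 5*(5^(t-1)*e), isUnit_add_mul _ hu, ?_⟩
  have hx1 : x - 1 = (c - 1) + (x - c) := by ring
  rw [hx1, hc, he]
  have h5t : (5:ℤ_[5])^t = 5 * 5^(t-1) := by
    rw [← pow_succ']; congr 1; omega
  rw [show (5:ℤ_[5])^(t+l+1) = 5^(l+1) * 5^t from by ring, h5t]
  ring

lemma inverse_inverse {c : ℤ_[5]} (hc : IsUnit c) :
    Ring.inverse (Ring.inverse c) = c := by
  obtain ⟨v, rfl⟩ := hc
  rw [Ring.inverse_unit, Ring.inverse_unit, inv_inv]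

lemma inverse_center {c u : ℤ_[5]} {l : ℕ} (hcu : IsUnit c) (hu : IsUnit u)
    (hc : c - 1 = 5^(l+1) * u) :
    ∃ u', IsUnit u' ∧ Ring.inverse c - 1 = 5^(l+1) * u'
      ∧ u' = -(Ring.inverse c) * u := by
  have h1 : Ring.inverse c * c = 1 := Ring.inverse_mul_cancel _ hcu
  have hinvu : IsUnit (Ring.inverse c) := IsUnit.of_mul_eq_one _ h1
  refine ⟨-(Ring.inverse c) * u, (hinvu.neg).mul hu, ?_, rfl⟩
  have : Ring.inverse c - 1 = -(Ring.inverse c) * (c - 1) := by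
    rw [neg_mul, mul_sub, h1, mul_one]; ring
  rw [this, hc]
  ring


lemma cancel_pow {a b : ℕ} {w : ℤ_[5]} (h : (5:ℤ_[5])^(a+b) ∣ 5^a * w) :
    (5:ℤ_[5])^b ∣ w := by
  obtain ⟨e, he⟩ := h
  refine ⟨e, mul_left_cancel₀ (pow_ne_zero a five_ne_zero) ?_⟩
  rw [he, pow_add]; ring

lemma dvd_of_dvd_five {z : ℤ_[5]} {K : ℕ} (hK : 1 ≤ K) (h : (5:ℤ_[5])^K ∣ z) :
    (5:ℤ_[5]) ∣ z :=
  dvd_trans (by rw [show K = 1 + (K-1) from by omega, pow_add, pow_one]; exact ⟨5^(K-1), rfl⟩) h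

lemma nat_five_dvd {N : ℕ} (h : (5:ℤ_[5]) ∣ (N:ℤ_[5])) : 5 ∣ N := by
  have : (5:ℤ_[5])^1 ∣ (N:ℤ_[5]) := by simpa using h
  rwa [dvd_nat_iff] at this

lemma exists_digit {w : ℤ_[5]} (hw : IsUnit w) (t : ℕ) (ht1 : 1 ≤ t) :
    ∃ d : ℕ, d < 5^t ∧ ¬ 5 ∣ d ∧ (5:ℤ_[5])^t ∣ w - d := by
  haveI : NeZero (5^t) := ⟨by positivity⟩
  refine ⟨(PadicInt.toZModPow t w).val, ZMod.val_lt _, ?_, ?_⟩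
  · intro h5d
    have hdvd : (5:ℤ_[5])^t ∣ w - ((PadicInt.toZModPow t w).val : ℤ_[5]) := by
      apply ker_dvd.mp
      rw [map_natCast, ZMod.natCast_zmod_val]
    have h1 : (5:ℤ_[5]) ∣ w - ((PadicInt.toZModPow t w).val : ℤ_[5]) :=
      dvd_of_dvd_five ht1 hdvd
    have h2 : (5:ℤ_[5]) ∣ (((PadicInt.toZModPow t w).val : ℕ) : ℤ_[5]) := by
      obtain ⟨c, hc⟩ := h5d
      rw [hc]; push_cast; exact ⟨c, rfl⟩
    have : (5:ℤ_[5]) ∣ w := by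
      have := dvd_add h1 h2
      simpa using this
    exact (unit_iff.mp hw) this
  · apply ker_dvd.mp
    rw [map_natCast, ZMod.natCast_zmod_val]

lemma exists_val {z : ℤ_[5]} (hz : z ≠ 0) (h5 : (5:ℤ_[5]) ∣ z) :
    ∃ (l : ℕ) (u : ℤ_[5]), IsUnit u ∧ z = 5^(l+1) * u := by
  have hspec := PadicInt.unitCoeff_spec hz
  set v := z.valuation with hv
  have hvpos : 1 ≤ v := by
    by_contra h
    have hv0 : v = 0 := by omega
    rw [hv0, pow_zero, mul_one] at hspec
    have : IsUnit z := by rw [hspec]; exact (PadicInt.unitCoeff hz).isUnit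
    exact (unit_iff.mp this) h5
  refine ⟨v - 1, PadicInt.unitCoeff hz, (PadicInt.unitCoeff hz).isUnit, ?_⟩
  have h1 : (5:ℤ_[5])^(v-1+1) = (((5:ℕ)):ℤ_[5])^v := by
    rw [show v-1+1 = v from by omega]; norm_num
  rw [h1, mul_comm]; exact hspec

lemma keyA_aux {t l l' d d' : ℕ} (hll' : l ≤ l') (ht1 : 1 ≤ t)
    (hd : d < 5^t) (hd' : d' < 5^t) (h5d : ¬ 5 ∣ d) (h5d' : ¬ 5 ∣ d')
    (hdvd : (5:ℤ_[5])^(t + min l l' + 1) ∣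
      (1 + 5^(l+1)*(d:ℤ_[5])) - (1 + 5^(l'+1)*(d':ℤ_[5]))) :
    l = l' ∧ d = d' := by
  have hmin : min l l' = l := by omega
  rw [hmin] at hdvd
  have heq : (1 + 5^(l+1)*(d:ℤ_[5])) - (1 + 5^(l'+1)*(d':ℤ_[5]))
      = 5^(l+1) * ((d:ℤ_[5]) - 5^(l'-l)*(d':ℤ_[5])) := by
    rw [show (5:ℤ_[5])^(l'+1) = 5^(l+1) * 5^(l'-l) from by
      rw [← pow_add]; congr 1; omega]
    ring
  rw [show t + l + 1 = (l+1) + t from by omega, heq] at hdvd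
  have h1 : (5:ℤ_[5])^t ∣ (d:ℤ_[5]) - 5^(l'-l)*(d':ℤ_[5]) := cancel_pow hdvd
  have h2 : (5:ℤ_[5])^t ∣ (((d:ℤ) - 5^(l'-l)*(d':ℤ)) : ℤ) := by
    push_cast
    convert h1 using 2
  rw [dvd_int_iff] at h2
  rcases Nat.eq_or_lt_of_le hll' with rfl | hlt
  · simp only [Nat.sub_self, pow_zero, one_mul] at h2
    have habs : (d:ℤ) - (d':ℤ) = 0 := by
      apply Int.eq_zero_of_abs_lt_dvd h2
      have h5t : (5:ℤ)^t = ((5^t : ℕ) : ℤ) := by push_cast; ring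
      rw [h5t, abs_sub_lt_iff]
      constructor <;> omega
    constructor
    · rfl
    · omega
  · exfalso
    have h5div : (5:ℤ) ∣ (d:ℤ) - 5^(l'-l)*(d':ℤ) :=
      dvd_trans (dvd_pow_self 5 (by omega : t ≠ 0)) h2
    have hq : (5:ℤ)^(l'-l) = 5 * 5^(l'-l-1) := by
      rw [← pow_succ']; congr 1; omega
    rw [hq] at h5div
    have hQ : (5:ℤ)*5^(l'-l-1)*(d':ℤ) = 5*((5:ℤ)^(l'-l-1)*(d':ℤ)) := by ring
    rw [hQ] at h5div
    have : ¬ (5:ℤ) ∣ (d:ℤ) := by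
      intro h; exact h5d (by exact_mod_cast h)
    omega

lemma keyA {t l l' d d' : ℕ} (ht1 : 1 ≤ t)
    (hd : d < 5^t) (hd' : d' < 5^t) (h5d : ¬ 5 ∣ d) (h5d' : ¬ 5 ∣ d')
    (hdvd : (5:ℤ_[5])^(t + min l l' + 1) ∣
      (1 + 5^(l+1)*(d:ℤ_[5])) - (1 + 5^(l'+1)*(d':ℤ_[5]))) :
    l = l' ∧ d = d' := by
  rcases le_total l l' with h | h
  · exact keyA_aux h ht1 hd hd' h5d h5d' hdvd
  · have := keyA_aux h ht1 hd' hd h5d' h5d (by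
      rw [min_comm] at hdvd
      exact dvd_sub_comm.mp hdvd)
    omega

lemma keyB {t l l' d d' : ℕ} (ht1 : 1 ≤ t) (h5d : ¬ 5 ∣ d) (h5d' : ¬ 5 ∣ d')
    (hsum : d % 5 + d' % 5 < 5) {c' : ℤ_[5]} (hc' : c' = 1 + 5^(l'+1)*(d':ℤ_[5]))
    (hdvd : (5:ℤ_[5])^(t + min l l' + 1) ∣
      (1 + 5^(l+1)*(d:ℤ_[5])) - Ring.inverse c') : False := by
  have hc'u : IsUnit c' := by
    rw [hc', show (1:ℤ_[5]) + 5^(l'+1)*(d':ℤ_[5]) = 1 + 5*(5^l' * (d':ℤ_[5])) from by ring]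
    exact isUnit_one_add _
  have hd'u : IsUnit ((d':ℕ) : ℤ_[5]) := by
    rw [unit_iff]; intro h; exact h5d' (nat_five_dvd h)
  have hc'1 : c' - 1 = 5^(l'+1) * ((d':ℕ):ℤ_[5]) := by rw [hc']; ring
  obtain ⟨u', hu', hRc'1, hu'eq⟩ := inverse_center hc'u hd'u hc'1
  set m0 := min l l' with hm0
  have hml : m0 ≤ l := min_le_left _ _
  have hml' : m0 ≤ l' := min_le_right _ _
  set Z : ℤ_[5] := 5^(l-m0)*(d:ℤ_[5]) - 5^(l'-m0)*u' with hZ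
  have hdiff : (1 + 5^(l+1)*(d:ℤ_[5])) - Ring.inverse c' = 5^(m0+1) * Z := by
    have e1 : (1 + 5^(l+1)*(d:ℤ_[5])) - Ring.inverse c'
        = 5^(l+1)*(d:ℤ_[5]) - (Ring.inverse c' - 1) := by ring
    rw [e1, hRc'1, hZ]
    rw [show (5:ℤ_[5])^(l+1) = 5^(m0+1) * 5^(l-m0) from by rw [← pow_add]; congr 1; omega,
      show (5:ℤ_[5])^(l'+1) = 5^(m0+1) * 5^(l'-m0) from by rw [← pow_add]; congr 1; omega]
    ring
  have h5Z : (5:ℤ_[5]) ∣ Z := by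
    have h1 : (5:ℤ_[5])^((m0+1)+1) ∣ 5^(m0+1) * Z := by
      rw [← hdiff]
      exact dvd_trans (pow_dvd_pow 5 (by omega)) hdvd
    have := cancel_pow h1
    simpa using this
  have h5u'd' : (5:ℤ_[5]) ∣ u' + (d':ℕ) := by
    have : u' + ((d':ℕ):ℤ_[5]) = -((d':ℕ):ℤ_[5]) * (Ring.inverse c' - 1) := by
      rw [hu'eq]; ring
    rw [this, hRc'1]
    exact ⟨-((d':ℕ):ℤ_[5]) * (5^l' * u'), by ring⟩
  set N : ℕ := 5^(l-m0)*d + 5^(l'-m0)*d' with hN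
  have h5N : 5 ∣ N := by
    apply nat_five_dvd
    have hcast : ((N:ℕ):ℤ_[5]) = Z + 5^(l'-m0) * (u' + ((d':ℕ):ℤ_[5])) := by
      rw [hN, hZ]; push_cast; ring
    rw [hcast]
    exact dvd_add h5Z (Dvd.dvd.mul_left h5u'd' _)
  rcases lt_trichotomy l l' with h | h | h
  · have h1 : l - m0 = 0 := by omega
    have e2 : l'-m0 = (l'-m0-1)+1 := by omega
    have h2 : 5^(l'-m0)*d' = 5*(5^(l'-m0-1)*d') := by
      conv_lhs => rw [e2]
      rw [pow_succ]; ring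
    rw [hN, h1, h2] at h5N
    simp only [pow_zero, one_mul] at h5N
    omega
  · have h1 : l - m0 = 0 := by omega
    have h2 : l' - m0 = 0 := by omega
    rw [hN, h1, h2] at h5N
    simp only [pow_zero, one_mul] at h5N
    omega
  · have h1 : l' - m0 = 0 := by omega
    have e2 : l-m0 = (l-m0-1)+1 := by omega
    have h2 : 5^(l-m0)*d = 5*(5^(l-m0-1)*d) := by
      conv_lhs => rw [e2]
      rw [pow_succ]; ring
    rw [hN, h1, h2] at h5N
    simp only [pow_zero, one_mul] at h5N
    omega

lemma dvd_iff_norm_le {z : ℤ_[5]} {K : ℕ} :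
    (5:ℤ_[5])^K ∣ z ↔ ‖z‖ ≤ (5:ℝ)^(-(K:ℤ)) := by
  have h := PadicInt.norm_le_pow_iff_mem_span_pow z K
  rw [Ideal.mem_span_singleton] at h
  have h5 : ((5:ℕ):ℤ_[5]) = (5:ℤ_[5]) := by norm_num
  have h5r : ((5:ℕ):ℝ) = (5:ℝ) := by norm_num
  rw [h5, h5r] at h
  exact h.symm

lemma ball_clopen (c : ℤ_[5]) (K : ℕ) :
    IsClopen {x : ℤ_[5] | (5:ℤ_[5])^K ∣ x - c} := by
  have hε : (0:ℝ) < (5:ℝ)^(-(K:ℤ)) := by positivity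
  constructor
  · rw [← isOpen_compl_iff, Metric.isOpen_iff]
    intro x hx
    refine ⟨(5:ℝ)^(-(K:ℤ)), hε, ?_⟩
    intro y hy
    simp only [Set.mem_compl_iff, Set.mem_setOf_eq] at hx ⊢
    intro hyc
    apply hx
    have h1 : (5:ℤ_[5])^K ∣ x - y := by
      rw [dvd_iff_norm_le, norm_sub_rev, ← dist_eq_norm]
      exact le_of_lt (Metric.mem_ball.mp hy)
    have := dvd_add h1 hyc
    simpa using this
  · rw [Metric.isOpen_iff]
    intro x hx
    refine ⟨(5:ℝ)^(-(K:ℤ)), hε, ?_⟩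
    intro y hy
    simp only [Set.mem_setOf_eq] at hx ⊢
    have h1 : (5:ℤ_[5])^K ∣ y - x := by
      rw [dvd_iff_norm_le, ← dist_eq_norm]
      exact le_of_lt (Metric.mem_ball.mp hy)
    have := dvd_add h1 hx
    simpa using this

lemma mem_closure_of {y : ℤ_[5]} {s : Set ℤ_[5]}
    (H : ∀ k : ℕ, ∃ z ∈ s, (5:ℤ_[5])^k ∣ z - y) : y ∈ closure s := by
  rw [Metric.mem_closure_iff]
  intro ε hε
  obtain ⟨k, hk⟩ : ∃ k : ℕ, (5:ℝ)^(-(k:ℤ)) < ε := by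
    obtain ⟨k, hk⟩ := exists_pow_lt_of_lt_one hε (by norm_num : (1/5:ℝ) < 1)
    refine ⟨k, ?_⟩
    calc (5:ℝ)^(-(k:ℤ)) = (1/5:ℝ)^k := by
          rw [zpow_neg, zpow_natCast, one_div, inv_pow]
      _ < ε := hk
  obtain ⟨z, hzs, hz⟩ := H k
  refine ⟨z, hzs, ?_⟩
  rw [dist_eq_norm]
  have h1 : ‖y - z‖ ≤ (5:ℝ)^(-(k:ℤ)) := by
    rw [norm_sub_rev]
    exact dvd_iff_norm_le.mp hz
  linarith

lemma last_part {m : ℕ} (hmod : m % 10 = 4) (x : ℤ_[5]) (hx : ¬ (5:ℤ_[5]) ∣ x) :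
    (5:ℤ_[5]) ∣ x^(m^2) - 1 := by
  have hker : ∀ z : ℤ_[5], PadicInt.toZMod z = 0 ↔ (5:ℤ_[5]) ∣ z := by
    intro z
    rw [← RingHom.mem_ker, PadicInt.ker_toZMod, PadicInt.maximalIdeal_eq_span_p,
      Ideal.mem_span_singleton]
    norm_num
  have hr : PadicInt.toZMod x ≠ 0 := fun h => hx ((hker x).mp h)
  apply (hker _).mp
  rw [map_sub, map_pow, map_one]
  obtain ⟨q, hq⟩ : 2 ∣ m := by omega
  have hm2 : m^2 = 4 * q^2 := by rw [hq]; ring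
  rw [hm2, pow_mul, ZMod.pow_card_sub_one_eq_one hr, one_pow, sub_self]

section MFacts2
variable {m t : ℕ} (hmod : m % 10 = 4) (ht : t = padicValNat 5 (m + 1))

include hmod ht in
lemma dense_even {x y u : ℤ_[5]} {l k : ℕ} (hu : IsUnit u) (hx : x - 1 = 5^(l+1) * u)
    (hk : t + l + 1 ≤ k) (hxy : (5:ℤ_[5])^(t+l+1) ∣ x - y) :
    ∃ n : ℕ, (5:ℤ_[5])^k ∣ x^(m^(2*n)) - y := by
  set K := t + l + 1 with hK
  set D := k - K with hD
  have hkKD : k = K + D := by omega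
  haveI : NeZero (5^D) := ⟨by positivity⟩
  set φ := PadicInt.toZModPow (p := 5) k with hφ
  set g : Fin (5^D) → ZMod (5^k) := fun n => φ (x^(m^(2*(n:ℕ)))) with hg
  set h : Fin (5^D) → ZMod (5^k) := fun j => φ (x + 5^K * ((j:ℕ):ℤ_[5])) with hh
  -- auxiliary: close approximations give the same h-value
  have hsame : ∀ c : ℤ_[5], ∃ j : Fin (5^D),
      φ (x + 5^K * c) = h j := by
    intro c
    refine ⟨⟨(PadicInt.toZModPow D c).val, ZMod.val_lt _⟩, ?_⟩
    rw [hh]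
    apply ker_dvd.mpr
    have hcd : (5:ℤ_[5])^D ∣ c - (((PadicInt.toZModPow D c).val : ℕ) : ℤ_[5]) := by
      apply ker_dvd.mp
      rw [map_natCast, ZMod.natCast_zmod_val]
    obtain ⟨e, he⟩ := hcd
    refine ⟨e, ?_⟩
    have : x + 5^K * c - (x + 5^K * ((((PadicInt.toZModPow D c).val : ℕ)) : ℤ_[5]))
        = 5^K * (c - (((PadicInt.toZModPow D c).val : ℕ) : ℤ_[5])) := by ring
    rw [this, he, hkKD, pow_add]
    ring
  -- g is injective
  have hgaux : ∀ n n' : Fin (5^D), (n':ℕ) < (n:ℕ) → g n ≠ g n' := by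
    intro n n' hlt hEq
    set δ := (n:ℕ) - (n':ℕ) with hδ
    have hδ1 : 1 ≤ δ := by omega
    obtain ⟨W, hW, he⟩ := pow_diff hmod ht hu hx (n':ℕ) δ hδ1
    rw [show (n':ℕ) + δ = (n:ℕ) from by omega] at he
    have hdvd : (5:ℤ_[5])^k ∣ x^(m^(2*(n:ℕ))) - x^(m^(2*(n':ℕ))) := ker_dvd.mp hEq
    rw [he, hkKD, pow_add] at hdvd
    obtain ⟨e, hee⟩ := hdvd
    have hcan : (δ:ℤ_[5]) * W = 5^D * e := by
      apply mul_left_cancel₀ (pow_ne_zero K five_ne_zero)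
      rw [← mul_assoc, ← mul_assoc]
      rw [← hee]
    have hdvdδ : (5:ℤ_[5])^D ∣ (δ:ℤ_[5]) := by
      refine ⟨e * Ring.inverse W, ?_⟩
      have h1 : (δ:ℤ_[5]) = (δ:ℤ_[5]) * (W * Ring.inverse W) := by
        rw [Ring.mul_inverse_cancel _ hW, mul_one]
      rw [h1, ← mul_assoc, hcan]
      ring
    rw [dvd_nat_iff] at hdvdδ
    have : 5^D ≤ δ := Nat.le_of_dvd (by omega) hdvdδ
    have : δ < 5^D := by have := n.isLt; omega
    omega
  have hginj : Function.Injective g := by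
    intro n n' hEq
    rcases lt_trichotomy (n':ℕ) (n:ℕ) with hc | hc | hc
    · exact absurd hEq (hgaux n n' hc)
    · exact Fin.ext hc.symm
    · exact absurd hEq.symm (hgaux n' n hc)
  -- h is injective
  have hhinj : Function.Injective h := by
    have key : ∀ j j' : Fin (5^D), (j':ℕ) ≤ (j:ℕ) → h j = h j' → j = j' := by
      intro j j' hle hEq
      have hdvd := ker_dvd.mp hEq
      have hsub : x + 5^K * ((j:ℕ):ℤ_[5]) - (x + 5^K * ((j':ℕ):ℤ_[5]))
          = 5^K * ((((j:ℕ) - (j':ℕ) : ℕ)) : ℤ_[5]) := by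
        rw [Nat.cast_sub hle]; ring
      rw [hsub, hkKD, pow_add] at hdvd
      obtain ⟨e, hee⟩ := hdvd
      have : (5:ℤ_[5])^D ∣ ((((j:ℕ) - (j':ℕ) : ℕ)) : ℤ_[5]) := by
        refine ⟨e, mul_left_cancel₀ (pow_ne_zero K five_ne_zero) ?_⟩
        rw [← mul_assoc, ← hee]
      rw [dvd_nat_iff] at this
      have h1 : (j:ℕ) - (j':ℕ) < 5^D := by have := j.isLt; omega
      have h2 : (j:ℕ) - (j':ℕ) = 0 := by
        rcases Nat.eq_zero_or_pos ((j:ℕ) - (j':ℕ)) with h | h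
        · exact h
        · have := Nat.le_of_dvd h this; omega
      exact Fin.ext (by omega)
    intro j j' hEq
    rcases le_total (j':ℕ) (j:ℕ) with hle | hle
    · exact key j j' hle hEq
    · exact (key j' j hle hEq.symm).symm
  -- image of g is contained in image of h
  have himg : ∀ n : Fin (5^D), ∃ j : Fin (5^D), g n = h j := by
    intro n
    obtain ⟨c, hc⟩ := pow_mem_ball hmod ht hu hx (n:ℕ)
    have hxc : x^(m^(2*(n:ℕ))) = x + 5^K * c := by rw [← hc]; ring
    rw [hg]
    simp only
    rw [hxc]
    exact hsame c
  -- y is an h-value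
  obtain ⟨c₀, hc₀⟩ := hxy
  have hyc : y = x + 5^K * (-c₀) := by rw [mul_neg, ← hc₀]; ring
  have hjy' : ∃ j, φ y = h j := by rw [hyc]; exact hsame (-c₀)
  obtain ⟨jy, hjy⟩ := hjy'
  -- counting
  classical
  have hcards : (Finset.univ.image g) = (Finset.univ.image h) := by
    apply Finset.eq_of_subset_of_card_le
    · intro z hz
      rw [Finset.mem_image] at hz ⊢
      obtain ⟨n, _, rfl⟩ := hz
      obtain ⟨j, hj⟩ := himg n
      exact ⟨j, Finset.mem_univ _, hj.symm⟩
    · rw [Finset.card_image_of_injective _ hhinj, Finset.card_image_of_injective _ hginj]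
  have hymem : φ y ∈ Finset.univ.image g := by
    rw [hcards, Finset.mem_image]
    exact ⟨jy, Finset.mem_univ _, hjy.symm⟩
  rw [Finset.mem_image] at hymem
  obtain ⟨n, _, hn⟩ := hymem
  exact ⟨(n:ℕ), ker_dvd.mp hn⟩


include hmod ht in
/-- One step of the map sends the ball around `c` into the ball around `c⁻¹`. -/
lemma step {x c u : ℤ_[5]} {l : ℕ} (hcu : IsUnit c) (hu : IsUnit u)
    (hc : c - 1 = 5^(l+1) * u) (hx : (5:ℤ_[5])^(t+l+1) ∣ x - c) :
    (5:ℤ_[5])^(t+l+1) ∣ x^m - Ring.inverse c := by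
  obtain ⟨u', hu', hx1⟩ := side (t_pos hmod ht) hu hc hx
  have hxu : IsUnit x := by
    have hx' : x = 1 + 5*(5^l * u') := by
      have : x = 1 + (x - 1) := by ring
      rw [this, hx1]; ring
    rw [hx']; exact isUnit_one_add _
  have h5x : (5:ℤ_[5]) ∣ x - 1 := by rw [hx1]; exact ⟨5^l * u', by ring⟩
  obtain ⟨v, hv, hev⟩ := lte x h5x (m+1)
  obtain ⟨um, hum, heum⟩ := m_add_one hmod ht
  have hcast : ((m+1 : ℕ) : ℤ_[5]) = 5^t * um := by push_cast at heum ⊢; rw [← heum]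
  set y := Ring.inverse x with hy
  have hyx : y * x = 1 := Ring.inverse_mul_cancel _ hxu
  have h1 : x^m - y = y * (x^(m+1) - 1) := by
    have : y * x^(m+1) = x^m := by
      rw [pow_succ']
      rw [← mul_assoc, hyx, one_mul]
    rw [mul_sub, this, mul_one]
  have h2 : (5:ℤ_[5])^(t+l+1) ∣ x^m - y := by
    rw [h1, hev, hx1, hcast]
    exact ⟨y * u' * um * v, by rw [show (5:ℤ_[5])^(t+l+1) = 5^(l+1) * 5^t from by ring]; ring⟩
  have h3 : (5:ℤ_[5])^(t+l+1) ∣ y - Ring.inverse c := inv_sub_inv hxu hcu hx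
  have : x^m - Ring.inverse c = (x^m - y) + (y - Ring.inverse c) := by ring
  rw [this]
  exact dvd_add h2 h3

end MFacts2
end Monomial5

open Monomial5

/-- Minimal decomposition for `x ↦ x^m` on `ℤ_5` with `m ≡ 4 (mod 10)`:
with `x₀ = 1 + 5^(l+1)i + 5^(l+2)a` (a 5-adic unit), the sets
`M_{l,a,i} = (x₀ + 5^(t+l+1)ℤ_5) ∪ (x₀⁻¹ + 5^(t+l+1)ℤ_5)` are pairwise disjoint clopen
minimal components, together with `{1}` they cover exactly the ball `1 + 5ℤ_5`, and
for every 5-adic unit `x` the second iterate `x^(m²)` lies in `1 + 5ℤ_5`. -/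
theorem monomial_Z5_four_mod_ten_decomposition (m : ℕ) (hm : 2 ≤ m) (hmod : m % 10 = 4)
    (t : ℕ) (ht : t = padicValNat 5 (m + 1))
    (x₀ : ℕ → ℕ → ℕ → ℤ_[5])
    (hx₀ : ∀ l a i, x₀ l a i = 1 + 5 ^ (l + 1) * (i : ℤ_[5]) + 5 ^ (l + 2) * (a : ℤ_[5]))
    (M : ℕ → ℕ → ℕ → Set ℤ_[5])
    (hM : ∀ l a i, M l a i =
      {x : ℤ_[5] | (5 : ℤ_[5]) ^ (t + l + 1) ∣ x - x₀ l a i} ∪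
      {x : ℤ_[5] | (5 : ℤ_[5]) ^ (t + l + 1) ∣ x - Ring.inverse (x₀ l a i)}) :
    (∀ l a i, a < 5 ^ (t - 1) → (i = 1 ∨ i = 2) → IsUnit (x₀ l a i)) ∧
    (∀ l a i l' a' i',
      a < 5 ^ (t - 1) → a' < 5 ^ (t - 1) → (i = 1 ∨ i = 2) → (i' = 1 ∨ i' = 2) →
      (l, a, i) ≠ (l', a', i') → Disjoint (M l a i) (M l' a' i')) ∧
    (∀ l a i, a < 5 ^ (t - 1) → (i = 1 ∨ i = 2) →
      IsClopen (M l a i) ∧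
      (∀ x ∈ M l a i, x ^ m ∈ M l a i) ∧
      (∀ x ∈ M l a i, M l a i ⊆ closure (Set.range fun n : ℕ => x ^ m ^ n))) ∧
    ((⋃ l : ℕ, ⋃ a ∈ Finset.range (5 ^ (t - 1)), ⋃ i ∈ ({1, 2} : Set ℕ), M l a i)
        ∪ {1} = {x : ℤ_[5] | (5 : ℤ_[5]) ∣ x - 1}) ∧
    (∀ x : ℤ_[5], ¬ (5 : ℤ_[5]) ∣ x → (5 : ℤ_[5]) ∣ x ^ m ^ 2 - 1) := by
  have ht1 : 1 ≤ t := t_pos hmod ht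
  have h5t : 5^t = 5 * 5^(t-1) := by
    conv_lhs => rw [show t = (t-1)+1 from by omega]
    rw [pow_succ]; ring
  have hform : ∀ l a i, x₀ l a i = 1 + 5^(l+1) * (((i + 5*a : ℕ)):ℤ_[5]) := by
    intro l a i; rw [hx₀]; push_cast; ring
  have hcen : ∀ l a i, x₀ l a i - 1 = 5^(l+1) * (((i+5*a:ℕ)):ℤ_[5]) := by
    intro l a i; rw [hform]; ring
  have hd5 : ∀ a i, (i = 1 ∨ i = 2) → ¬ 5 ∣ (i + 5*a) := by intro a i hi h; omega
  have hdu : ∀ a i, (i = 1 ∨ i = 2) → IsUnit (((i+5*a:ℕ)):ℤ_[5]) := by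
    intro a i hi
    rw [unit_iff]
    intro h
    exact hd5 a i hi (nat_five_dvd h)
  have hdlt : ∀ a i, a < 5^(t-1) → (i = 1 ∨ i = 2) → i + 5*a < 5^t := by
    intro a i ha hi; omega
  have hx₀u : ∀ l a i, IsUnit (x₀ l a i) := by
    intro l a i
    have h : x₀ l a i = 1 + 5 * (5^l * (((i+5*a:ℕ)):ℤ_[5])) := by rw [hform]; ring
    rw [h]; exact isUnit_one_add _
  have hRu : ∀ l a i, IsUnit (Ring.inverse (x₀ l a i)) := fun l a i =>
    IsUnit.of_mul_eq_one _ (Ring.inverse_mul_cancel _ (hx₀u l a i))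
  refine ⟨fun l a i _ _ => hx₀u l a i, ?_, ?_, ?_, fun x hx => last_part hmod x hx⟩
  · -- disjointness
    intro l a i l' a' i' ha ha' hi hi' hne
    rw [Set.disjoint_left]
    intro x hxM hxM'
    rw [hM] at hxM hxM'
    simp only [Set.mem_union, Set.mem_setOf_eq] at hxM hxM'
    have hm1 := min_le_left l l'
    have hm2 := min_le_right l l'
    have W : ∀ (C C' : ℤ_[5]), (5:ℤ_[5])^(t+l+1) ∣ x - C → (5:ℤ_[5])^(t+l'+1) ∣ x - C' →
        (5:ℤ_[5])^(t + min l l' + 1) ∣ C' - C := by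
      intro C C' h1 h2
      have h1' := dvd_trans (pow_dvd_pow (5:ℤ_[5]) (by omega : t + min l l' + 1 ≤ t+l+1)) h1
      have h2' := dvd_trans (pow_dvd_pow (5:ℤ_[5]) (by omega : t + min l l' + 1 ≤ t+l'+1)) h2
      rw [show C' - C = (x - C) - (x - C') from by ring]
      exact dvd_sub h1' h2'
    have hA : ∀ hd : (5:ℤ_[5])^(t + min l' l + 1) ∣ x₀ l' a' i' - x₀ l a i, False := by
      intro hd
      rw [hform l' a' i', hform l a i] at hd
      obtain ⟨hll, hdd⟩ := keyA ht1 (hdlt a' i' ha' hi') (hdlt a i ha hi)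
        (hd5 a' i' hi') (hd5 a i hi) hd
      apply hne
      simp only [Prod.mk.injEq]
      omega
    rcases hxM with h1 | h1 <;> rcases hxM' with h2 | h2
    · have hd := W _ _ h1 h2
      rw [min_comm] at hd
      exact hA hd
    · have hd := dvd_sub_comm.mp (W _ _ h1 h2)
      rw [hform l a i] at hd
      exact keyB ht1 (hd5 a i hi) (hd5 a' i' hi') (by omega) (hform l' a' i') hd
    · have hd := W _ _ h1 h2
      rw [min_comm] at hd
      rw [hform l' a' i'] at hd
      exact keyB ht1 (hd5 a' i' hi') (hd5 a i hi) (by omega) (hform l a i) hd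
    · have hd := Monomial5.inv_sub_inv (hRu l a i) (hRu l' a' i') (dvd_sub_comm.mp (W _ _ h1 h2))
      rw [inverse_inverse (hx₀u l a i), inverse_inverse (hx₀u l' a' i')] at hd
      have hd2 := dvd_sub_comm.mp hd
      rw [min_comm l l'] at hd2
      exact hA hd2
  · -- clopen, invariance, minimality
    intro l a i ha hi
    obtain ⟨u', hu'u, hRc1, _⟩ := inverse_center (hx₀u l a i) (hdu a i hi) (hcen l a i)
    refine ⟨?_, ?_, ?_⟩
    · rw [hM]
      exact (ball_clopen _ _).union (ball_clopen _ _)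
    · intro x hx
      rw [hM] at hx ⊢
      simp only [Set.mem_union, Set.mem_setOf_eq] at hx ⊢
      rcases hx with h | h
      · right
        exact step hmod ht (hx₀u l a i) (hdu a i hi) (hcen l a i) h
      · left
        have hs := step hmod ht (hRu l a i) hu'u hRc1 h
        rwa [inverse_inverse (hx₀u l a i)] at hs
    · intro x hx y hy
      have hcore : ∀ (c uc x' y' : ℤ_[5]), IsUnit c → IsUnit uc → c - 1 = 5^(l+1) * uc →
          (5:ℤ_[5])^(t+l+1) ∣ x' - c → (5:ℤ_[5])^(t+l+1) ∣ y' - c → ∀ k : ℕ,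
          ∃ n : ℕ, (5:ℤ_[5])^k ∣ x'^(m^(2*n)) - y' := by
        intro c uc x' y' hcu hucu hc hx' hy' k
        obtain ⟨u'', hu'', hx1⟩ := side ht1 hucu hc hx'
        have hxy : (5:ℤ_[5])^(t+l+1) ∣ x' - y' := by
          rw [show x' - y' = (x' - c) - (y' - c) from by ring]
          exact dvd_sub hx' hy'
        obtain ⟨n, hn⟩ := dense_even hmod ht hu'' hx1 (le_max_right k (t+l+1)) hxy
        exact ⟨n, dvd_trans (pow_dvd_pow 5 (le_max_left k (t+l+1))) hn⟩
      apply mem_closure_of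
      intro k
      rw [hM] at hx hy
      simp only [Set.mem_union, Set.mem_setOf_eq] at hx hy
      have hodd : ∀ n : ℕ, (x^m)^(m^(2*n)) = x^(m^(2*n+1)) := by
        intro n
        rw [← pow_mul, ← pow_succ']
      rcases hx with hx | hx <;> rcases hy with hy | hy
      · obtain ⟨n, hn⟩ := hcore _ _ _ _ (hx₀u l a i) (hdu a i hi) (hcen l a i) hx hy k
        exact ⟨x^(m^(2*n)), ⟨2*n, rfl⟩, hn⟩
      · have hxm := step hmod ht (hx₀u l a i) (hdu a i hi) (hcen l a i) hx
        obtain ⟨n, hn⟩ := hcore _ _ _ _ (hRu l a i) hu'u hRc1 hxm hy k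
        refine ⟨x^(m^(2*n+1)), ⟨2*n+1, rfl⟩, ?_⟩
        rwa [hodd n] at hn
      · have hxm := step hmod ht (hRu l a i) hu'u hRc1 hx
        rw [inverse_inverse (hx₀u l a i)] at hxm
        obtain ⟨n, hn⟩ := hcore _ _ _ _ (hx₀u l a i) (hdu a i hi) (hcen l a i) hxm hy k
        refine ⟨x^(m^(2*n+1)), ⟨2*n+1, rfl⟩, ?_⟩
        rwa [hodd n] at hn
      · obtain ⟨n, hn⟩ := hcore _ _ _ _ (hRu l a i) hu'u hRc1 hx hy k
        exact ⟨x^(m^(2*n)), ⟨2*n, rfl⟩, hn⟩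
  · -- covering
    ext x
    simp only [Set.mem_union, Set.mem_iUnion, Set.mem_setOf_eq, Set.mem_singleton_iff,
      Finset.mem_range, Set.mem_insert_iff, exists_prop]
    constructor
    · rintro (⟨l, a, ha, i, hi, hxM⟩ | rfl)
      · rw [hM] at hxM
        simp only [Set.mem_union, Set.mem_setOf_eq] at hxM
        have hi' : i = 1 ∨ i = 2 := hi
        rcases hxM with h | h
        · have h1 : (5:ℤ_[5]) ∣ x - x₀ l a i := dvd_of_dvd_five (by omega) h
          have h2 : (5:ℤ_[5]) ∣ x₀ l a i - 1 := by
            rw [hcen l a i]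
            exact ⟨5^l * (((i+5*a:ℕ)):ℤ_[5]), by ring⟩
          have := dvd_add h1 h2
          simpa using this
        · obtain ⟨u', hu'u, hRc1, _⟩ := inverse_center (hx₀u l a i) (hdu a i hi') (hcen l a i)
          have h1 : (5:ℤ_[5]) ∣ x - Ring.inverse (x₀ l a i) := dvd_of_dvd_five (by omega) h
          have h2 : (5:ℤ_[5]) ∣ Ring.inverse (x₀ l a i) - 1 := by
            rw [hRc1]
            exact ⟨5^l * u', by ring⟩
          have := dvd_add h1 h2
          simpa using this
      · simp
    · intro h5x
      by_cases hx1 : x = 1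
      · right; exact hx1
      · left
        have hz : x - 1 ≠ 0 := sub_ne_zero.mpr hx1
        obtain ⟨l, u, hu, hrep⟩ := exists_val hz h5x
        obtain ⟨d, hdlt', hd5', hdd⟩ := exists_digit hu t ht1
        have hxu : IsUnit x := by
          have hx' : x = 1 + 5*(5^l * u) := by
            rw [show x = 1 + (x - 1) from by ring, hrep]; ring
          rw [hx']; exact isUnit_one_add _
        rcases Nat.lt_or_ge (d % 5) 3 with hdm | hdm
        · -- d % 5 ∈ {1,2}
          refine ⟨l, d/5, by omega, d % 5, by omega, ?_⟩
          rw [hM]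
          left
          simp only [Set.mem_setOf_eq]
          have hid : (d % 5) + 5*(d/5) = d := by omega
          rw [hform l (d/5) (d%5), hid]
          obtain ⟨e, he⟩ := hdd
          refine ⟨e, ?_⟩
          rw [show x - (1 + 5^(l+1) * ((d:ℕ):ℤ_[5])) = (x - 1) - 5^(l+1) * ((d:ℕ):ℤ_[5])
            from by ring, hrep, show (5:ℤ_[5])^(t+l+1) = 5^(l+1) * 5^t from by ring,
            show (5:ℤ_[5])^(l+1) * u - 5^(l+1) * ((d:ℕ):ℤ_[5]) = 5^(l+1) * (u - ((d:ℕ):ℤ_[5]))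
            from by ring, he]
          ring
        · -- d % 5 ∈ {3,4}
          have hyu : IsUnit (Ring.inverse x) :=
            IsUnit.of_mul_eq_one _ (Ring.inverse_mul_cancel _ hxu)
          obtain ⟨u₂, hu₂u, hy1, hu₂e⟩ := inverse_center hxu hu (by rw [hrep])
          obtain ⟨d₂, hd₂lt, hd₂5, hdd₂⟩ := exists_digit hu₂u t ht1
          -- 5 ∣ d + d₂
          have h5dd₂ : 5 ∣ d + d₂ := by
            apply nat_five_dvd
            have hcast : (((d + d₂:ℕ)):ℤ_[5])
                = (((d:ℕ):ℤ_[5]) - u) + (((d₂:ℕ):ℤ_[5]) - u₂) + (u + u₂) := by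
              push_cast; ring
            rw [hcast]
            have e1 : (5:ℤ_[5]) ∣ ((d:ℕ):ℤ_[5]) - u := by
              have := dvd_of_dvd_five ht1 hdd
              exact (dvd_sub_comm.mp this)
            have e2 : (5:ℤ_[5]) ∣ ((d₂:ℕ):ℤ_[5]) - u₂ := by
              have := dvd_of_dvd_five ht1 hdd₂
              exact (dvd_sub_comm.mp this)
            have e3 : (5:ℤ_[5]) ∣ u + u₂ := by
              have h4 : u + u₂ = -u * (Ring.inverse x - 1) := by rw [hu₂e]; ring
              rw [h4, hy1]
              exact ⟨-u * (5^l * u₂), by ring⟩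
            exact dvd_add (dvd_add e1 e2) e3
          have hd₂m : d₂ % 5 = 1 ∨ d₂ % 5 = 2 := by
            have h1 : d % 5 = 3 ∨ d % 5 = 4 := by
              rcases Nat.lt_or_ge d 5 with h | h
              all_goals omega
            omega
          refine ⟨l, d₂/5, by omega, d₂ % 5, by omega, ?_⟩
          rw [hM]
          right
          simp only [Set.mem_setOf_eq]
          have hid : (d₂ % 5) + 5*(d₂/5) = d₂ := by omega
          -- first: y is in the ball around the center
          have hyball : (5:ℤ_[5])^(t+l+1) ∣ Ring.inverse x - x₀ l (d₂/5) (d₂%5) := by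
            rw [hform l (d₂/5) (d₂%5), hid]
            obtain ⟨e, he⟩ := hdd₂
            refine ⟨e, ?_⟩
            rw [show Ring.inverse x - (1 + 5^(l+1) * ((d₂:ℕ):ℤ_[5]))
                = (Ring.inverse x - 1) - 5^(l+1) * ((d₂:ℕ):ℤ_[5])
              from by ring, hy1, show (5:ℤ_[5])^(t+l+1) = 5^(l+1) * 5^t from by ring,
              show (5:ℤ_[5])^(l+1) * u₂ - 5^(l+1) * ((d₂:ℕ):ℤ_[5]) = 5^(l+1) * (u₂ - ((d₂:ℕ):ℤ_[5]))
              from by ring, he]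
            ring
          have hinv := inv_sub_inv hyu (hx₀u l (d₂/5) (d₂%5)) hyball
          rwa [inverse_inverse hxu] at hinv
end
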